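/- arXiv:2004.02821 — 3 statements merged into one kernel-verified Lean document; each statement's English description precedes it below -/
import Mathlib

section
/- In ŝl_∞[ℤ], define e_{i,j}(m₀,m₁) = (E_{Nm₁+i,j}⊗t^{m₀})‾ for 1 ≤ i,j ≤ N, m₀,m₁ ∈ ℤ with (i,m₁) ≠ (j,0), and e_{i,i}(m₀,0) = (1−q^{−m₀})^{−1}((E_{i,i}−E_{N+i,N+i})⊗t^{m₀})‾ for m₀ ≠ 0; also set k' = (E_{N+1,N+1}−E_{1,1})‾ and h̄_r = (E_{r,r}−E_{r+1,r+1})‾ for 1 ≤ r ≤ N−1. Then: (1) for all 1 ≤ i,j ≤ N and m₀,m₁,n₁ ∈ ℤ with (i,m₁) ≠ (j,n₁), (E_{Nm₁+i,Nn₁+j}⊗t^{m₀})‾ = q^{−m₀n₁}e_{i,j}(m₀, m₁−n₁); (2) under the same hypothesis, ((E_{Nm₁+i,Nm₁+i} − E_{Nn₁+j,Nn₁+j})⊗t^{m₀})‾ equals q^{−m₀m₁}e_{i,i}(m₀,0) − q^{−m₀n₁}e_{j,j}(m₀,0) if m₀ ≠ 0, and equals (E_{i,i}−E_{j,j})‾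 + (m₁−n₁)k' if m₀ = 0; (3) the elements e_{i,j}(m₀,m₁) for 1 ≤ i,j ≤ N, m₀,m₁ ∈ ℤ with (i−j,m₀,m₁) ≠ (0,0,0), together with h̄_r for 1 ≤ r ≤ N−1, k', and k, form a ℂ-basis of ŝl_∞[ℤ]. -/
/-- An incarnation of the Lie algebra `gl_∞`. -/
structure GlInf (g : Type*) [LieRing g] [LieAlgebra ℂ g] where
  E : ℤ → ℤ → g
  bE : Module.Basis (ℤ × ℤ) ℂ g
  bE_eq : ∀ p : ℤ × ℤ, bE p = E p.1 p.2
  bracket_E : ∀ i j k l : ℤ, ⁅E i j, E k l⁆ =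
    (if j = k then E i l else 0) - (if l = i then E k j else 0)

/-- The trace form on `gl_∞`. -/
noncomputable def GlInf.form {g : Type*} [LieRing g] [LieAlgebra ℂ g] (Gi : GlInf g) :
    g → g → ℂ :=
  fun x y => (Gi.bE.repr x).sum fun p c => c * (Gi.bE.repr y) (p.2, p.1)

section slInf

variable {g : Type*} [LieRing g] [LieAlgebra ℂ g]

lemma GlInf.diff_mem (Gi : GlInf g) (i j : ℤ) :
    Gi.E i i - Gi.E j j ∈ LieAlgebra.derivedSeries ℂ g 1 := by
  have he : Gi.E i i - Gi.E j j = ⁅Gi.E i j, Gi.E j i⁆ := by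
    rw [Gi.bracket_E]; simp
  rw [he, LieAlgebra.derivedSeries_def, LieAlgebra.derivedSeriesOfIdeal_succ,
    LieAlgebra.derivedSeriesOfIdeal_zero]
  exact LieSubmodule.lie_mem_lie (LieSubmodule.mem_top _) (LieSubmodule.mem_top _)

lemma GlInf.offdiag_mem (Gi : GlInf g) {i j : ℤ} (h : i ≠ j) :
    Gi.E i j ∈ LieAlgebra.derivedSeries ℂ g 1 := by
  have he : Gi.E i j = ⁅Gi.E i i, Gi.E i j⁆ := by
    rw [Gi.bracket_E]; simp [h.symm]
  rw [he, LieAlgebra.derivedSeries_def, LieAlgebra.derivedSeriesOfIdeal_succ,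
    LieAlgebra.derivedSeriesOfIdeal_zero]
  exact LieSubmodule.lie_mem_lie (LieSubmodule.mem_top _) (LieSubmodule.mem_top _)

end slInf

section SgenSec

variable {g : Type*} [LieRing g] [LieAlgebra ℂ g]

/-- Spanning set of `sl_∞` inside `gl_∞`. -/
def GlInf.Sgen (Gi : GlInf g) : Set g :=
  {y | (∃ a b : ℤ, a ≠ b ∧ y = Gi.E a b) ∨ (∃ a b : ℤ, y = Gi.E a a - Gi.E b b)}

lemma GlInf.bracket_mem_span (Gi : GlInf g) (x y : g) :
    ⁅x, y⁆ ∈ Submodule.span ℂ Gi.Sgen := by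
  set K := Submodule.span ℂ Gi.Sgen with hK
  have hbase : ∀ p r : ℤ × ℤ, ⁅Gi.bE p, Gi.bE r⁆ ∈ K := by
    rintro ⟨i, j⟩ ⟨k, l⟩
    rw [Gi.bE_eq, Gi.bE_eq]
    simp only
    rw [Gi.bracket_E]
    have hEd : ∀ a b : ℤ, Gi.E a a - Gi.E b b ∈ K := fun a b =>
      Submodule.subset_span (Or.inr ⟨a, b, rfl⟩)
    have hEo : ∀ a b : ℤ, a ≠ b → Gi.E a b ∈ K := fun a b h =>
      Submodule.subset_span (Or.inl ⟨a, b, h, rfl⟩)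
    by_cases h1 : j = k
    · by_cases h2 : l = i
      · subst h1; subst h2
        rw [if_pos rfl, if_pos rfl]
        exact hEd _ _
      · subst h1
        rw [if_pos rfl, if_neg h2, sub_zero]
        exact hEo _ _ fun hc => h2 hc.symm
    · by_cases h2 : l = i
      · subst h2
        rw [if_neg h1, if_pos rfl, zero_sub]
        exact Submodule.neg_mem _ (hEo _ _ fun hc => h1 hc.symm)
      · rw [if_neg h1, if_neg h2, sub_zero]
        exact K.zero_mem
  have hfix : ∀ p : ℤ × ℤ, ∀ y : g, ⁅Gi.bE p, y⁆ ∈ K := by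
    intro p y
    induction (Gi.bE.mem_span y) using Submodule.span_induction with
    | mem z hz => obtain ⟨r, rfl⟩ := hz; exact hbase p r
    | zero => simp
    | add a b _ _ ha hb => rw [lie_add]; exact K.add_mem ha hb
    | smul c a _ ha => rw [lie_smul]; exact K.smul_mem c ha
  induction (Gi.bE.mem_span x) using Submodule.span_induction with
  | mem z hz => obtain ⟨r, rfl⟩ := hz; exact hfix r y
  | zero => simp
  | add a b _ _ ha hb => rw [add_lie]; exact K.add_mem ha hb
  | smul c a _ ha => rw [smul_lie]; exact K.smul_mem c ha

lemma GlInf.derived_le_span (Gi : GlInf g) {x : g}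
    (hx : x ∈ LieAlgebra.derivedSeries ℂ g 1) : x ∈ Submodule.span ℂ Gi.Sgen := by
  rw [LieAlgebra.derivedSeries_def, LieAlgebra.derivedSeriesOfIdeal_succ,
    LieAlgebra.derivedSeriesOfIdeal_zero] at hx
  rw [← LieSubmodule.mem_toSubmodule, LieSubmodule.lieIdeal_oper_eq_linear_span] at hx
  refine Submodule.span_le.mpr ?_ hx
  rintro z ⟨a, b, rfl⟩
  exact Gi.bracket_mem_span _ _

lemma GlInf.vanish_on_derived (Gi : GlInf g) (Λ : g →ₗ[ℂ] ℂ)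
    (h : ∀ y ∈ Gi.Sgen, Λ y = 0) {x : g}
    (hx : x ∈ LieAlgebra.derivedSeries ℂ g 1) : Λ x = 0 := by
  have h2 : Submodule.span ℂ Gi.Sgen ≤ LinearMap.ker Λ :=
    Submodule.span_le.mpr h
  exact h2 (Gi.derived_le_span hx)

lemma GlInf.span_sub_top (Gi : GlInf g) :
    Submodule.span ℂ {y : ↥(LieAlgebra.derivedSeries ℂ g 1) | (y : g) ∈ Gi.Sgen} = ⊤ := by
  ext x
  simp only [Submodule.mem_top, iff_true]
  have hx : (x : g) ∈ Submodule.span ℂ Gi.Sgen := Gi.derived_le_span x.2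
  set ι : ↥(LieAlgebra.derivedSeries ℂ g 1) →ₗ[ℂ] g :=
    (LieAlgebra.derivedSeries ℂ g 1 : LieIdeal ℂ g).toSubmodule.subtype with hι
  have hsub : Gi.Sgen ⊆ ι '' {y : ↥(LieAlgebra.derivedSeries ℂ g 1) | (y : g) ∈ Gi.Sgen} := by
    intro y hy
    have hyd : y ∈ LieAlgebra.derivedSeries ℂ g 1 := by
      rcases hy with ⟨a, b, hab, rfl⟩ | ⟨a, b, rfl⟩
      · exact Gi.offdiag_mem hab
      · exact Gi.diff_mem a b
    exact ⟨⟨y, hyd⟩, hy, rfl⟩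
  have hx2 : (x : g) ∈ Submodule.map ι
      (Submodule.span ℂ {y : ↥(LieAlgebra.derivedSeries ℂ g 1) | (y : g) ∈ Gi.Sgen}) := by
    rw [Submodule.map_span]
    exact Submodule.span_mono hsub hx
  obtain ⟨z, hz, hzx⟩ := hx2
  have : z = x := Subtype.ext hzx
  rwa [this] at hz

end SgenSec

lemma aux_emod (N : ℕ) (hN : 0 < N) (d : ℤ) (i : ℕ) (hi : i < N) :
    ((N:ℤ) * d + ((i:ℤ) + 1) - 1) % (N:ℤ) = i ∧ ((N:ℤ) * d + ((i:ℤ) + 1) - 1) / (N:ℤ) = d := by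
  have h1 : (N:ℤ) * d + ((i:ℤ) + 1) - 1 = (i:ℤ) + (N:ℤ) * d := by ring
  have hiN : (i:ℤ) < (N:ℤ) := by exact_mod_cast hi
  have hi0 : (0:ℤ) ≤ i := Int.natCast_nonneg i
  constructor
  · rw [h1, Int.add_mul_emod_self_left, Int.emod_eq_of_lt hi0 hiN]
  · rw [h1, Int.add_mul_ediv_left _ _ (by positivity : (N:ℤ) ≠ 0),
      Int.ediv_eq_zero_of_lt hi0 hiN, zero_add]

lemma aux_decomp (N : ℕ) (hN : 0 < N) (a : ℤ) :
    ∃ (i : Fin N) (d : ℤ), a = (N:ℤ) * d + ((i:ℤ) + 1) := by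
  have hN' : (0:ℤ) < N := by exact_mod_cast hN
  have h0 : 0 ≤ (a-1) % N := Int.emod_nonneg _ (by positivity)
  have h1 : (a-1) % N < N := Int.emod_lt_of_pos _ hN'
  refine ⟨⟨((a-1) % N).toNat, ?_⟩, (a-1) / N, ?_⟩
  · omega
  · have := Int.mul_ediv_add_emod (a-1) N
    simp only [Fin.val_mk]
    omega

lemma aux_zpow_ne_one {q : ℂ} (hq : q ≠ 0) (hq' : ∀ n : ℕ, n ≠ 0 → q ^ n ≠ 1)
    {m : ℤ} (hm : m ≠ 0) : q ^ m ≠ 1 := by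
  rcases lt_or_gt_of_ne hm with h | h
  · intro hc
    have : q ^ (-m) = 1 := by
      rw [zpow_neg, hc, inv_one]
    rw [show (-m) = ((-m).toNat : ℤ) by omega, zpow_natCast] at this
    exact hq' (-m).toNat (by omega) this
  · intro hc
    rw [show m = (m.toNat : ℤ) by omega, zpow_natCast] at hc
    exact hq' m.toNat (by omega) hc

lemma shiftIdx_ne {N : ℕ} {i j : ℕ} (hi : i < N) (hj : j < N) {m1 n1 : ℤ}
    (h : ¬(i = j ∧ m1 = n1)) : (N : ℤ) * m1 + (i + 1) ≠ (N : ℤ) * n1 + (j + 1) := by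
  intro hc
  rcases eq_or_ne m1 n1 with he | he
  · subst he
    have hij : (i : ℤ) = j := by linarith
    exact h ⟨by exact_mod_cast hij, rfl⟩
  · have h1 : (N : ℤ) * (m1 - n1) = (j : ℤ) - i := by linear_combination hc
    have hi' : (i : ℤ) < N := by exact_mod_cast hi
    have hj' : (j : ℤ) < N := by exact_mod_cast hj
    have hi0 : (0 : ℤ) ≤ i := Int.natCast_nonneg i
    have hj0 : (0 : ℤ) ≤ j := Int.natCast_nonneg j
    rcases he.lt_or_gt with hlt | hlt
    · have h2 : m1 - n1 ≤ -1 := by omega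
      have h3 : (N : ℤ) * (m1 - n1) ≤ (N : ℤ) * (-1) :=
        mul_le_mul_of_nonneg_left h2 (by positivity)
      have h4 : (N : ℤ) * (-1) = -N := by ring
      linarith
    · have h2 : (1 : ℤ) ≤ m1 - n1 := by omega
      have h3 : (N : ℤ) * 1 ≤ (N : ℤ) * (m1 - n1) :=
        mul_le_mul_of_nonneg_left h2 (by positivity)
      have h4 : (N : ℤ) * 1 = N := by ring
      linarith

/-- An incarnation of the `(ℤ, χ_q)`-covariant algebra of the affine Lie algebra of a Lie
algebra `s` with bilinear form `B` and `ℤ`-action `σ`, where `χ_q(r) = qʳ`. -/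
structure CovZAlg (q : ℂ) (s : Type*) [LieRing s] [LieAlgebra ℂ s]
    (B : s → s → ℂ) (σ : ℤ → s → s)
    (C : Type*) [LieRing C] [LieAlgebra ℂ C] where
  atE : ℤ → s → C
  k : C
  atE_add : ∀ (m : ℤ) (x y : s), atE m (x + y) = atE m x + atE m y
  atE_smul : ∀ (m : ℤ) (c : ℂ) (x : s), atE m (c • x) = c • atE m x
  k_central : ∀ x : C, ⁅k, x⁆ = 0
  inv : ∀ (r m : ℤ) (x : s), atE m x = q ^ (r * m) • atE m (σ r x)
  bracket : ∀ (m n : ℤ) (x y : s),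
    ⁅atE m x, atE n y⁆ = ∑ᶠ r : ℤ, q ^ (r * m) •
      (atE (m + n) ⁅σ r x, y⁆ + ((if m + n = 0 then (m : ℂ) * B (σ r x) y else 0)) • k)
  spans : Submodule.span ℂ ({k} ∪ {z | ∃ (m : ℤ) (x : s), z = atE m x}) = ⊤
  kerPi : ∀ (f : ℤ →₀ s) (β : ℂ),
    ((f.sum fun m x => atE m x) + β • k = 0) ↔
      (f, β) ∈ Submodule.span ℂ
        {u : (ℤ →₀ s) × ℂ | ∃ (r m : ℤ) (x : s),
          u = (Finsupp.single m (q ^ (r * m) • σ r x - x), 0)}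

section eElt

variable {g : Type*} [LieRing g] [LieAlgebra ℂ g] (Gi : GlInf g)
variable (q : ℂ) (N : ℕ)
variable {C : Type*} [LieRing C] [LieAlgebra ℂ C]
variable {B : ↥(LieAlgebra.derivedSeries ℂ g 1) → ↥(LieAlgebra.derivedSeries ℂ g 1) → ℂ}
variable {σs : ℤ → ↥(LieAlgebra.derivedSeries ℂ g 1) → ↥(LieAlgebra.derivedSeries ℂ g 1)}
variable (Cov : CovZAlg q ↥(LieAlgebra.derivedSeries ℂ g 1) B σs C)

/-- The elements `e_{i,j}(m₀,m₁)` of `ŝl_∞[ℤ]`: for `(i,m₁) ≠ (j,0)`,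
`e_{i,j}(m₀,m₁) = (E_{Nm₁+i,j} ⊗ t^{m₀})‾`, and for `m₀ ≠ 0`,
`e_{i,i}(m₀,0) = (1-q^{-m₀})⁻¹ ((E_{i,i}-E_{N+i,N+i}) ⊗ t^{m₀})‾`. -/
noncomputable def eElt (i j : Fin N) (m0 m1 : ℤ) : C :=
  if h : i = j ∧ m1 = 0 then
    (1 - q ^ (-m0))⁻¹ • Cov.atE m0
      ⟨Gi.E ((i.1 : ℤ) + 1) ((i.1 : ℤ) + 1) -
        Gi.E (((i.1 : ℤ) + 1) + N) (((i.1 : ℤ) + 1) + N), Gi.diff_mem _ _⟩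
  else Cov.atE m0
    ⟨Gi.E ((N : ℤ) * m1 + ((i.1 : ℤ) + 1)) ((j.1 : ℤ) + 1), Gi.offdiag_mem (by
      have hne : ¬(i.1 = j.1 ∧ m1 = 0) := fun hc => h ⟨Fin.ext hc.1, hc.2⟩
      simpa using shiftIdx_ne i.isLt j.isLt hne)⟩

/-- The element `k' = (E_{N+1,N+1} - E_{1,1})‾` of `ŝl_∞[ℤ]`. -/
noncomputable def kprimeElt : C :=
  Cov.atE 0 ⟨Gi.E ((N : ℤ) + 1) ((N : ℤ) + 1) - Gi.E 1 1, Gi.diff_mem _ _⟩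

end eElt

/-- Index set: quadruples `(i,j,m₀,m₁)` with `(i-j,m₀,m₁) ≠ (0,0,0)`, indices
`r = 1,…,N-1`, and two further indices (for `k'` and `k`). -/
def slNCqIdx (N : ℕ) : Type :=
  {p : Fin N × Fin N × ℤ × ℤ // ¬(p.1 = p.2.1 ∧ p.2.2.1 = 0 ∧ p.2.2.2 = 0)} ⊕
    (Fin (N - 1) ⊕ Fin 2)

section slCovFam

variable {g : Type*} [LieRing g] [LieAlgebra ℂ g] (Gi : GlInf g)
variable (q : ℂ) (N : ℕ)
variable {C : Type*} [LieRing C] [LieAlgebra ℂ C]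
variable {B : ↥(LieAlgebra.derivedSeries ℂ g 1) → ↥(LieAlgebra.derivedSeries ℂ g 1) → ℂ}
variable {σs : ℤ → ↥(LieAlgebra.derivedSeries ℂ g 1) → ↥(LieAlgebra.derivedSeries ℂ g 1)}
variable (Cov : CovZAlg q ↥(LieAlgebra.derivedSeries ℂ g 1) B σs C)

/-- The claimed basis family of `ŝl_∞[ℤ]`: the `e_{i,j}(m₀,m₁)` with
`(i-j,m₀,m₁) ≠ (0,0,0)`, the `h̄_r = (E_{r,r}-E_{r+1,r+1})‾` (`1 ≤ r ≤ N-1`),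
`k'` and `k`. -/
noncomputable def slCovFam : slNCqIdx N → C :=
  Sum.elim (fun p => eElt Gi q N Cov p.1.1 p.1.2.1 p.1.2.2.1 p.1.2.2.2)
    (Sum.elim
      (fun r => Cov.atE 0
        ⟨Gi.E ((r.1 : ℤ) + 1) ((r.1 : ℤ) + 1) - Gi.E ((r.1 : ℤ) + 2) ((r.1 : ℤ) + 2),
          Gi.diff_mem _ _⟩)
      ![kprimeElt Gi q N Cov, Cov.k])

end slCovFam


section MainSec

variable {g : Type*} [LieRing g] [LieAlgebra ℂ g] {Gi : GlInf g}
variable {q : ℂ} {N : ℕ}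
variable {C : Type*} [LieRing C] [LieAlgebra ℂ C]
variable {B : ↥(LieAlgebra.derivedSeries ℂ g 1) → ↥(LieAlgebra.derivedSeries ℂ g 1) → ℂ}
variable {σs : ℤ → ↥(LieAlgebra.derivedSeries ℂ g 1) → ↥(LieAlgebra.derivedSeries ℂ g 1)}
variable {σg : ℤ → g → g}
variable (Cov : CovZAlg q ↥(LieAlgebra.derivedSeries ℂ g 1) B σs C)

lemma CovZAlg.atE_zero (m : ℤ) : Cov.atE m 0 = 0 := by
  have := Cov.atE_smul m 0 0
  simpa using this

/-- `atE m` as a linear map. -/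
noncomputable def CovZAlg.atEL (m : ℤ) : ↥(LieAlgebra.derivedSeries ℂ g 1) →ₗ[ℂ] C :=
  { toFun := Cov.atE m
    map_add' := Cov.atE_add m
    map_smul' := Cov.atE_smul m }

@[simp] lemma CovZAlg.atEL_apply (m : ℤ) (x : ↥(LieAlgebra.derivedSeries ℂ g 1)) :
    Cov.atEL m x = Cov.atE m x := rfl

lemma CovZAlg.atE_sub (m : ℤ) (x y : ↥(LieAlgebra.derivedSeries ℂ g 1)) :
    Cov.atE m (x - y) = Cov.atE m x - Cov.atE m y :=
  map_sub (Cov.atEL m) x y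

lemma CovZAlg.atE_congr (m : ℤ) {x y : ↥(LieAlgebra.derivedSeries ℂ g 1)}
    (h : (x : g) = (y : g)) : Cov.atE m x = Cov.atE m y :=
  congrArg _ (Subtype.ext h)

lemma CovZAlg.atE_shift (hq : q ≠ 0)
    (hσs : ∀ (r : ℤ) (x : ↥(LieAlgebra.derivedSeries ℂ g 1)), (σs r x : g) = σg r (x : g))
    (r m : ℤ) {x y : ↥(LieAlgebra.derivedSeries ℂ g 1)}
    (h : (y : g) = σg r (x : g)) : Cov.atE m y = q ^ (-(r * m)) • Cov.atE m x := by
  have h1 : y = σs r x := Subtype.ext (by rw [h, hσs])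
  rw [h1, Cov.inv r m x, smul_smul, ← zpow_add₀ hq, neg_add_cancel, zpow_zero, one_smul]

end MainSec

section RelSec

variable {g : Type*} [LieRing g] [LieAlgebra ℂ g] {Gi : GlInf g}
variable {q : ℂ} {N : ℕ}
variable {C : Type*} [LieRing C] [LieAlgebra ℂ C]
variable {B : ↥(LieAlgebra.derivedSeries ℂ g 1) → ↥(LieAlgebra.derivedSeries ℂ g 1) → ℂ}
variable {σs : ℤ → ↥(LieAlgebra.derivedSeries ℂ g 1) → ↥(LieAlgebra.derivedSeries ℂ g 1)}
variable {σg : ℤ → g → g}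
variable (Cov : CovZAlg q ↥(LieAlgebra.derivedSeries ℂ g 1) B σs C)

lemma sigma_sub (hσ_lin : ∀ r : ℤ, IsLinearMap ℂ (σg r)) (r : ℤ) (x y : g) :
    σg r (x - y) = σg r x - σg r y :=
  (IsLinearMap.mk' (σg r) (hσ_lin r)).map_sub x y

/-- `(E a a - E b b)‾` as an element of `sl_∞`. -/
def GlInf.dE (Gi : GlInf g) (a b : ℤ) : ↥(LieAlgebra.derivedSeries ℂ g 1) :=
  ⟨Gi.E a a - Gi.E b b, Gi.diff_mem _ _⟩

@[simp] lemma GlInf.dE_coe (Gi : GlInf g) (a b : ℤ) :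
    ((Gi.dE a b : ↥(LieAlgebra.derivedSeries ℂ g 1)) : g) = Gi.E a a - Gi.E b b := rfl

lemma rel1' (hq : q ≠ 0)
    (hσ : ∀ r m n : ℤ, σg r (Gi.E m n) = Gi.E (m + N * r) (n + N * r))
    (hσs : ∀ (r : ℤ) (x : ↥(LieAlgebra.derivedSeries ℂ g 1)), (σs r x : g) = σg r (x : g))
    (i j : Fin N) (m0 m1 n1 : ℤ) (hne : ¬(i = j ∧ m1 = n1)) :
    Cov.atE m0 ⟨Gi.E ((N : ℤ) * m1 + (i.1 + 1)) ((N : ℤ) * n1 + (j.1 + 1)),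
        Gi.offdiag_mem (shiftIdx_ne i.isLt j.isLt
          (fun hc => hne ⟨Fin.ext hc.1, hc.2⟩))⟩
      = q ^ (-(m0 * n1)) • eElt Gi q N Cov i j m0 (m1 - n1) := by
  have hcond : ¬(i = j ∧ m1 - n1 = 0) := fun h => hne ⟨h.1, by omega⟩
  simp only [eElt]
  rw [dif_neg hcond]
  have hne2 : ((N:ℤ) * (m1 - n1) + ((i.1:ℤ) + 1)) ≠ ((j.1:ℤ) + 1) := by
    have hne3 : ¬(i.1 = j.1 ∧ m1 - n1 = 0) := fun hc => hcond ⟨Fin.ext hc.1, hc.2⟩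
    simpa using shiftIdx_ne i.isLt j.isLt hne3
  have hval : (Gi.E ((N : ℤ) * m1 + ((i.1:ℤ) + 1)) ((N : ℤ) * n1 + ((j.1:ℤ) + 1)) : g)
      = σg n1 (Gi.E ((N:ℤ) * (m1 - n1) + ((i.1:ℤ) + 1)) ((j.1:ℤ) + 1)) := by
    rw [hσ, show (N:ℤ) * (m1 - n1) + ((i.1:ℤ) + 1) + (N:ℤ) * n1
          = (N:ℤ) * m1 + ((i.1:ℤ) + 1) from by ring,
      show ((j.1:ℤ) + 1) + (N:ℤ) * n1 = (N:ℤ) * n1 + ((j.1:ℤ) + 1) from by ring]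
  rw [Cov.atE_shift hq hσs n1 m0
    (x := ⟨Gi.E ((N:ℤ) * (m1 - n1) + ((i.1:ℤ) + 1)) ((j.1:ℤ) + 1), Gi.offdiag_mem hne2⟩)
    (y := ⟨Gi.E ((N : ℤ) * m1 + ((i.1:ℤ) + 1)) ((N : ℤ) * n1 + ((j.1:ℤ) + 1)),
      Gi.offdiag_mem (shiftIdx_ne i.isLt j.isLt
        (fun hc => hne ⟨Fin.ext hc.1, hc.2⟩))⟩) hval,
    show -(n1 * m0) = -(m0 * n1) from by ring]

lemma rel2' (hq : q ≠ 0) (hq' : ∀ n : ℕ, n ≠ 0 → q ^ n ≠ 1)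
    (hσ : ∀ r m n : ℤ, σg r (Gi.E m n) = Gi.E (m + N * r) (n + N * r))
    (hσs : ∀ (r : ℤ) (x : ↥(LieAlgebra.derivedSeries ℂ g 1)), (σs r x : g) = σg r (x : g))
    (hσ_lin : ∀ r : ℤ, IsLinearMap ℂ (σg r))
    (i j : Fin N) (m0 m1 n1 : ℤ) (hm0 : m0 ≠ 0) :
    Cov.atE m0 ⟨Gi.E ((N : ℤ) * m1 + (i.1 + 1)) ((N : ℤ) * m1 + (i.1 + 1)) -
        Gi.E ((N : ℤ) * n1 + (j.1 + 1)) ((N : ℤ) * n1 + (j.1 + 1)), Gi.diff_mem _ _⟩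
      = q ^ (-(m0 * m1)) • eElt Gi q N Cov i i m0 0
        - q ^ (-(m0 * n1)) • eElt Gi q N Cov j j m0 0 := by
  have hc : (1 : ℂ) - q ^ (-m0) ≠ 0 :=
    sub_ne_zero.mpr (Ne.symm (aux_zpow_ne_one hq hq' (neg_ne_zero.mpr hm0)))
  set ui : ↥(LieAlgebra.derivedSeries ℂ g 1) :=
    Gi.dE ((i.1:ℤ) + 1) (((i.1:ℤ) + 1) + N) with hui
  set uj : ↥(LieAlgebra.derivedSeries ℂ g 1) :=
    Gi.dE ((j.1:ℤ) + 1) (((j.1:ℤ) + 1) + N) with huj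
  set A : ↥(LieAlgebra.derivedSeries ℂ g 1) :=
    Gi.dE ((N : ℤ) * m1 + ((i.1:ℤ) + 1)) ((N : ℤ) * n1 + ((j.1:ℤ) + 1)) with hA
  set A1 : ↥(LieAlgebra.derivedSeries ℂ g 1) :=
    Gi.dE (((N : ℤ) * m1 + ((i.1:ℤ) + 1)) + (N:ℤ) * 1)
      (((N : ℤ) * n1 + ((j.1:ℤ) + 1)) + (N:ℤ) * 1) with hA1
  set Bi : ↥(LieAlgebra.derivedSeries ℂ g 1) :=
    Gi.dE ((N : ℤ) * m1 + ((i.1:ℤ) + 1)) (((N : ℤ) * m1 + ((i.1:ℤ) + 1)) + (N:ℤ) * 1) with hBi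
  set Bj : ↥(LieAlgebra.derivedSeries ℂ g 1) :=
    Gi.dE ((N : ℤ) * n1 + ((j.1:ℤ) + 1)) (((N : ℤ) * n1 + ((j.1:ℤ) + 1)) + (N:ℤ) * 1) with hBj
  have hstepA : Cov.atE m0 A1 = q ^ (-(1 * m0)) • Cov.atE m0 A := by
    refine Cov.atE_shift hq hσs 1 m0 ?_
    rw [GlInf.dE_coe, GlInf.dE_coe, sigma_sub hσ_lin, hσ, hσ]
  have hstepBi : Cov.atE m0 Bi = q ^ (-(m1 * m0)) • Cov.atE m0 ui := by
    refine Cov.atE_shift hq hσs m1 m0 ?_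
    rw [GlInf.dE_coe, GlInf.dE_coe, sigma_sub hσ_lin, hσ, hσ,
      show (i.1:ℤ) + 1 + (N:ℤ) * m1 = (N:ℤ) * m1 + ((i.1:ℤ) + 1) from by ring,
      show ((i.1:ℤ) + 1 + (N:ℤ)) + (N:ℤ) * m1
        = ((N:ℤ) * m1 + ((i.1:ℤ) + 1)) + (N:ℤ) * 1 from by ring]
  have hstepBj : Cov.atE m0 Bj = q ^ (-(n1 * m0)) • Cov.atE m0 uj := by
    refine Cov.atE_shift hq hσs n1 m0 ?_
    rw [GlInf.dE_coe, GlInf.dE_coe, sigma_sub hσ_lin, hσ, hσ,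
      show (j.1:ℤ) + 1 + (N:ℤ) * n1 = (N:ℤ) * n1 + ((j.1:ℤ) + 1) from by ring,
      show ((j.1:ℤ) + 1 + (N:ℤ)) + (N:ℤ) * n1
        = ((N:ℤ) * n1 + ((j.1:ℤ) + 1)) + (N:ℤ) * 1 from by ring]
  have hsub : A - A1 = Bi - Bj := by
    apply Subtype.ext
    rw [AddSubgroupClass.coe_sub, AddSubgroupClass.coe_sub, hA, hA1, hBi, hBj,
      GlInf.dE_coe, GlInf.dE_coe, GlInf.dE_coe, GlInf.dE_coe]
    abel
  have key : ((1:ℂ) - q ^ (-m0)) • Cov.atE m0 A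
      = q ^ (-(m0 * m1)) • Cov.atE m0 ui - q ^ (-(m0 * n1)) • Cov.atE m0 uj := by
    rw [sub_smul, one_smul, show -m0 = -(1 * m0) from by ring, ← hstepA,
      ← Cov.atE_sub, hsub, Cov.atE_sub, hstepBi, hstepBj,
      show -(m1 * m0) = -(m0 * m1) from by ring, show -(n1 * m0) = -(m0 * n1) from by ring]
  have hgoal : Cov.atE m0 A = q ^ (-(m0 * m1)) • (((1:ℂ) - q ^ (-m0))⁻¹ • Cov.atE m0 ui)
      - q ^ (-(m0 * n1)) • (((1:ℂ) - q ^ (-m0))⁻¹ • Cov.atE m0 uj) := by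
    rw [smul_comm (q ^ (-(m0 * m1))) (((1:ℂ) - q ^ (-m0))⁻¹),
      smul_comm (q ^ (-(m0 * n1))) (((1:ℂ) - q ^ (-m0))⁻¹), ← smul_sub, ← key,
      inv_smul_smul₀ hc]
  have he1 : eElt Gi q N Cov i i m0 0 = ((1:ℂ) - q ^ (-m0))⁻¹ • Cov.atE m0 ui := by
    unfold eElt
    rw [dif_pos (⟨rfl, rfl⟩ : i = i ∧ (0:ℤ) = 0)]
    rfl
  have he2 : eElt Gi q N Cov j j m0 0 = ((1:ℂ) - q ^ (-m0))⁻¹ • Cov.atE m0 uj := by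
    unfold eElt
    rw [dif_pos (⟨rfl, rfl⟩ : j = j ∧ (0:ℤ) = 0)]
    rfl
  rw [he1, he2]
  exact hgoal

end RelSec

section Rel3Sec

variable {g : Type*} [LieRing g] [LieAlgebra ℂ g] {Gi : GlInf g}
variable {q : ℂ} {N : ℕ}
variable {C : Type*} [LieRing C] [LieAlgebra ℂ C]
variable {B : ↥(LieAlgebra.derivedSeries ℂ g 1) → ↥(LieAlgebra.derivedSeries ℂ g 1) → ℂ}
variable {σs : ℤ → ↥(LieAlgebra.derivedSeries ℂ g 1) → ↥(LieAlgebra.derivedSeries ℂ g 1)}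
variable {σg : ℤ → g → g}
variable (Cov : CovZAlg q ↥(LieAlgebra.derivedSeries ℂ g 1) B σs C)

lemma atE0_shift (hq : q ≠ 0)
    (hσs : ∀ (r : ℤ) (x : ↥(LieAlgebra.derivedSeries ℂ g 1)), (σs r x : g) = σg r (x : g))
    (r : ℤ) {x y : ↥(LieAlgebra.derivedSeries ℂ g 1)}
    (h : (y : g) = σg r (x : g)) : Cov.atE 0 y = Cov.atE 0 x := by
  have h1 := Cov.atE_shift hq hσs r 0 h
  rw [h1, mul_zero, neg_zero, zpow_zero, one_smul]

lemma kprime_eq (hq : q ≠ 0)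
    (hσ : ∀ r m n : ℤ, σg r (Gi.E m n) = Gi.E (m + N * r) (n + N * r))
    (hσs : ∀ (r : ℤ) (x : ↥(LieAlgebra.derivedSeries ℂ g 1)), (σs r x : g) = σg r (x : g))
    (hσ_lin : ∀ r : ℤ, IsLinearMap ℂ (σg r)) (a : ℤ) :
    Cov.atE 0 (Gi.dE (a + N) a) = kprimeElt Gi q N Cov := by
  have h1 : Gi.dE (a + N) a - Gi.dE ((N:ℤ) + 1) 1 = Gi.dE (a + N) (1 + N) - Gi.dE a 1 := by
    apply Subtype.ext
    rw [AddSubgroupClass.coe_sub, AddSubgroupClass.coe_sub, GlInf.dE_coe, GlInf.dE_coe,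
      GlInf.dE_coe, GlInf.dE_coe, show (N:ℤ) + 1 = 1 + (N:ℤ) from by ring]
    abel
  have h2 : Cov.atE 0 (Gi.dE (a + N) (1 + N)) = Cov.atE 0 (Gi.dE a 1) := by
    refine atE0_shift Cov hq hσs 1 ?_
    rw [GlInf.dE_coe, GlInf.dE_coe, sigma_sub hσ_lin, hσ, hσ,
      show a + (N:ℤ) * 1 = a + (N:ℤ) from by ring, show (1:ℤ) + (N:ℤ) * 1 = 1 + (N:ℤ) from by ring]
  have h3 := congrArg (Cov.atE 0) h1
  rw [Cov.atE_sub, Cov.atE_sub, h2, sub_self] at h3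
  have h4 : Cov.atE 0 (Gi.dE (a + N) a) = Cov.atE 0 (Gi.dE ((N:ℤ) + 1) 1) :=
    sub_eq_zero.mp h3
  rw [h4]
  rfl

lemma tele_eq (hq : q ≠ 0)
    (hσ : ∀ r m n : ℤ, σg r (Gi.E m n) = Gi.E (m + N * r) (n + N * r))
    (hσs : ∀ (r : ℤ) (x : ↥(LieAlgebra.derivedSeries ℂ g 1)), (σs r x : g) = σg r (x : g))
    (hσ_lin : ∀ r : ℤ, IsLinearMap ℂ (σg r)) (a : ℤ) (m1 : ℤ) :
    Cov.atE 0 (Gi.dE (a + N * m1) a) = (m1 : ℂ) • kprimeElt Gi q N Cov := by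
  have hstep : ∀ b : ℤ, Cov.atE 0 (Gi.dE (a + N * (b + 1)) a)
      = Cov.atE 0 (Gi.dE (a + N * b) a) + kprimeElt Gi q N Cov := by
    intro b
    have h2 : Gi.dE (a + N * (b + 1)) a - Gi.dE (a + N * b) a
        = Gi.dE ((a + N * b) + N) (a + N * b) := by
      apply Subtype.ext
      rw [AddSubgroupClass.coe_sub, GlInf.dE_coe, GlInf.dE_coe, GlInf.dE_coe,
        show a + (N:ℤ) * (b + 1) = (a + (N:ℤ) * b) + N from by ring]
      abel
    have h3 := congrArg (Cov.atE 0) h2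
    rw [Cov.atE_sub, kprime_eq Cov hq hσ hσs hσ_lin (a + N * b)] at h3
    linear_combination (norm := abel) h3
  induction m1 using Int.induction_on with
  | zero =>
    have h0 : Gi.dE (a + N * 0) a = 0 := by
      apply Subtype.ext
      rw [GlInf.dE_coe, show a + (N:ℤ) * 0 = a from by ring, sub_self]
      rfl
    rw [h0, Cov.atE_zero]
    simp
  | succ b ih =>
    rw [hstep (b:ℤ), ih]
    push_cast
    module
  | pred b ih =>
    have h := hstep (-(b:ℤ) - 1)
    rw [show -(b:ℤ) - 1 + 1 = -(b:ℤ) from by ring] at h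
    have h2 : Cov.atE 0 (Gi.dE (a + N * (-(b:ℤ) - 1)) a)
        = Cov.atE 0 (Gi.dE (a + N * (-(b:ℤ))) a) - kprimeElt Gi q N Cov := by
      rw [h]; abel
    rw [h2, ih]
    push_cast
    module

lemma rel3' (hq : q ≠ 0)
    (hσ : ∀ r m n : ℤ, σg r (Gi.E m n) = Gi.E (m + N * r) (n + N * r))
    (hσs : ∀ (r : ℤ) (x : ↥(LieAlgebra.derivedSeries ℂ g 1)), (σs r x : g) = σg r (x : g))
    (hσ_lin : ∀ r : ℤ, IsLinearMap ℂ (σg r))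
    (i j : Fin N) (m1 n1 : ℤ) :
    Cov.atE 0 ⟨Gi.E ((N : ℤ) * m1 + (i.1 + 1)) ((N : ℤ) * m1 + (i.1 + 1)) -
        Gi.E ((N : ℤ) * n1 + (j.1 + 1)) ((N : ℤ) * n1 + (j.1 + 1)), Gi.diff_mem _ _⟩
      = Cov.atE 0 ⟨Gi.E ((i.1 : ℤ) + 1) ((i.1 : ℤ) + 1) -
          Gi.E ((j.1 : ℤ) + 1) ((j.1 : ℤ) + 1), Gi.diff_mem _ _⟩
        + ((m1 - n1 : ℤ) : ℂ) • kprimeElt Gi q N Cov := by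
  have hsplit : (Gi.dE ((N : ℤ) * m1 + ((i.1:ℤ) + 1)) ((N : ℤ) * n1 + ((j.1:ℤ) + 1))
        : ↥(LieAlgebra.derivedSeries ℂ g 1))
      = Gi.dE (((i.1:ℤ) + 1) + N * m1) ((i.1:ℤ) + 1) + Gi.dE ((i.1:ℤ) + 1) ((j.1:ℤ) + 1)
        - Gi.dE (((j.1:ℤ) + 1) + N * n1) ((j.1:ℤ) + 1) := by
    apply Subtype.ext
    rw [AddSubgroupClass.coe_sub, AddMemClass.coe_add, GlInf.dE_coe, GlInf.dE_coe,
      GlInf.dE_coe, GlInf.dE_coe,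
      show ((i.1:ℤ) + 1) + (N:ℤ) * m1 = (N:ℤ) * m1 + ((i.1:ℤ) + 1) from by ring,
      show ((j.1:ℤ) + 1) + (N:ℤ) * n1 = (N:ℤ) * n1 + ((j.1:ℤ) + 1) from by ring]
    abel
  have h1 := congrArg (Cov.atE 0) hsplit
  rw [Cov.atE_sub, Cov.atE_add, tele_eq Cov hq hσ hσs hσ_lin ((i.1:ℤ) + 1) m1,
    tele_eq Cov hq hσ hσs hσ_lin ((j.1:ℤ) + 1) n1] at h1
  rw [show (⟨Gi.E ((N : ℤ) * m1 + (i.1 + 1)) ((N : ℤ) * m1 + (i.1 + 1)) -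
        Gi.E ((N : ℤ) * n1 + (j.1 + 1)) ((N : ℤ) * n1 + (j.1 + 1)), Gi.diff_mem _ _⟩
      : ↥(LieAlgebra.derivedSeries ℂ g 1))
      = Gi.dE ((N : ℤ) * m1 + ((i.1:ℤ) + 1)) ((N : ℤ) * n1 + ((j.1:ℤ) + 1)) from rfl, h1]
  push_cast
  rw [sub_smul]
  have : Cov.atE 0 (Gi.dE ((i.1:ℤ) + 1) ((j.1:ℤ) + 1))
      = Cov.atE 0 ⟨Gi.E ((i.1 : ℤ) + 1) ((i.1 : ℤ) + 1) -
          Gi.E ((j.1 : ℤ) + 1) ((j.1 : ℤ) + 1), Gi.diff_mem _ _⟩ := rfl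
  rw [this]
  abel

end Rel3Sec

section FnlSec

variable {g : Type*} [LieRing g] [LieAlgebra ℂ g]

/-- Linear functional on `gl_∞` prescribed by values on the basis. -/
noncomputable def GlInf.fnl (Gi : GlInf g) (v : ℤ × ℤ → ℂ) : g →ₗ[ℂ] ℂ :=
  Gi.bE.constr ℂ v

lemma GlInf.fnl_E (Gi : GlInf g) (v : ℤ × ℤ → ℂ) (a b : ℤ) :
    Gi.fnl v (Gi.E a b) = v (a, b) := by
  rw [show Gi.E a b = Gi.bE (a, b) from (Gi.bE_eq (a, b)).symm]
  exact Gi.bE.constr_basis ℂ v (a, b)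

lemma aux_shift (N : ℕ) (hN : 0 < N) (r a : ℤ) :
    ((a + N * r) - 1) % (N:ℤ) = (a - 1) % N ∧ ((a + N * r) - 1) / (N:ℤ) = (a - 1) / N + r := by
  have h1 : (a + (N:ℤ) * r) - 1 = (a - 1) + (N:ℤ) * r := by ring
  have hN' : ((N:ℤ)) ≠ 0 := by positivity
  exact ⟨by rw [h1, Int.add_mul_emod_self_left],
    by rw [h1, Int.add_mul_ediv_left _ _ hN']⟩

/-- Equivariance of a functional whose basis values satisfy a shift rule. -/
lemma GlInf.fnl_equiv (Gi : GlInf g) (N : ℕ) (σg : ℤ → g → g)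
    (hσ_lin : ∀ r : ℤ, IsLinearMap ℂ (σg r))
    (hσ : ∀ r m n : ℤ, σg r (Gi.E m n) = Gi.E (m + N * r) (n + N * r))
    (v : ℤ × ℤ → ℂ) (c : ℤ → ℂ)
    (hv : ∀ (r : ℤ) (p : ℤ × ℤ), v (p.1 + N * r, p.2 + N * r) = c r * v p)
    (r : ℤ) (y : g) : Gi.fnl v (σg r y) = c r * Gi.fnl v y := by
  have hmaps : (Gi.fnl v).comp (IsLinearMap.mk' (σg r) (hσ_lin r))
      = c r • Gi.fnl v := by
    apply Gi.bE.ext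
    intro p
    rw [LinearMap.comp_apply, LinearMap.smul_apply, Gi.bE_eq]
    show Gi.fnl v (σg r (Gi.E p.1 p.2)) = c r • Gi.fnl v (Gi.E p.1 p.2)
    rw [hσ, Gi.fnl_E, Gi.fnl_E, hv r p, smul_eq_mul]
  have := congrArg (fun f => f y) hmaps
  simpa using this

/-- The trace functional. -/
noncomputable def GlInf.trF (Gi : GlInf g) : g →ₗ[ℂ] ℂ :=
  Gi.fnl fun p => if p.1 = p.2 then 1 else 0

lemma GlInf.trF_vanish (Gi : GlInf g) {x : g}
    (hx : x ∈ LieAlgebra.derivedSeries ℂ g 1) : Gi.trF x = 0 := by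
  refine Gi.vanish_on_derived _ ?_ hx
  rintro y (⟨a, b, hab, rfl⟩ | ⟨a, b, rfl⟩)
  · rw [GlInf.trF, Gi.fnl_E, if_neg hab]
  · rw [GlInf.trF, map_sub, Gi.fnl_E, Gi.fnl_E, if_pos rfl, if_pos rfl, sub_self]

end FnlSec

section PhiSec

variable {g : Type*} [LieRing g] [LieAlgebra ℂ g] {Gi : GlInf g}
variable {q : ℂ} {N : ℕ}
variable {C : Type*} [LieRing C] [LieAlgebra ℂ C]
variable {B : ↥(LieAlgebra.derivedSeries ℂ g 1) → ↥(LieAlgebra.derivedSeries ℂ g 1) → ℂ}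
variable {σs : ℤ → ↥(LieAlgebra.derivedSeries ℂ g 1) → ↥(LieAlgebra.derivedSeries ℂ g 1)}
variable {σg : ℤ → g → g}
variable (Cov : CovZAlg q ↥(LieAlgebra.derivedSeries ℂ g 1) B σs C)

/-- The linear map `(f, β) ↦ Σ atE m (f m) + β k`. -/
noncomputable def CovZAlg.PhiL :
    ((ℤ →₀ ↥(LieAlgebra.derivedSeries ℂ g 1)) × ℂ) →ₗ[ℂ] C :=
  ((Finsupp.lsum ℂ fun m => Cov.atEL m).comp
      (LinearMap.fst ℂ (ℤ →₀ ↥(LieAlgebra.derivedSeries ℂ g 1)) ℂ)) +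
    (LinearMap.toSpanSingleton ℂ C Cov.k).comp
      (LinearMap.snd ℂ (ℤ →₀ ↥(LieAlgebra.derivedSeries ℂ g 1)) ℂ)

lemma CovZAlg.PhiL_apply (f : ℤ →₀ ↥(LieAlgebra.derivedSeries ℂ g 1)) (β : ℂ) :
    Cov.PhiL (f, β) = (f.sum fun m x => Cov.atE m x) + β • Cov.k := by
  simp [CovZAlg.PhiL, Finsupp.lsum_apply, LinearMap.toSpanSingleton_apply]
  rfl

lemma CovZAlg.PhiL_single (m : ℤ) (x : ↥(LieAlgebra.derivedSeries ℂ g 1)) :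
    Cov.PhiL (Finsupp.single m x, 0) = Cov.atE m x := by
  rw [Cov.PhiL_apply, Finsupp.sum_single_index (Cov.atE_zero m), zero_smul, add_zero]

end PhiSec

section FmapSec

variable {g : Type*} [LieRing g] [LieAlgebra ℂ g]
variable {C : Type*} [LieRing C] [LieAlgebra ℂ C]

/-- The canonical preimage data of the family `slCovFam`. -/
noncomputable def Fmap (Gi : GlInf g) (q : ℂ) (N : ℕ) :
    slNCqIdx N → (ℤ →₀ ↥(LieAlgebra.derivedSeries ℂ g 1)) × ℂ :=
  Sum.elim
    (fun p =>
      if h : p.1.1 = p.1.2.1 ∧ p.1.2.2.2 = 0 then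
        (Finsupp.single p.1.2.2.1 (((1:ℂ) - q ^ (-p.1.2.2.1))⁻¹ •
          Gi.dE ((p.1.1.1:ℤ) + 1) (((p.1.1.1:ℤ) + 1) + N)), 0)
      else
        (Finsupp.single p.1.2.2.1
          (⟨Gi.E ((N:ℤ) * p.1.2.2.2 + ((p.1.1.1:ℤ) + 1)) ((p.1.2.1.1:ℤ) + 1),
            Gi.offdiag_mem (by
              have hne : ¬(p.1.1.1 = p.1.2.1.1 ∧ p.1.2.2.2 = 0) :=
                fun hc => h ⟨Fin.ext hc.1, hc.2⟩
              simpa using shiftIdx_ne p.1.1.isLt p.1.2.1.isLt hne)⟩ :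
            ↥(LieAlgebra.derivedSeries ℂ g 1)), 0))
    (Sum.elim
      (fun r => (Finsupp.single 0 (Gi.dE ((r.1:ℤ) + 1) ((r.1:ℤ) + 2)), 0))
      ![(Finsupp.single 0 (Gi.dE ((N:ℤ) + 1) 1), 0), (0, 1)])

variable {Gi : GlInf g} {q : ℂ} {N : ℕ}
variable {B : ↥(LieAlgebra.derivedSeries ℂ g 1) → ↥(LieAlgebra.derivedSeries ℂ g 1) → ℂ}
variable {σs : ℤ → ↥(LieAlgebra.derivedSeries ℂ g 1) → ↥(LieAlgebra.derivedSeries ℂ g 1)}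
variable {σg : ℤ → g → g}
variable (Cov : CovZAlg q ↥(LieAlgebra.derivedSeries ℂ g 1) B σs C)

lemma PhiL_Fmap (idx : slNCqIdx N) :
    Cov.PhiL (Fmap Gi q N idx) = slCovFam Gi q N Cov idx := by
  rcases idx with p | r | t
  · show Cov.PhiL _ = eElt Gi q N Cov p.1.1 p.1.2.1 p.1.2.2.1 p.1.2.2.2
    unfold Fmap eElt
    by_cases h : p.1.1 = p.1.2.1 ∧ p.1.2.2.2 = 0
    · rw [Sum.elim_inl, dif_pos h, dif_pos h, Cov.PhiL_single, Cov.atE_smul]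
      rfl
    · rw [Sum.elim_inl, dif_neg h, dif_neg h, Cov.PhiL_single]
  · show Cov.PhiL _ = Cov.atE 0 _
    unfold Fmap
    rw [Sum.elim_inr, Sum.elim_inl, Cov.PhiL_single]
    rfl
  · fin_cases t
    · show Cov.PhiL _ = kprimeElt Gi q N Cov
      unfold Fmap
      rw [Sum.elim_inr, Sum.elim_inr]
      show Cov.PhiL (Finsupp.single 0 (Gi.dE ((N:ℤ) + 1) 1), 0) = _
      rw [Cov.PhiL_single]
      rfl
    · show Cov.PhiL _ = Cov.k
      unfold Fmap
      rw [Sum.elim_inr, Sum.elim_inr]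
      show Cov.PhiL (0, 1) = _
      rw [Cov.PhiL_apply, Finsupp.sum_zero_index, one_smul, zero_add]

/-- Composite functional used to extract coefficients. -/
noncomputable def Theta (Λ : g →ₗ[ℂ] ℂ) (m : ℤ) :
    ((ℤ →₀ ↥(LieAlgebra.derivedSeries ℂ g 1)) × ℂ) →ₗ[ℂ] ℂ :=
  (Λ.comp (LieAlgebra.derivedSeries ℂ g 1 : LieIdeal ℂ g).toSubmodule.subtype).comp
    ((Finsupp.lapply m).comp
      (LinearMap.fst ℂ (ℤ →₀ ↥(LieAlgebra.derivedSeries ℂ g 1)) ℂ))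

lemma Theta_single (Λ : g →ₗ[ℂ] ℂ) (m m' : ℤ) (y : ↥(LieAlgebra.derivedSeries ℂ g 1))
    (β : ℂ) : Theta (g := g) Λ m (Finsupp.single m' y, β)
      = if m' = m then Λ (y : g) else 0 := by
  show Λ ((Finsupp.single m' y) m : g) = _
  rw [Finsupp.single_apply]
  split
  · rfl
  · show Λ ((0 : ↥(LieAlgebra.derivedSeries ℂ g 1)) : g) = 0
    rw [ZeroMemClass.coe_zero, map_zero]

lemma Theta_kill (hq : q ≠ 0)
    (hσs : ∀ (r : ℤ) (x : ↥(LieAlgebra.derivedSeries ℂ g 1)), (σs r x : g) = σg r (x : g))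
    (Λ : g →ₗ[ℂ] ℂ) (m : ℤ)
    (hΛ : ∀ (r : ℤ) (x : ↥(LieAlgebra.derivedSeries ℂ g 1)),
      Λ (σg r (x : g)) = q ^ (-(r * m)) * Λ (x : g))
    {u : (ℤ →₀ ↥(LieAlgebra.derivedSeries ℂ g 1)) × ℂ}
    (hu : u ∈ Submodule.span ℂ
      {u : (ℤ →₀ ↥(LieAlgebra.derivedSeries ℂ g 1)) × ℂ | ∃ (r m' : ℤ)
        (x : ↥(LieAlgebra.derivedSeries ℂ g 1)),
        u = (Finsupp.single m' (q ^ (r * m') • σs r x - x), 0)}) :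
    Theta (g := g) Λ m u = 0 := by
  have hle : Submodule.span ℂ
      {u : (ℤ →₀ ↥(LieAlgebra.derivedSeries ℂ g 1)) × ℂ | ∃ (r m' : ℤ)
        (x : ↥(LieAlgebra.derivedSeries ℂ g 1)),
        u = (Finsupp.single m' (q ^ (r * m') • σs r x - x), 0)}
      ≤ LinearMap.ker (Theta (g := g) Λ m) := by
    rw [Submodule.span_le]
    rintro z ⟨r, m', x, rfl⟩
    rw [SetLike.mem_coe, LinearMap.mem_ker, Theta_single]
    split
    · rename_i hm
      subst hm
      rw [AddSubgroupClass.coe_sub, map_sub, SetLike.val_smul, map_smul, hσs, hΛ,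
        smul_eq_mul, ← mul_assoc, ← zpow_add₀ hq]
      rw [show r * m' + -(r * m') = 0 from by ring, zpow_zero, one_mul, sub_self]
    · rfl
  exact hle hu

end FmapSec

section IndepSec

variable {g : Type*} [LieRing g] [LieAlgebra ℂ g] {Gi : GlInf g}
variable {q : ℂ} {N : ℕ}
variable {C : Type*} [LieRing C] [LieAlgebra ℂ C]
variable {B : ↥(LieAlgebra.derivedSeries ℂ g 1) → ↥(LieAlgebra.derivedSeries ℂ g 1) → ℂ}
variable {σs : ℤ → ↥(LieAlgebra.derivedSeries ℂ g 1) → ↥(LieAlgebra.derivedSeries ℂ g 1)}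
variable {σg : ℤ → g → g}
variable (Cov : CovZAlg q ↥(LieAlgebra.derivedSeries ℂ g 1) B σs C)

lemma modv (N : ℕ) (hN : 0 < N) (i : ℕ) (hi : i < N) (d a : ℤ)
    (ha : a = (N:ℤ) * d + ((i:ℤ) + 1)) :
    (a - 1) % (N:ℤ) = (i:ℤ) ∧ (a - 1) / (N:ℤ) = d := by
  subst ha; exact aux_emod N hN d i hi

lemma slCov_indep (hq : q ≠ 0) (hq' : ∀ n : ℕ, n ≠ 0 → q ^ n ≠ 1) (hN : 2 ≤ N)
    (hσ : ∀ r m n : ℤ, σg r (Gi.E m n) = Gi.E (m + N * r) (n + N * r))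
    (hσs : ∀ (r : ℤ) (x : ↥(LieAlgebra.derivedSeries ℂ g 1)), (σs r x : g) = σg r (x : g))
    (hσ_lin : ∀ r : ℤ, IsLinearMap ℂ (σg r)) :
    LinearIndependent ℂ (slCovFam Gi q N Cov) := by
  have hN0 : 0 < N := by omega
  rw [linearIndependent_iff]
  intro l hl
  set RS := {u : (ℤ →₀ ↥(LieAlgebra.derivedSeries ℂ g 1)) × ℂ | ∃ (r m' : ℤ)
      (x : ↥(LieAlgebra.derivedSeries ℂ g 1)),
      u = (Finsupp.single m' (q ^ (r * m') • σs r x - x), 0)} with hRS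
  set P : (ℤ →₀ ↥(LieAlgebra.derivedSeries ℂ g 1)) × ℂ :=
    l.sum fun idx c => c • Fmap Gi q N idx with hP
  have hPhiP : Cov.PhiL P = 0 := by
    rw [hP, map_finsuppSum]
    rw [Finsupp.linearCombination_apply] at hl
    rw [← hl]
    apply Finsupp.sum_congr
    intro idx _
    rw [map_smul, PhiL_Fmap]
  have hker : P ∈ Submodule.span ℂ RS := by
    have h1 : (P.1.sum fun m x => Cov.atE m x) + P.2 • Cov.k = 0 := by
      rw [← Cov.PhiL_apply]
      rw [show ((P.1, P.2) : (ℤ →₀ ↥(LieAlgebra.derivedSeries ℂ g 1)) × ℂ) = P from rfl]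
      exact hPhiP
    have h2 := (Cov.kerPi P.1 P.2).mp h1
    rwa [show ((P.1, P.2) : (ℤ →₀ ↥(LieAlgebra.derivedSeries ℂ g 1)) × ℂ) = P from rfl] at h2
  have hsum : ∀ (Λ : g →ₗ[ℂ] ℂ) (m : ℤ),
      (∀ (r : ℤ) (x : ↥(LieAlgebra.derivedSeries ℂ g 1)),
        Λ (σg r (x : g)) = q ^ (-(r * m)) * Λ (x : g)) →
      (l.sum fun idx c => c * Theta (g := g) Λ m (Fmap Gi q N idx)) = 0 := by
    intro Λ m hΛ
    have h0 : Theta (g := g) Λ m P = 0 := Theta_kill hq hσs Λ m hΛ hker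
    rw [hP, map_finsuppSum] at h0
    simpa only [map_smul, smul_eq_mul] using h0
  -- facts about division
  have hfC : ∀ (i : Fin N) (d : ℤ), (((N:ℤ) * d + ((i.1:ℤ) + 1)) - 1) % (N:ℤ) = (i.1:ℤ)
      ∧ (((N:ℤ) * d + ((i.1:ℤ) + 1)) - 1) / (N:ℤ) = d :=
    fun i d => modv N hN0 i.1 i.isLt d _ rfl
  have hfA : ∀ (i : Fin N), (((i.1:ℤ) + 1) - 1) % (N:ℤ) = (i.1:ℤ)
      ∧ (((i.1:ℤ) + 1) - 1) / (N:ℤ) = 0 :=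
    fun i => modv N hN0 i.1 i.isLt 0 _ (by ring)
  have hfB : ∀ (i : Fin N), ((((i.1:ℤ) + 1) + (N:ℤ)) - 1) % (N:ℤ) = (i.1:ℤ)
      ∧ ((((i.1:ℤ) + 1) + (N:ℤ)) - 1) / (N:ℤ) = 1 :=
    fun i => modv N hN0 i.1 i.isLt 1 _ (by ring)
  have hfr1 : ∀ (r : Fin (N - 1)), (((r.1:ℤ) + 1) - 1) % (N:ℤ) = (r.1:ℤ)
      ∧ (((r.1:ℤ) + 1) - 1) / (N:ℤ) = 0 :=
    fun r => modv N hN0 r.1 (by omega) 0 _ (by ring)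
  have hfr2 : ∀ (r : Fin (N - 1)), (((r.1:ℤ) + 2) - 1) % (N:ℤ) = ((r.1:ℤ) + 1)
      ∧ (((r.1:ℤ) + 2) - 1) / (N:ℤ) = 0 := by
    intro r
    have h := modv N hN0 (r.1 + 1) (by omega) 0 ((r.1:ℤ) + 2) (by push_cast; ring)
    constructor
    · rw [h.1]; push_cast; ring
    · exact h.2
  have hfN1 : (((N:ℤ) + 1) - 1) % (N:ℤ) = 0 ∧ (((N:ℤ) + 1) - 1) / (N:ℤ) = 1 :=
    modv N hN0 0 (by omega) 1 _ (by push_cast; ring)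
  have hf1 : (((1:ℤ)) - 1) % (N:ℤ) = 0 ∧ (((1:ℤ)) - 1) / (N:ℤ) = 0 :=
    modv N hN0 0 (by omega) 0 _ (by push_cast; ring)
  -- the k coefficient
  have hk0 : l (Sum.inr (Sum.inr 1)) = 0 := by
    have hle : Submodule.span ℂ RS ≤ LinearMap.ker
        (LinearMap.snd ℂ (ℤ →₀ ↥(LieAlgebra.derivedSeries ℂ g 1)) ℂ) := by
      rw [Submodule.span_le]
      rintro z ⟨r, m', x, rfl⟩
      simp
    have h1 : (LinearMap.snd ℂ (ℤ →₀ ↥(LieAlgebra.derivedSeries ℂ g 1)) ℂ) P = 0 := hle hker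
    rw [hP, map_finsuppSum] at h1
    simp only [map_smul, LinearMap.snd_apply, smul_eq_mul] at h1
    rw [Finsupp.sum_eq_single (f := l) (Sum.inr (Sum.inr 1) : slNCqIdx N)] at h1
    · have hv : (Fmap Gi q N (Sum.inr (Sum.inr 1))).2 = 1 := rfl
      rw [hv, mul_one] at h1
      exact h1
    · intro b _ hbne
      have hz : (Fmap Gi q N b).2 = 0 := by
        rcases b with p | r | t
        · unfold Fmap
          rw [Sum.elim_inl]
          split <;> rfl
        · rfl
        · fin_cases t
          · rfl
          · exact absurd rfl hbne
      rw [hz, mul_zero]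
    · intro _
      rw [zero_mul]
  refine Finsupp.ext fun idx => ?_
  rw [Finsupp.coe_zero, Pi.zero_apply]
  rcases idx with ⟨⟨i0, j0, m0, d0⟩, hp0⟩ | r0 | t0
  · by_cases hdia : i0 = j0 ∧ d0 = 0
    · -- diagonal type index
      obtain ⟨hij, hd0⟩ := hdia
      subst hij
      subst hd0
      have hm0 : m0 ≠ 0 := fun h => hp0 ⟨rfl, h, rfl⟩
      have hcne : (1 : ℂ) - q ^ (-m0) ≠ 0 :=
        sub_ne_zero.mpr (Ne.symm (aux_zpow_ne_one hq hq' (neg_ne_zero.mpr hm0)))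
      set v : ℤ × ℤ → ℂ := fun p =>
        if p.1 = p.2 ∧ (p.1 - 1) % (N:ℤ) = (i0.1:ℤ) then q ^ (-(m0 * ((p.1 - 1) / (N:ℤ))))
        else 0 with hvdef
      have hΛ : ∀ (r : ℤ) (x : ↥(LieAlgebra.derivedSeries ℂ g 1)),
          Gi.fnl v (σg r (x : g)) = q ^ (-(r * m0)) * Gi.fnl v (x : g) := by
        intro r x
        refine Gi.fnl_equiv N σg hσ_lin hσ v (fun r => q ^ (-(r * m0))) ?_ r (x : g)
        intro r p
        show (if p.1 + (N:ℤ) * r = p.2 + (N:ℤ) * r ∧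
            ((p.1 + (N:ℤ) * r) - 1) % (N:ℤ) = (i0.1:ℤ)
            then q ^ (-(m0 * (((p.1 + (N:ℤ) * r) - 1) / (N:ℤ)))) else 0) = _
        rw [(aux_shift N hN0 r p.1).1, (aux_shift N hN0 r p.1).2]
        simp only [add_left_inj]
        show _ = q ^ (-(r * m0)) * (if p.1 = p.2 ∧ (p.1 - 1) % (N:ℤ) = (i0.1:ℤ)
            then q ^ (-(m0 * ((p.1 - 1) / (N:ℤ)))) else 0)
        split_ifs with h
        · rw [show -(m0 * ((p.1 - 1) / (N:ℤ) + r)) = -(r * m0) + -(m0 * ((p.1 - 1) / (N:ℤ)))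
            from by ring, zpow_add₀ hq]
        · rw [mul_zero]
      have hres := hsum (Gi.fnl v) m0 hΛ
      rw [Finsupp.sum_eq_single (f := l)
        (Sum.inl ⟨(i0, i0, m0, 0), hp0⟩ : slNCqIdx N)] at hres
      · have hval : Theta (g := g) (Gi.fnl v) m0
            (Fmap Gi q N (Sum.inl ⟨(i0, i0, m0, 0), hp0⟩)) = 1 := by
          unfold Fmap
          rw [Sum.elim_inl, dif_pos ⟨rfl, rfl⟩, Theta_single, if_pos rfl,
            SetLike.val_smul, map_smul, GlInf.dE_coe, map_sub, Gi.fnl_E, Gi.fnl_E,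
            smul_eq_mul]
          show ((1:ℂ) - q ^ (-m0))⁻¹ *
            ((if ((i0.1:ℤ) + 1) = ((i0.1:ℤ) + 1) ∧ (((i0.1:ℤ) + 1) - 1) % (N:ℤ) = (i0.1:ℤ)
              then q ^ (-(m0 * ((((i0.1:ℤ) + 1) - 1) / (N:ℤ)))) else 0) -
             (if (((i0.1:ℤ) + 1) + (N:ℤ)) = (((i0.1:ℤ) + 1) + (N:ℤ)) ∧
                ((((i0.1:ℤ) + 1) + (N:ℤ)) - 1) % (N:ℤ) = (i0.1:ℤ)
              then q ^ (-(m0 * (((((i0.1:ℤ) + 1) + (N:ℤ)) - 1) / (N:ℤ)))) else 0)) = 1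
          rw [(hfA i0).1, (hfA i0).2, (hfB i0).1, (hfB i0).2, if_pos ⟨rfl, rfl⟩,
            if_pos ⟨rfl, rfl⟩, show -(m0 * (0:ℤ)) = 0 from by ring, zpow_zero,
            show -(m0 * (1:ℤ)) = -m0 from by ring]
          exact inv_mul_cancel₀ hcne
        rw [hval, mul_one] at hres
        exact hres
      · intro b _ hbne
        have hz : Theta (g := g) (Gi.fnl v) m0 (Fmap Gi q N b) = 0 := by
          rcases b with ⟨⟨i, j, m0', d⟩, hp⟩ | r | t
          · unfold Fmap
            rw [Sum.elim_inl]
            by_cases hd : (i = j ∧ d = 0)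
            · rw [dif_pos hd, Theta_single]
              split
              · rename_i hm
                rw [SetLike.val_smul, map_smul, GlInf.dE_coe, map_sub, Gi.fnl_E, Gi.fnl_E,
                  smul_eq_mul]
                show ((1:ℂ) - q ^ (-m0'))⁻¹ *
                  ((if ((i.1:ℤ) + 1) = ((i.1:ℤ) + 1) ∧ (((i.1:ℤ) + 1) - 1) % (N:ℤ) = (i0.1:ℤ)
                    then q ^ (-(m0 * ((((i.1:ℤ) + 1) - 1) / (N:ℤ)))) else 0) -
                   (if (((i.1:ℤ) + 1) + (N:ℤ)) = (((i.1:ℤ) + 1) + (N:ℤ)) ∧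
                      ((((i.1:ℤ) + 1) + (N:ℤ)) - 1) % (N:ℤ) = (i0.1:ℤ)
                    then q ^ (-(m0 * (((((i.1:ℤ) + 1) + (N:ℤ)) - 1) / (N:ℤ)))) else 0)) = 0
                rw [(hfA i).1, (hfA i).2, (hfB i).1, (hfB i).2]
                by_cases hii : (i.1:ℤ) = (i0.1:ℤ)
                · exfalso
                  apply hbne
                  have hieq : i = i0 := Fin.ext (by exact_mod_cast hii)
                  obtain ⟨hji, hdz⟩ := hd
                  subst hieq
                  subst hji
                  subst hdz
                  subst hm
                  rfl
                · rw [if_neg (fun hc => hii hc.2), if_neg (fun hc => hii hc.2),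
                    sub_self, mul_zero]
              · rfl
            · rw [dif_neg hd, Theta_single]
              split
              · rw [Gi.fnl_E]
                have hne2 : ((N:ℤ) * d + ((i.1:ℤ) + 1)) ≠ ((j.1:ℤ) + 1) := by
                  have hne3 : ¬(i.1 = j.1 ∧ d = 0) := fun hc => hd ⟨Fin.ext hc.1, hc.2⟩
                  simpa using shiftIdx_ne i.isLt j.isLt hne3
                show (if ((N:ℤ) * d + ((i.1:ℤ) + 1)) = ((j.1:ℤ) + 1) ∧ _ then _ else 0) = 0
                rw [if_neg (fun hc => hne2 hc.1)]
              · rfl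
          · unfold Fmap
            rw [Sum.elim_inr, Sum.elim_inl, Theta_single,
              if_neg (fun h => hm0 h.symm)]
          · fin_cases t
            · show Theta (g := g) (Gi.fnl v) m0 (Finsupp.single 0 (Gi.dE ((N:ℤ) + 1) 1), 0) = 0
              rw [Theta_single, if_neg (fun h => hm0 h.symm)]
            · show Theta (g := g) (Gi.fnl v) m0 (0, 1) = 0
              show Gi.fnl v (((0 : ℤ →₀ ↥(LieAlgebra.derivedSeries ℂ g 1)) m0 : _) : g) = 0
              rw [Finsupp.coe_zero, Pi.zero_apply, ZeroMemClass.coe_zero, map_zero]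
        rw [hz, mul_zero]
      · intro _
        rw [zero_mul]
    · -- off-diagonal type index
      set v : ℤ × ℤ → ℂ := fun p =>
        if (p.1 - 1) % (N:ℤ) = (i0.1:ℤ) ∧ (p.2 - 1) % (N:ℤ) = (j0.1:ℤ) ∧
            (p.1 - 1) / (N:ℤ) - (p.2 - 1) / (N:ℤ) = d0
        then q ^ (-(m0 * ((p.2 - 1) / (N:ℤ)))) else 0 with hvdef
      have hΛ : ∀ (r : ℤ) (x : ↥(LieAlgebra.derivedSeries ℂ g 1)),
          Gi.fnl v (σg r (x : g)) = q ^ (-(r * m0)) * Gi.fnl v (x : g) := by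
        intro r x
        refine Gi.fnl_equiv N σg hσ_lin hσ v (fun r => q ^ (-(r * m0))) ?_ r (x : g)
        intro r p
        show (if ((p.1 + (N:ℤ) * r) - 1) % (N:ℤ) = (i0.1:ℤ) ∧
            ((p.2 + (N:ℤ) * r) - 1) % (N:ℤ) = (j0.1:ℤ) ∧
            ((p.1 + (N:ℤ) * r) - 1) / (N:ℤ) - ((p.2 + (N:ℤ) * r) - 1) / (N:ℤ) = d0
          then q ^ (-(m0 * (((p.2 + (N:ℤ) * r) - 1) / (N:ℤ)))) else 0) = _
        rw [(aux_shift N hN0 r p.1).1, (aux_shift N hN0 r p.1).2,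
          (aux_shift N hN0 r p.2).1, (aux_shift N hN0 r p.2).2,
          show (p.1 - 1) / (N:ℤ) + r - ((p.2 - 1) / (N:ℤ) + r)
            = (p.1 - 1) / (N:ℤ) - (p.2 - 1) / (N:ℤ) from by ring]
        show _ = q ^ (-(r * m0)) * (if (p.1 - 1) % (N:ℤ) = (i0.1:ℤ) ∧
            (p.2 - 1) % (N:ℤ) = (j0.1:ℤ) ∧
            (p.1 - 1) / (N:ℤ) - (p.2 - 1) / (N:ℤ) = d0
          then q ^ (-(m0 * ((p.2 - 1) / (N:ℤ)))) else 0)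
        split_ifs with h
        · rw [show -(m0 * ((p.2 - 1) / (N:ℤ) + r)) = -(r * m0) + -(m0 * ((p.2 - 1) / (N:ℤ)))
            from by ring, zpow_add₀ hq]
        · rw [mul_zero]
      have hres := hsum (Gi.fnl v) m0 hΛ
      rw [Finsupp.sum_eq_single (f := l)
        (Sum.inl ⟨(i0, j0, m0, d0), hp0⟩ : slNCqIdx N)] at hres
      · have hval : Theta (g := g) (Gi.fnl v) m0
            (Fmap Gi q N (Sum.inl ⟨(i0, j0, m0, d0), hp0⟩)) = 1 := by
          unfold Fmap
          rw [Sum.elim_inl, dif_neg hdia, Theta_single, if_pos rfl, Gi.fnl_E]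
          show (if (((N:ℤ) * d0 + ((i0.1:ℤ) + 1)) - 1) % (N:ℤ) = (i0.1:ℤ) ∧
              (((j0.1:ℤ) + 1) - 1) % (N:ℤ) = (j0.1:ℤ) ∧
              (((N:ℤ) * d0 + ((i0.1:ℤ) + 1)) - 1) / (N:ℤ) - (((j0.1:ℤ) + 1) - 1) / (N:ℤ) = d0
            then q ^ (-(m0 * ((((j0.1:ℤ) + 1) - 1) / (N:ℤ)))) else 0) = 1
          rw [(hfC i0 d0).1, (hfC i0 d0).2, (hfA j0).1, (hfA j0).2,
            if_pos ⟨rfl, rfl, by ring⟩, show -(m0 * (0:ℤ)) = 0 from by ring, zpow_zero]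
        rw [hval, mul_one] at hres
        exact hres
      · intro b _ hbne
        have hz : Theta (g := g) (Gi.fnl v) m0 (Fmap Gi q N b) = 0 := by
          rcases b with ⟨⟨i, j, m0', d⟩, hp⟩ | r | t
          · unfold Fmap
            rw [Sum.elim_inl]
            by_cases hd : (i = j ∧ d = 0)
            · rw [dif_pos hd, Theta_single]
              split
              · rename_i hm
                rw [SetLike.val_smul, map_smul, GlInf.dE_coe, map_sub, Gi.fnl_E, Gi.fnl_E,
                  smul_eq_mul]
                show ((1:ℂ) - q ^ (-m0'))⁻¹ *
                  ((if (((i.1:ℤ) + 1) - 1) % (N:ℤ) = (i0.1:ℤ) ∧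
                      (((i.1:ℤ) + 1) - 1) % (N:ℤ) = (j0.1:ℤ) ∧
                      (((i.1:ℤ) + 1) - 1) / (N:ℤ) - (((i.1:ℤ) + 1) - 1) / (N:ℤ) = d0
                    then q ^ (-(m0 * ((((i.1:ℤ) + 1) - 1) / (N:ℤ)))) else 0) -
                   (if ((((i.1:ℤ) + 1) + (N:ℤ)) - 1) % (N:ℤ) = (i0.1:ℤ) ∧
                      ((((i.1:ℤ) + 1) + (N:ℤ)) - 1) % (N:ℤ) = (j0.1:ℤ) ∧
                      ((((i.1:ℤ) + 1) + (N:ℤ)) - 1) / (N:ℤ) -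
                        ((((i.1:ℤ) + 1) + (N:ℤ)) - 1) / (N:ℤ) = d0
                    then q ^ (-(m0 * (((((i.1:ℤ) + 1) + (N:ℤ)) - 1) / (N:ℤ)))) else 0)) = 0
                rw [(hfA i).1, (hfA i).2, (hfB i).1, (hfB i).2]
                have hcond : ¬((i.1:ℤ) = (i0.1:ℤ) ∧ (i.1:ℤ) = (j0.1:ℤ) ∧
                    (0:ℤ) - 0 = d0) := by
                  rintro ⟨h1, h2, h3⟩
                  exact hdia ⟨Fin.ext (by exact_mod_cast h1.symm.trans h2), by omega⟩
                have hcond2 : ¬((i.1:ℤ) = (i0.1:ℤ) ∧ (i.1:ℤ) = (j0.1:ℤ) ∧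
                    (1:ℤ) - 1 = d0) := by
                  rintro ⟨h1, h2, h3⟩
                  exact hdia ⟨Fin.ext (by exact_mod_cast h1.symm.trans h2), by omega⟩
                rw [if_neg hcond, if_neg hcond2, sub_self, mul_zero]
              · rfl
            · rw [dif_neg hd, Theta_single]
              split
              · rename_i hm
                rw [Gi.fnl_E]
                show (if (((N:ℤ) * d + ((i.1:ℤ) + 1)) - 1) % (N:ℤ) = (i0.1:ℤ) ∧
                    (((j.1:ℤ) + 1) - 1) % (N:ℤ) = (j0.1:ℤ) ∧
                    (((N:ℤ) * d + ((i.1:ℤ) + 1)) - 1) / (N:ℤ) -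
                      (((j.1:ℤ) + 1) - 1) / (N:ℤ) = d0
                  then q ^ (-(m0 * ((((j.1:ℤ) + 1) - 1) / (N:ℤ)))) else 0) = 0
                rw [(hfC i d).1, (hfC i d).2, (hfA j).1, (hfA j).2]
                by_cases hcq : (i.1:ℤ) = (i0.1:ℤ) ∧ (j.1:ℤ) = (j0.1:ℤ) ∧ d - 0 = d0
                · exfalso
                  apply hbne
                  obtain ⟨h1, h2, h3⟩ := hcq
                  have hieq : i = i0 := Fin.ext (by exact_mod_cast h1)
                  have hjeq : j = j0 := Fin.ext (by exact_mod_cast h2)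
                  have hdeq : d = d0 := by omega
                  subst hieq; subst hjeq; subst hdeq; subst hm
                  rfl
                · rw [if_neg hcq]
              · rfl
          · unfold Fmap
            rw [Sum.elim_inr, Sum.elim_inl, Theta_single]
            split
            · rw [GlInf.dE_coe, map_sub, Gi.fnl_E, Gi.fnl_E]
              show (if (((r.1:ℤ) + 1) - 1) % (N:ℤ) = (i0.1:ℤ) ∧
                  (((r.1:ℤ) + 1) - 1) % (N:ℤ) = (j0.1:ℤ) ∧
                  (((r.1:ℤ) + 1) - 1) / (N:ℤ) - (((r.1:ℤ) + 1) - 1) / (N:ℤ) = d0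
                then q ^ (-(m0 * ((((r.1:ℤ) + 1) - 1) / (N:ℤ)))) else 0) -
                (if (((r.1:ℤ) + 2) - 1) % (N:ℤ) = (i0.1:ℤ) ∧
                  (((r.1:ℤ) + 2) - 1) % (N:ℤ) = (j0.1:ℤ) ∧
                  (((r.1:ℤ) + 2) - 1) / (N:ℤ) - (((r.1:ℤ) + 2) - 1) / (N:ℤ) = d0
                then q ^ (-(m0 * ((((r.1:ℤ) + 2) - 1) / (N:ℤ)))) else 0) = 0
              rw [(hfr1 r).1, (hfr1 r).2, (hfr2 r).1, (hfr2 r).2]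
              have hcond : ¬((r.1:ℤ) = (i0.1:ℤ) ∧ (r.1:ℤ) = (j0.1:ℤ) ∧ (0:ℤ) - 0 = d0) := by
                rintro ⟨h1, h2, h3⟩
                exact hdia ⟨Fin.ext (by exact_mod_cast h1.symm.trans h2), by omega⟩
              have hcond2 : ¬(((r.1:ℤ) + 1) = (i0.1:ℤ) ∧ ((r.1:ℤ) + 1) = (j0.1:ℤ) ∧
                  (0:ℤ) - 0 = d0) := by
                rintro ⟨h1, h2, h3⟩
                exact hdia ⟨Fin.ext (by exact_mod_cast h1.symm.trans h2), by omega⟩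
              rw [if_neg hcond, if_neg hcond2, sub_self]
            · rfl
          · fin_cases t
            · show Theta (g := g) (Gi.fnl v) m0 (Finsupp.single 0 (Gi.dE ((N:ℤ) + 1) 1), 0) = 0
              rw [Theta_single]
              split
              · rw [GlInf.dE_coe, map_sub, Gi.fnl_E, Gi.fnl_E]
                show (if (((N:ℤ) + 1) - 1) % (N:ℤ) = (i0.1:ℤ) ∧
                    (((N:ℤ) + 1) - 1) % (N:ℤ) = (j0.1:ℤ) ∧
                    (((N:ℤ) + 1) - 1) / (N:ℤ) - (((N:ℤ) + 1) - 1) / (N:ℤ) = d0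
                  then q ^ (-(m0 * ((((N:ℤ) + 1) - 1) / (N:ℤ)))) else 0) -
                  (if ((1:ℤ) - 1) % (N:ℤ) = (i0.1:ℤ) ∧
                    ((1:ℤ) - 1) % (N:ℤ) = (j0.1:ℤ) ∧
                    ((1:ℤ) - 1) / (N:ℤ) - ((1:ℤ) - 1) / (N:ℤ) = d0
                  then q ^ (-(m0 * (((1:ℤ) - 1) / (N:ℤ)))) else 0) = 0
                rw [hfN1.1, hfN1.2, hf1.1, hf1.2]
                have hcond : ¬((0:ℤ) = (i0.1:ℤ) ∧ (0:ℤ) = (j0.1:ℤ) ∧ (1:ℤ) - 1 = d0) := by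
                  rintro ⟨h1, h2, h3⟩
                  exact hdia ⟨Fin.ext (by exact_mod_cast h1.symm.trans h2), by omega⟩
                have hcond2 : ¬((0:ℤ) = (i0.1:ℤ) ∧ (0:ℤ) = (j0.1:ℤ) ∧ (0:ℤ) - 0 = d0) := by
                  rintro ⟨h1, h2, h3⟩
                  exact hdia ⟨Fin.ext (by exact_mod_cast h1.symm.trans h2), by omega⟩
                rw [if_neg hcond, if_neg hcond2, sub_self]
              · rfl
            · show Theta (g := g) (Gi.fnl v) m0 (0, 1) = 0
              show Gi.fnl v (((0 : ℤ →₀ ↥(LieAlgebra.derivedSeries ℂ g 1)) m0 : _) : g) = 0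
              rw [Finsupp.coe_zero, Pi.zero_apply, ZeroMemClass.coe_zero, map_zero]
        rw [hz, mul_zero]
      · intro _
        rw [zero_mul]
  · -- the h_r indices
    set v : ℤ × ℤ → ℂ := fun p =>
      if p.1 = p.2 ∧ (p.1 - 1) % (N:ℤ) ≤ (r0.1:ℤ) then 1 else 0 with hvdef
    have hΛ : ∀ (r : ℤ) (x : ↥(LieAlgebra.derivedSeries ℂ g 1)),
        Gi.fnl v (σg r (x : g)) = q ^ (-(r * (0:ℤ))) * Gi.fnl v (x : g) := by
      intro r x
      rw [show -(r * (0:ℤ)) = 0 from by ring, zpow_zero, one_mul]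
      have h1 := Gi.fnl_equiv N σg hσ_lin hσ v (fun _ => 1) ?_ r (x : g)
      · rw [h1, one_mul]
      · intro r p
        show (if p.1 + (N:ℤ) * r = p.2 + (N:ℤ) * r ∧
            ((p.1 + (N:ℤ) * r) - 1) % (N:ℤ) ≤ (r0.1:ℤ) then (1:ℂ) else 0) = _
        rw [(aux_shift N hN0 r p.1).1]
        simp only [add_left_inj]
        rw [one_mul]
    have hres := hsum (Gi.fnl v) 0 hΛ
    rw [Finsupp.sum_eq_single (f := l) (Sum.inr (Sum.inl r0) : slNCqIdx N)] at hres
    · have hval : Theta (g := g) (Gi.fnl v) 0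
          (Fmap Gi q N (Sum.inr (Sum.inl r0))) = 1 := by
        unfold Fmap
        rw [Sum.elim_inr, Sum.elim_inl, Theta_single, if_pos rfl, GlInf.dE_coe, map_sub,
          Gi.fnl_E, Gi.fnl_E]
        show (if ((r0.1:ℤ) + 1) = ((r0.1:ℤ) + 1) ∧ (((r0.1:ℤ) + 1) - 1) % (N:ℤ) ≤ (r0.1:ℤ)
            then (1:ℂ) else 0) -
          (if ((r0.1:ℤ) + 2) = ((r0.1:ℤ) + 2) ∧ (((r0.1:ℤ) + 2) - 1) % (N:ℤ) ≤ (r0.1:ℤ)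
            then (1:ℂ) else 0) = 1
        rw [(hfr1 r0).1, (hfr2 r0).1, if_pos ⟨rfl, le_refl _⟩,
          if_neg (fun hc => by omega), sub_zero]
      rw [hval, mul_one] at hres
      exact hres
    · intro b _ hbne
      have hz : Theta (g := g) (Gi.fnl v) 0 (Fmap Gi q N b) = 0 := by
        rcases b with ⟨⟨i, j, m0', d⟩, hp⟩ | r | t
        · unfold Fmap
          rw [Sum.elim_inl]
          by_cases hd : (i = j ∧ d = 0)
          · rw [dif_pos hd, Theta_single]
            split
            · rename_i hm
              exfalso
              exact hp ⟨hd.1, hm, hd.2⟩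
            · rfl
          · rw [dif_neg hd, Theta_single]
            split
            · rw [Gi.fnl_E]
              have hne2 : ((N:ℤ) * d + ((i.1:ℤ) + 1)) ≠ ((j.1:ℤ) + 1) := by
                have hne3 : ¬(i.1 = j.1 ∧ d = 0) := fun hc => hd ⟨Fin.ext hc.1, hc.2⟩
                simpa using shiftIdx_ne i.isLt j.isLt hne3
              show (if ((N:ℤ) * d + ((i.1:ℤ) + 1)) = ((j.1:ℤ) + 1) ∧ _ then (1:ℂ) else 0) = 0
              rw [if_neg (fun hc => hne2 hc.1)]
            · rfl
        · unfold Fmap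
          rw [Sum.elim_inr, Sum.elim_inl, Theta_single]
          split
          · rw [GlInf.dE_coe, map_sub, Gi.fnl_E, Gi.fnl_E]
            show (if ((r.1:ℤ) + 1) = ((r.1:ℤ) + 1) ∧ (((r.1:ℤ) + 1) - 1) % (N:ℤ) ≤ (r0.1:ℤ)
                then (1:ℂ) else 0) -
              (if ((r.1:ℤ) + 2) = ((r.1:ℤ) + 2) ∧ (((r.1:ℤ) + 2) - 1) % (N:ℤ) ≤ (r0.1:ℤ)
                then (1:ℂ) else 0) = 0
            rw [(hfr1 r).1, (hfr2 r).1]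
            have hrne : (r.1:ℤ) ≠ (r0.1:ℤ) := by
              intro hc
              apply hbne
              have : r = r0 := Fin.ext (by exact_mod_cast hc)
              rw [this]
            by_cases h1 : (r.1:ℤ) ≤ (r0.1:ℤ)
            · rw [if_pos ⟨rfl, h1⟩, if_pos ⟨rfl, by omega⟩, sub_self]
            · rw [if_neg (fun hc => h1 hc.2), if_neg (fun hc => by omega), sub_self]
          · rfl
        · fin_cases t
          · show Theta (g := g) (Gi.fnl v) 0 (Finsupp.single 0 (Gi.dE ((N:ℤ) + 1) 1), 0) = 0
            rw [Theta_single, if_pos rfl, GlInf.dE_coe, map_sub, Gi.fnl_E, Gi.fnl_E]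
            show (if ((N:ℤ) + 1) = ((N:ℤ) + 1) ∧ (((N:ℤ) + 1) - 1) % (N:ℤ) ≤ (r0.1:ℤ)
                then (1:ℂ) else 0) -
              (if (1:ℤ) = 1 ∧ ((1:ℤ) - 1) % (N:ℤ) ≤ (r0.1:ℤ) then (1:ℂ) else 0) = 0
            rw [hfN1.1, hf1.1, if_pos ⟨rfl, Int.natCast_nonneg _⟩,
              if_pos ⟨rfl, Int.natCast_nonneg _⟩, sub_self]
          · show Theta (g := g) (Gi.fnl v) 0 (0, 1) = 0
            show Gi.fnl v (((0 : ℤ →₀ ↥(LieAlgebra.derivedSeries ℂ g 1)) 0 : _) : g) = 0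
            rw [Finsupp.coe_zero, Pi.zero_apply, ZeroMemClass.coe_zero, map_zero]
      rw [hz, mul_zero]
    · intro _
      rw [zero_mul]
  · -- k' and k
    fin_cases t0
    · set v : ℤ × ℤ → ℂ := fun p =>
        if p.1 = p.2 then (((p.1 - 1) / (N:ℤ) : ℤ) : ℂ) else 0 with hvdef
      have hgK : ∀ (r : ℤ) (y : g),
          Gi.fnl v (σg r y) = Gi.fnl v y + (r:ℂ) * Gi.trF y := by
        intro r y
        have hmaps : (Gi.fnl v).comp (IsLinearMap.mk' (σg r) (hσ_lin r))
            = Gi.fnl v + (r:ℂ) • Gi.trF := by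
          apply Gi.bE.ext
          intro p
          rw [LinearMap.comp_apply, LinearMap.add_apply, LinearMap.smul_apply, Gi.bE_eq]
          show Gi.fnl v (σg r (Gi.E p.1 p.2))
            = Gi.fnl v (Gi.E p.1 p.2) + (r:ℂ) • Gi.trF (Gi.E p.1 p.2)
          rw [hσ, Gi.fnl_E, Gi.fnl_E, GlInf.trF, Gi.fnl_E, smul_eq_mul]
          show (if p.1 + (N:ℤ) * r = p.2 + (N:ℤ) * r
              then ((((p.1 + (N:ℤ) * r) - 1) / (N:ℤ) : ℤ) : ℂ) else 0) = _
          rw [(aux_shift N hN0 r p.1).2]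
          simp only [add_left_inj]
          show _ = (if p.1 = p.2 then (((p.1 - 1) / (N:ℤ) : ℤ) : ℂ) else 0)
            + (r:ℂ) * (if p.1 = p.2 then (1:ℂ) else 0)
          split_ifs with h
          · push_cast
            ring
          · rw [mul_zero, add_zero]
        have h2 := congrArg (fun f => f y) hmaps
        simpa using h2
      have hΛ : ∀ (r : ℤ) (x : ↥(LieAlgebra.derivedSeries ℂ g 1)),
          Gi.fnl v (σg r (x : g)) = q ^ (-(r * (0:ℤ))) * Gi.fnl v (x : g) := by
        intro r x
        rw [hgK, Gi.trF_vanish x.2, mul_zero, add_zero,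
          show -(r * (0:ℤ)) = 0 from by ring, zpow_zero, one_mul]
      have hres := hsum (Gi.fnl v) 0 hΛ
      rw [Finsupp.sum_eq_single (f := l) (Sum.inr (Sum.inr 0) : slNCqIdx N)] at hres
      · have hval : Theta (g := g) (Gi.fnl v) 0
            (Fmap Gi q N (Sum.inr (Sum.inr 0))) = 1 := by
          show Theta (g := g) (Gi.fnl v) 0 (Finsupp.single 0 (Gi.dE ((N:ℤ) + 1) 1), 0) = 1
          rw [Theta_single, if_pos rfl, GlInf.dE_coe, map_sub, Gi.fnl_E, Gi.fnl_E]
          show (if ((N:ℤ) + 1) = ((N:ℤ) + 1)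
              then (((((N:ℤ) + 1) - 1) / (N:ℤ) : ℤ) : ℂ) else 0) -
            (if (1:ℤ) = 1 then ((((1:ℤ) - 1) / (N:ℤ) : ℤ) : ℂ) else 0) = 1
          rw [hfN1.2, hf1.2, if_pos rfl, if_pos rfl]
          norm_num
        rw [hval, mul_one] at hres
        exact hres
      · intro b _ hbne
        have hz : Theta (g := g) (Gi.fnl v) 0 (Fmap Gi q N b) = 0 := by
          rcases b with ⟨⟨i, j, m0', d⟩, hp⟩ | r | t
          · unfold Fmap
            rw [Sum.elim_inl]
            by_cases hd : (i = j ∧ d = 0)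
            · rw [dif_pos hd, Theta_single]
              split
              · rename_i hm
                exfalso
                exact hp ⟨hd.1, hm, hd.2⟩
              · rfl
            · rw [dif_neg hd, Theta_single]
              split
              · rw [Gi.fnl_E]
                have hne2 : ((N:ℤ) * d + ((i.1:ℤ) + 1)) ≠ ((j.1:ℤ) + 1) := by
                  have hne3 : ¬(i.1 = j.1 ∧ d = 0) := fun hc => hd ⟨Fin.ext hc.1, hc.2⟩
                  simpa using shiftIdx_ne i.isLt j.isLt hne3
                show (if ((N:ℤ) * d + ((i.1:ℤ) + 1)) = ((j.1:ℤ) + 1) then _ else 0) = 0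
                rw [if_neg hne2]
              · rfl
          · unfold Fmap
            rw [Sum.elim_inr, Sum.elim_inl, Theta_single]
            split
            · rw [GlInf.dE_coe, map_sub, Gi.fnl_E, Gi.fnl_E]
              show (if ((r.1:ℤ) + 1) = ((r.1:ℤ) + 1)
                  then ((((r.1:ℤ) + 1 - 1) / (N:ℤ) : ℤ) : ℂ) else 0) -
                (if ((r.1:ℤ) + 2) = ((r.1:ℤ) + 2)
                  then ((((r.1:ℤ) + 2 - 1) / (N:ℤ) : ℤ) : ℂ) else 0) = 0
              rw [(hfr1 r).2, (hfr2 r).2, if_pos rfl, if_pos rfl, sub_self]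
            · rfl
          · fin_cases t
            · exfalso
              exact hbne rfl
            · show Theta (g := g) (Gi.fnl v) 0 (0, 1) = 0
              show Gi.fnl v (((0 : ℤ →₀ ↥(LieAlgebra.derivedSeries ℂ g 1)) 0 : _) : g) = 0
              rw [Finsupp.coe_zero, Pi.zero_apply, ZeroMemClass.coe_zero, map_zero]
        rw [hz, mul_zero]
      · intro _
        rw [zero_mul]
    · exact hk0

end IndepSec

section SpanSec

variable {g : Type*} [LieRing g] [LieAlgebra ℂ g] {Gi : GlInf g}
variable {q : ℂ} {N : ℕ}
variable {C : Type*} [LieRing C] [LieAlgebra ℂ C]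
variable {B : ↥(LieAlgebra.derivedSeries ℂ g 1) → ↥(LieAlgebra.derivedSeries ℂ g 1) → ℂ}
variable {σs : ℤ → ↥(LieAlgebra.derivedSeries ℂ g 1) → ↥(LieAlgebra.derivedSeries ℂ g 1)}
variable {σg : ℤ → g → g}
variable (Cov : CovZAlg q ↥(LieAlgebra.derivedSeries ℂ g 1) B σs C)

lemma slCov_span (hq : q ≠ 0) (hq' : ∀ n : ℕ, n ≠ 0 → q ^ n ≠ 1) (hN : 2 ≤ N)
    (hσ : ∀ r m n : ℤ, σg r (Gi.E m n) = Gi.E (m + N * r) (n + N * r))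
    (hσs : ∀ (r : ℤ) (x : ↥(LieAlgebra.derivedSeries ℂ g 1)), (σs r x : g) = σg r (x : g))
    (hσ_lin : ∀ r : ℤ, IsLinearMap ℂ (σg r)) :
    Submodule.span ℂ (Set.range (slCovFam Gi q N Cov)) = ⊤ := by
  have hN0 : 0 < N := by omega
  set W := Submodule.span ℂ (Set.range (slCovFam Gi q N Cov)) with hW
  -- the small diagonal elements are in W
  have hD : ∀ c : ℕ, c < N → Cov.atE 0 (Gi.dE ((c:ℤ) + 1) 1) ∈ W := by
    intro c
    induction c with
    | zero =>
      intro _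
      have h0 : (Gi.dE ((0:ℕ):ℤ) 1 : ↥(LieAlgebra.derivedSeries ℂ g 1)) = Gi.dE 0 1 := rfl
      have h1 : (Gi.dE (((0:ℕ):ℤ) + 1) 1 : ↥(LieAlgebra.derivedSeries ℂ g 1)) = 0 := by
        apply Subtype.ext
        rw [GlInf.dE_coe]
        norm_num
      rw [h1, Cov.atE_zero]
      exact W.zero_mem
    | succ c ih =>
      intro hc
      have hcN : c < N := by omega
      have hcN1 : c < N - 1 := by omega
      have hsplit : (Gi.dE (((c + 1 : ℕ):ℤ) + 1) 1 : ↥(LieAlgebra.derivedSeries ℂ g 1))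
          = Gi.dE ((c:ℤ) + 1) 1 - Gi.dE ((c:ℤ) + 1) ((c:ℤ) + 2) := by
        apply Subtype.ext
        rw [AddSubgroupClass.coe_sub, GlInf.dE_coe, GlInf.dE_coe, GlInf.dE_coe,
          show (((c + 1 : ℕ):ℤ) + 1) = (c:ℤ) + 2 from by push_cast; ring]
        abel
      rw [hsplit, Cov.atE_sub]
      refine W.sub_mem (ih hcN) ?_
      have hfam : slCovFam Gi q N Cov (Sum.inr (Sum.inl ⟨c, hcN1⟩))
          = Cov.atE 0 (Gi.dE ((c:ℤ) + 1) ((c:ℤ) + 2)) := rfl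
      rw [← hfam]
      exact Submodule.subset_span ⟨Sum.inr (Sum.inl ⟨c, hcN1⟩), rfl⟩
  have hdiag_small : ∀ i j : Fin N,
      Cov.atE 0 (Gi.dE ((i.1:ℤ) + 1) ((j.1:ℤ) + 1)) ∈ W := by
    intro i j
    have hsplit : (Gi.dE ((i.1:ℤ) + 1) ((j.1:ℤ) + 1) : ↥(LieAlgebra.derivedSeries ℂ g 1))
        = Gi.dE ((i.1:ℤ) + 1) 1 - Gi.dE ((j.1:ℤ) + 1) 1 := by
      apply Subtype.ext
      rw [AddSubgroupClass.coe_sub, GlInf.dE_coe, GlInf.dE_coe, GlInf.dE_coe]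
      abel
    rw [hsplit, Cov.atE_sub]
    exact W.sub_mem (hD i.1 i.isLt) (hD j.1 j.isLt)
  rw [eq_top_iff, ← Cov.spans]
  apply Submodule.span_le.mpr
  rintro z (hz | ⟨m, x, rfl⟩)
  · rw [Set.mem_singleton_iff] at hz
    subst hz
    have hfam : slCovFam Gi q N Cov (Sum.inr (Sum.inr 1)) = Cov.k := rfl
    exact Submodule.subset_span ⟨Sum.inr (Sum.inr 1), hfam⟩
  · have hx : x ∈ Submodule.span ℂ
        {y : ↥(LieAlgebra.derivedSeries ℂ g 1) | (y : g) ∈ Gi.Sgen} := by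
      rw [Gi.span_sub_top]
      trivial
    have hx2 : x ∈ Submodule.comap (Cov.atEL m) W := by
      refine Submodule.span_le.mpr ?_ hx
      rintro y hy
      rw [SetLike.mem_coe, Submodule.mem_comap, Cov.atEL_apply]
      rcases hy with ⟨a, b, hab, hval⟩ | ⟨a, b, hval⟩
      · -- off-diagonal generator
        obtain ⟨i, m1, ha⟩ := aux_decomp N hN0 a
        obtain ⟨j, n1, hb⟩ := aux_decomp N hN0 b
        have hne : ¬(i = j ∧ m1 = n1) := by
          rintro ⟨h1, h2⟩
          apply hab
          rw [ha, hb, h1, h2]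
        have h1 : Cov.atE m y = Cov.atE m
            ⟨Gi.E ((N : ℤ) * m1 + ((i.1:ℤ) + 1)) ((N : ℤ) * n1 + ((j.1:ℤ) + 1)),
              Gi.offdiag_mem (shiftIdx_ne i.isLt j.isLt
                (fun hc => hne ⟨Fin.ext hc.1, hc.2⟩))⟩ :=
          Cov.atE_congr m (by rw [hval, ha, hb])
        rw [h1, rel1' Cov hq hσ hσs i j m m1 n1 hne]
        apply W.smul_mem
        have hcond : ¬(i = j ∧ m1 - n1 = 0) := fun h => hne ⟨h.1, by omega⟩
        have hidx : ¬(i = j ∧ m = 0 ∧ m1 - n1 = 0) := fun h => hcond ⟨h.1, h.2.2⟩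
        exact Submodule.subset_span ⟨Sum.inl ⟨(i, j, m, m1 - n1), hidx⟩, rfl⟩
      · -- diagonal generator
        by_cases hab : a = b
        · have hy0 : y = 0 := by
            apply Subtype.ext
            rw [hval, hab, sub_self]
            rfl
          rw [hy0, Cov.atE_zero]
          exact W.zero_mem
        · obtain ⟨i, m1, ha⟩ := aux_decomp N hN0 a
          obtain ⟨j, n1, hb⟩ := aux_decomp N hN0 b
          have hne : ¬(i = j ∧ m1 = n1) := by
            rintro ⟨h1, h2⟩
            apply hab
            rw [ha, hb, h1, h2]
          have h1 : Cov.atE m y = Cov.atE m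
              ⟨Gi.E ((N : ℤ) * m1 + ((i.1:ℤ) + 1)) ((N : ℤ) * m1 + ((i.1:ℤ) + 1)) -
                Gi.E ((N : ℤ) * n1 + ((j.1:ℤ) + 1)) ((N : ℤ) * n1 + ((j.1:ℤ) + 1)),
                Gi.diff_mem _ _⟩ :=
            Cov.atE_congr m (by rw [hval, ha, hb])
          by_cases hm : m = 0
          · subst hm
            rw [h1, rel3' Cov hq hσ hσs hσ_lin i j m1 n1]
            refine W.add_mem ?_ ?_
            · exact hdiag_small i j
            · apply W.smul_mem
              have hfam : slCovFam Gi q N Cov (Sum.inr (Sum.inr 0))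
                  = kprimeElt Gi q N Cov := rfl
              rw [← hfam]
              exact Submodule.subset_span ⟨Sum.inr (Sum.inr 0), rfl⟩
          · rw [h1, rel2' Cov hq hq' hσ hσs hσ_lin i j m m1 n1 hm]
            have hidx1 : ¬(i = i ∧ m = 0 ∧ (0:ℤ) = 0) := fun h => hm h.2.1
            have hidx2 : ¬(j = j ∧ m = 0 ∧ (0:ℤ) = 0) := fun h => hm h.2.1
            refine W.sub_mem (W.smul_mem _ ?_) (W.smul_mem _ ?_)
            · exact Submodule.subset_span ⟨Sum.inl ⟨(i, i, m, 0), hidx1⟩, rfl⟩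
            · exact Submodule.subset_span ⟨Sum.inl ⟨(j, j, m, 0), hidx2⟩, rfl⟩
    rw [Submodule.mem_comap, Cov.atEL_apply] at hx2
    exact hx2

end SpanSec
/-- relations and a basis for `ŝl_∞[ℤ]`:
(1) `(E_{Nm₁+i,Nn₁+j} ⊗ t^{m₀})‾ = q^{-m₀n₁} e_{i,j}(m₀, m₁-n₁)` whenever
`(i,m₁) ≠ (j,n₁)`;
(2) `((E_{Nm₁+i,Nm₁+i} - E_{Nn₁+j,Nn₁+j}) ⊗ t^{m₀})‾` equals
`q^{-m₀m₁} e_{i,i}(m₀,0) - q^{-m₀n₁} e_{j,j}(m₀,0)` when `m₀ ≠ 0` and equals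
`(E_{i,i}-E_{j,j})‾ + (m₁-n₁)k'` when `m₀ = 0`;
(3) the `e_{i,j}(m₀,m₁)` with `(i-j,m₀,m₁) ≠ (0,0,0)`, the `h̄_r` (`1 ≤ r ≤ N-1`),
`k'` and `k` form a `ℂ`-basis of `ŝl_∞[ℤ]`. -/
theorem slInfZ_relations_and_basis (q : ℂ) (hq : q ≠ 0)
    (hq' : ∀ n : ℕ, n ≠ 0 → q ^ n ≠ 1) (N : ℕ) (hN : 2 ≤ N)
    (g : Type*) [LieRing g] [LieAlgebra ℂ g] (Gi : GlInf g)
    (σg : ℤ → g → g) (hσ_lin : ∀ r : ℤ, IsLinearMap ℂ (σg r))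
    (hσ : ∀ r m n : ℤ, σg r (Gi.E m n) = Gi.E (m + N * r) (n + N * r))
    (σs : ℤ → ↥(LieAlgebra.derivedSeries ℂ g 1) → ↥(LieAlgebra.derivedSeries ℂ g 1))
    (hσs : ∀ (r : ℤ) (x : ↥(LieAlgebra.derivedSeries ℂ g 1)), (σs r x : g) = σg r (x : g))
    (B : ↥(LieAlgebra.derivedSeries ℂ g 1) → ↥(LieAlgebra.derivedSeries ℂ g 1) → ℂ)
    (hB : ∀ x y : ↥(LieAlgebra.derivedSeries ℂ g 1), B x y = Gi.form (x : g) (y : g))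
    (C : Type*) [LieRing C] [LieAlgebra ℂ C]
    (Cov : CovZAlg q ↥(LieAlgebra.derivedSeries ℂ g 1) B σs C) :
    (∀ (i j : Fin N) (m0 m1 n1 : ℤ) (hne : ¬(i = j ∧ m1 = n1)),
      Cov.atE m0 ⟨Gi.E ((N : ℤ) * m1 + (i.1 + 1)) ((N : ℤ) * n1 + (j.1 + 1)),
          Gi.offdiag_mem (shiftIdx_ne i.isLt j.isLt
            (fun hc => hne ⟨Fin.ext hc.1, hc.2⟩))⟩
        = q ^ (-(m0 * n1)) • eElt Gi q N Cov i j m0 (m1 - n1)) ∧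
    (∀ (i j : Fin N) (m0 m1 n1 : ℤ), ¬(i = j ∧ m1 = n1) → m0 ≠ 0 →
      Cov.atE m0 ⟨Gi.E ((N : ℤ) * m1 + (i.1 + 1)) ((N : ℤ) * m1 + (i.1 + 1)) -
          Gi.E ((N : ℤ) * n1 + (j.1 + 1)) ((N : ℤ) * n1 + (j.1 + 1)), Gi.diff_mem _ _⟩
        = q ^ (-(m0 * m1)) • eElt Gi q N Cov i i m0 0
          - q ^ (-(m0 * n1)) • eElt Gi q N Cov j j m0 0) ∧
    (∀ (i j : Fin N) (m1 n1 : ℤ), ¬(i = j ∧ m1 = n1) →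
      Cov.atE 0 ⟨Gi.E ((N : ℤ) * m1 + (i.1 + 1)) ((N : ℤ) * m1 + (i.1 + 1)) -
          Gi.E ((N : ℤ) * n1 + (j.1 + 1)) ((N : ℤ) * n1 + (j.1 + 1)), Gi.diff_mem _ _⟩
        = Cov.atE 0 ⟨Gi.E ((i.1 : ℤ) + 1) ((i.1 : ℤ) + 1) -
            Gi.E ((j.1 : ℤ) + 1) ((j.1 : ℤ) + 1), Gi.diff_mem _ _⟩
          + ((m1 - n1 : ℤ) : ℂ) • kprimeElt Gi q N Cov) ∧
    (LinearIndependent ℂ (slCovFam Gi q N Cov) ∧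
      Submodule.span ℂ (Set.range (slCovFam Gi q N Cov)) = ⊤) := by
  refine ⟨?_, ?_, ?_, ?_, ?_⟩
  · intro i j m0 m1 n1 hne
    exact rel1' Cov hq hσ hσs i j m0 m1 n1 hne
  · intro i j m0 m1 n1 _ hm0
    exact rel2' Cov hq hq' hσ hσs hσ_lin i j m0 m1 n1 hm0
  · intro i j m1 n1 _
    exact rel3' Cov hq hσ hσs hσ_lin i j m1 n1
  · exact slCov_indep Cov hq hq' hN hσ hσs hσ_lin
  · exact slCov_span Cov hq hq' hN hσ hσs hσ_lin
end

section
/- For any 1 ≤ i < j ≤ N and m ∈ ℤ, the subspace Â_{i,j}(m) of ŝl_N(ℂ_q) spanned by the elements E_{i,j}t₀^{n}t₁^{m}, E_{j,i}t₀^{n}t₁^{−m}, q^{mn}E_{i,i}t₀^{n} − E_{j,j}t₀^{n} + mδ_{n,0}k₁, and k₀ (n ∈ ℤ) is a Lie subalgebra of ŝl_N(ℂ_q), and the assignment q^{mn}E_{i,j}t₀^{n}t₁^{m} ↦ e⊗t^n, E_{j,i}t₀^{n}t₁^{−m} ↦ f⊗t^n, q^{mn}E_{i,i}t₀^{n} −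 E_{j,j}t₀^{n} + mδ_{n,0}k₁ ↦ h⊗t^n, k₀ ↦ k (n ∈ ℤ) extends to a Lie algebra isomorphism from Â_{i,j}(m) onto ŝl₂. -/
/-- The canonical basis family of `ŝl_N(ℂ_q)`. -/
def slNCqFam {N : ℕ} {L : Type*} [AddCommGroup L]
    (E : Fin N → Fin N → ℤ → ℤ → L) (k0 k1 : L) : slNCqIdx N → L :=
  Sum.elim (fun p => E p.1.1 p.1.2.1 p.1.2.2.1 p.1.2.2.2)
    (Sum.elim
      (fun r => E ⟨r.1, by have := r.isLt; omega⟩ ⟨r.1, by have := r.isLt; omega⟩ 0 0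
        - E ⟨r.1 + 1, by have := r.isLt; omega⟩ ⟨r.1 + 1, by have := r.isLt; omega⟩ 0 0)
      ![k0, k1])

/-- An incarnation of the Lie algebra `ŝl_N(ℂ_q) = sl_N(ℂ_q) ⊕ ℂk₀ ⊕ ℂk₁`:
a complex Lie algebra with central elements `k₀, k₁` and elements `E i j m₀ m₁`
(representing `E_{i,j} t₀^{m₀} t₁^{m₁}`, with the convention that `E i i 0 0` denotes
the traceless projection `E_{i,i} - (1/N)·I_N`, so that
`E i i 0 0 - E j j 0 0 = E_{i,i} - E_{j,j}`), satisfying the quantum torus commutation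
relations; the elements `E_{i,j}t₀^{m₀}t₁^{m₁}` with `(i-j,m₀,m₁) ≠ (0,0,0)` together with
`E_{r,r}-E_{r+1,r+1}` (`1 ≤ r ≤ N-1`), `k₀` and `k₁` form a basis. -/
structure SlNCq (q : ℂ) (N : ℕ) (L : Type*) [LieRing L] [LieAlgebra ℂ L] where
  E : Fin N → Fin N → ℤ → ℤ → L
  k0 : L
  k1 : L
  k0_central : ∀ x : L, ⁅k0, x⁆ = 0
  k1_central : ∀ x : L, ⁅k1, x⁆ = 0
  traceless : (∑ i : Fin N, E i i 0 0) = 0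
  bracket_E : ∀ (i j k l : Fin N) (m0 m1 n0 n1 : ℤ),
    ⁅E i j m0 m1, E k l n0 n1⁆ =
      ((if j = k then q ^ (m1 * n0) • E i l (m0 + n0) (m1 + n1) else 0)
        - (if i = l then q ^ (n1 * m0) • E k j (m0 + n0) (m1 + n1) else 0))
      + (if j = k ∧ i = l ∧ m0 + n0 = 0 ∧ m1 + n1 = 0
          then q ^ (m1 * n0) • ((m0 : ℂ) • k0 + (m1 : ℂ) • k1) else 0)
  basis_indep : LinearIndependent ℂ (slNCqFam E k0 k1)
  basis_span : Submodule.span ℂ (Set.range (slNCqFam E k0 k1)) = ⊤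

section Modules

variable {q : ℂ} {N : ℕ} {L : Type*} [LieRing L] [LieAlgebra ℂ L]

/-- A module for `ŝl_N(ℂ_q)` is *restricted* if for every vector `w` and all `i, j, m₁`,
`(E_{i,j} t₀^{m₀} t₁^{m₁}) w = 0` for all sufficiently large `m₀`. -/
def SlNCq.IsRestricted (S : SlNCq q N L) (W : Type*) [AddCommGroup W]
    [LieRingModule L W] : Prop :=
  ∀ (w : W) (i j : Fin N) (m1 : ℤ), ∃ M : ℤ, ∀ m0 : ℤ, M ≤ m0 → ⁅S.E i j m0 m1, w⁆ = 0

/-- A module for `ŝl_N(ℂ_q)` is *integrable* if every `E_{i,j} t₀^{m₀} t₁^{m₁}` with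
`i ≠ j` acts locally nilpotently. -/
def SlNCq.IsIntegrable (S : SlNCq q N L) (W : Type*) [AddCommGroup W]
    [LieRingModule L W] : Prop :=
  ∀ (i j : Fin N), i ≠ j → ∀ (m0 m1 : ℤ) (w : W),
    ∃ n : ℕ, ((fun v : W => ⁅S.E i j m0 m1, v⁆)^[n]) w = 0

/-- A module has *level* `ℓ` if `k₀` acts as the scalar `ℓ`. -/
def SlNCq.HasLevel (S : SlNCq q N L) (W : Type*) [AddCommGroup W] [Module ℂ W]
    [LieRingModule L W] (ℓ : ℂ) : Prop :=
  ∀ w : W, ⁅S.k0, w⁆ = ℓ • w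

end Modules

/-- An incarnation of the affine Lie algebra `ŝl₂ = (sl₂ ⊗ ℂ[t,t⁻¹]) ⊕ ℂk`: a complex Lie
algebra with basis `e ⊗ tⁿ, f ⊗ tⁿ, h ⊗ tⁿ (n ∈ ℤ)` and `k`, with `k` central and the
standard affine `sl₂` commutation relations (trace form `tr(ef)=1`, `tr(h²)=2`). -/
structure AffineSl2 (A : Type*) [LieRing A] [LieAlgebra ℂ A] where
  e : ℤ → A
  f : ℤ → A
  h : ℤ → A
  k : A
  k_central : ∀ x : A, ⁅k, x⁆ = 0
  bracket_ef : ∀ m n : ℤ, ⁅e m, f n⁆ = h (m + n) + (if m + n = 0 then (m : ℂ) else 0) • k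
  bracket_he : ∀ m n : ℤ, ⁅h m, e n⁆ = (2 : ℂ) • e (m + n)
  bracket_hf : ∀ m n : ℤ, ⁅h m, f n⁆ = (-2 : ℂ) • f (m + n)
  bracket_hh : ∀ m n : ℤ, ⁅h m, h n⁆ = (if m + n = 0 then (2 * m : ℂ) else 0) • k
  bracket_ee : ∀ m n : ℤ, ⁅e m, e n⁆ = 0
  bracket_ff : ∀ m n : ℤ, ⁅f m, f n⁆ = 0
  basis_indep : LinearIndependent ℂ
    (Sum.elim (Sum.elim e f) (Sum.elim h ![k]) :
      ((ℤ ⊕ ℤ) ⊕ (ℤ ⊕ Fin 1)) → A)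
  basis_span : Submodule.span ℂ
    (Set.range (Sum.elim (Sum.elim e f) (Sum.elim h ![k]) :
      ((ℤ ⊕ ℤ) ⊕ (ℤ ⊕ Fin 1)) → A)) = ⊤

/-- The spanning set of the subalgebra `Â_{i,j}(m)` of `ŝl_N(ℂ_q)`. -/
def hatA {q : ℂ} {N : ℕ} {L : Type*} [LieRing L] [LieAlgebra ℂ L]
    (S : SlNCq q N L) (i j : Fin N) (m : ℤ) : Set L :=
  {x | (∃ n : ℤ, x = S.E i j n m) ∨ (∃ n : ℤ, x = S.E j i n (-m)) ∨
    (∃ n : ℤ, x = q ^ (m * n) • S.E i i n 0 - S.E j j n 0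
      + (if n = 0 then (m : ℂ) • S.k1 else 0)) ∨ x = S.k0}

namespace HatAwork

variable {q : ℂ} {N : ℕ} {L : Type*} [LieRing L] [LieAlgebra ℂ L]

noncomputable def eL (S : SlNCq q N L) (i j : Fin N) (m n : ℤ) : L :=
  q ^ (m * n) • S.E i j n m

noncomputable def fL (S : SlNCq q N L) (i j : Fin N) (m n : ℤ) : L :=
  S.E j i n (-m)

noncomputable def hL (S : SlNCq q N L) (i j : Fin N) (m n : ℤ) : L :=
  q ^ (m * n) • S.E i i n 0 - S.E j j n 0 + (if n = 0 then (m : ℂ) • S.k1 else 0)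

variable (S : SlNCq q N L) (i j : Fin N) (m : ℤ) (hq : q ≠ 0) (hij : i ≠ j)

include hq hij in
lemma lie_eL_fL (a b : ℤ) :
    ⁅eL S i j m a, fL S i j m b⁆
      = hL S i j m (a + b) + (if a + b = 0 then (a : ℂ) else 0) • S.k0 := by
  unfold eL fL hL
  rw [smul_lie, S.bracket_E]
  simp only [if_pos rfl, hij, and_true, true_and, add_neg_cancel, if_true, and_self]
  rcases eq_or_ne (a + b) 0 with h | h
  · simp only [h, ite_true, smul_add, smul_sub, smul_smul, ← zpow_add₀ hq]
    have e1 : m * a + m * b = 0 := by rw [← mul_add, h, mul_zero]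
    have e2 : m * a + -m * a = 0 := by ring
    have e3 : q ^ (m * a) * (q ^ (m * b) * (a : ℂ)) = (a : ℂ) := by
      rw [← mul_assoc, ← zpow_add₀ hq, e1, zpow_zero, one_mul]
    have e4 : q ^ (m * a) * (q ^ (m * b) * (m : ℂ)) = (m : ℂ) := by
      rw [← mul_assoc, ← zpow_add₀ hq, e1, zpow_zero, one_mul]
    rw [e3, e4, e1, e2, mul_zero]
    simp only [zpow_zero, one_smul]
    abel
  · simp only [h, ite_false, smul_add, smul_sub, smul_smul, smul_zero, add_zero,
      zero_smul, ← zpow_add₀ hq]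
    have e1 : m * a + m * b = m * (a + b) := by ring
    have e2 : m * a + -m * a = 0 := by ring
    rw [e1, e2, zpow_zero, one_smul]

include hq hij in
lemma lie_hL_eL (a b : ℤ) :
    ⁅hL S i j m a, eL S i j m b⁆ = (2 : ℂ) • eL S i j m (a + b) := by
  have hij' : j ≠ i := hij.symm
  have hδ : ∀ z : L, ⁅(if a = 0 then (m : ℂ) • S.k1 else 0), z⁆ = 0 := by
    intro z; split_ifs
    · rw [smul_lie, S.k1_central, smul_zero]
    · rw [zero_lie]
  unfold hL eL
  simp only [add_lie, sub_lie, hδ, add_zero, smul_lie, lie_smul, S.bracket_E, hij, hij',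
    ite_true, ite_false, if_pos rfl, false_and, and_false, if_false, zero_mul, zpow_zero,
    one_smul, zero_add, sub_zero, zero_sub, smul_neg, sub_neg_eq_add, smul_smul,
    ← zpow_add₀ hq]
  have e1 : m * b + m * a = m * (a + b) := by ring
  rw [smul_add, smul_smul, ← zpow_add₀ hq, e1, ← two_smul ℂ, smul_smul]

include hq hij in
lemma lie_hL_fL (a b : ℤ) :
    ⁅hL S i j m a, fL S i j m b⁆ = (-2 : ℂ) • fL S i j m (a + b) := by
  have hij' : j ≠ i := hij.symm
  have hδ : ∀ z : L, ⁅(if a = 0 then (m : ℂ) • S.k1 else 0), z⁆ = 0 := by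
    intro z; split_ifs
    · rw [smul_lie, S.k1_central, smul_zero]
    · rw [zero_lie]
  unfold hL fL
  simp only [add_lie, sub_lie, hδ, add_zero, smul_lie, lie_smul, S.bracket_E, hij, hij',
    ite_true, ite_false, if_pos rfl, false_and, and_false, if_false, zero_mul, zpow_zero,
    one_smul, zero_add, sub_zero, zero_sub, smul_neg, sub_neg_eq_add, smul_smul,
    ← zpow_add₀ hq]
  have e2 : m * a + -m * a = 0 := by ring
  rw [e2]
  simp only [zpow_zero, one_smul]
  module

include hij in
lemma lie_eL_eL (a b : ℤ) : ⁅eL S i j m a, eL S i j m b⁆ = 0 := by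
  have hij' : j ≠ i := hij.symm
  unfold eL
  simp only [smul_lie, lie_smul, S.bracket_E, hij, hij', ite_false, false_and, if_false,
    sub_zero, zero_sub, add_zero, sub_self, smul_zero, zero_add, neg_zero]

include hij in
lemma lie_fL_fL (a b : ℤ) : ⁅fL S i j m a, fL S i j m b⁆ = 0 := by
  have hij' : j ≠ i := hij.symm
  unfold fL
  simp only [smul_lie, lie_smul, S.bracket_E, hij, hij', ite_false, false_and, if_false,
    sub_zero, zero_sub, add_zero, sub_self, smul_zero, zero_add, neg_zero]

include hq hij in
lemma lie_hL_hL (a b : ℤ) :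
    ⁅hL S i j m a, hL S i j m b⁆ = (if a + b = 0 then (2 * a : ℂ) else 0) • S.k0 := by
  have hij' : j ≠ i := hij.symm
  have hδ : ∀ z : L, ⁅(if a = 0 then (m : ℂ) • S.k1 else 0), z⁆ = 0 := by
    intro z; split_ifs
    · rw [smul_lie, S.k1_central, smul_zero]
    · rw [zero_lie]
  have hδ' : ∀ z : L, ⁅z, (if b = 0 then (m : ℂ) • S.k1 else 0)⁆ = 0 := by
    intro z; split_ifs
    · rw [lie_smul, ← lie_skew, S.k1_central, neg_zero, smul_zero]
    · rw [lie_zero]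
  unfold hL
  simp only [add_lie, lie_add, sub_lie, lie_sub, hδ, hδ', add_zero, smul_lie, lie_smul,
    S.bracket_E, hij, hij', ite_true, ite_false, if_pos rfl, false_and, and_false, if_false,
    true_and, zero_mul, zpow_zero, one_smul, zero_add, add_zero, sub_zero, zero_sub,
    sub_self, zero_smul, smul_zero, neg_zero, Int.cast_zero, smul_smul, ← zpow_add₀ hq]
  rcases eq_or_ne (a + b) 0 with h | h
  · simp only [h, ite_true, and_self, true_and, and_true, one_mul, sub_neg_eq_add]
    have e1 : m * b + m * a = 0 := by rw [← mul_add, show b + a = 0 by omega, mul_zero]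
    rw [e1, zpow_zero, one_smul, show (2 * a : ℂ) = (a : ℂ) + (a : ℂ) by ring, add_smul]
  · simp only [h, false_and, and_false, ite_false, smul_zero, zero_smul, add_zero, zero_add,
      neg_zero, sub_zero, zero_sub, sub_self]


lemma telescope {M : Type*} [AddCommGroup M] (g : ℕ → M) (a : ℕ) :
    ∀ b, a ≤ b → ∑ r ∈ Finset.Ico a b, (g r - g (r + 1)) = g a - g b := by
  intro b
  induction b with
  | zero => intro h; simp [Nat.le_zero.mp h]
  | succ b ih =>
    intro h
    rcases Nat.lt_or_ge a (b + 1) with h' | h'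
    · have hab : a ≤ b := by omega
      rw [Finset.sum_Ico_succ_top hab, ih hab]
      abel
    · have hE : a = b + 1 := by omega
      simp [hE]

end HatAwork

/-- The inverse assignment on the basis of `ŝl_N(ℂ_q)`. -/
noncomputable def psiT {q : ℂ} {N : ℕ} {A : Type*} [LieRing A] [LieAlgebra ℂ A]
    (T : AffineSl2 A) (i j : Fin N) (m : ℤ) : slNCqIdx N → A :=
  Sum.elim
    (fun p =>
      if p.1.1 = i ∧ p.1.2.1 = j ∧ p.1.2.2.2 = m then
        q ^ (-(m * p.1.2.2.1)) • T.e p.1.2.2.1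
      else if p.1.1 = j ∧ p.1.2.1 = i ∧ p.1.2.2.2 = -m then T.f p.1.2.2.1
      else if p.1.1 = i ∧ p.1.2.1 = i ∧ p.1.2.2.2 = 0 then
        q ^ (-(m * p.1.2.2.1)) • T.h p.1.2.2.1
      else 0)
    (Sum.elim (fun r => if (r : ℕ) = (i : ℕ) then T.h 0 else 0)
      (fun c => if c = 0 then T.k else 0))

/-- for `1 ≤ i < j ≤ N` and `m ∈ ℤ`, the span `Â_{i,j}(m)` of the elements
`E_{i,j}t₀ⁿt₁^m`, `E_{j,i}t₀ⁿt₁^{-m}`, `q^{mn}E_{i,i}t₀ⁿ - E_{j,j}t₀ⁿ + mδ_{n,0}k₁` and `k₀`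
is a Lie subalgebra of `ŝl_N(ℂ_q)`, and the indicated assignment identifies it with the
affine Lie algebra `ŝl₂` (stated via the inverse map: an injective Lie algebra morphism
from `ŝl₂` onto `Â_{i,j}(m)`). -/
theorem hatA_subalgebra_iso_affine_sl2 (q : ℂ) (hq : q ≠ 0)
    (hq' : ∀ n : ℕ, n ≠ 0 → q ^ n ≠ 1) (N : ℕ) (hN : 2 ≤ N)
    (L : Type*) [LieRing L] [LieAlgebra ℂ L] (S : SlNCq q N L)
    (i j : Fin N) (hij : i < j) (m : ℤ)
    (A : Type*) [LieRing A] [LieAlgebra ℂ A] (T : AffineSl2 A) :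
    (∀ x ∈ Submodule.span ℂ (hatA S i j m), ∀ y ∈ Submodule.span ℂ (hatA S i j m),
      ⁅x, y⁆ ∈ Submodule.span ℂ (hatA S i j m)) ∧
    ∃ Φ : A →ₗ⁅ℂ⁆ L, Function.Injective Φ ∧
      LinearMap.range Φ.toLinearMap = Submodule.span ℂ (hatA S i j m) ∧
      (∀ n : ℤ, Φ (T.e n) = q ^ (m * n) • S.E i j n m) ∧
      (∀ n : ℤ, Φ (T.f n) = S.E j i n (-m)) ∧
      (∀ n : ℤ, Φ (T.h n) = q ^ (m * n) • S.E i i n 0 - S.E j j n 0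
        + (if n = 0 then (m : ℂ) • S.k1 else 0)) ∧
      Φ T.k = S.k0 := by
  classical
  have hij' : i ≠ j := Fin.ne_of_lt hij
  -- the basis of A
  let bA : Module.Basis ((ℤ ⊕ ℤ) ⊕ (ℤ ⊕ Fin 1)) ℂ A := Module.Basis.mk T.basis_indep (by rw [T.basis_span])
  let tgt : ((ℤ ⊕ ℤ) ⊕ (ℤ ⊕ Fin 1)) → L :=
    Sum.elim (Sum.elim (HatAwork.eL S i j m) (HatAwork.fL S i j m))
      (Sum.elim (HatAwork.hL S i j m) ![S.k0])
  let Φ₀ : A →ₗ[ℂ] L := bA.constr ℂ tgt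
  have hbe : ∀ n : ℤ, bA (Sum.inl (Sum.inl n)) = T.e n := fun n => by
    simp [bA, Module.Basis.mk_apply]
  have hbf : ∀ n : ℤ, bA (Sum.inl (Sum.inr n)) = T.f n := fun n => by
    simp [bA, Module.Basis.mk_apply]
  have hbh : ∀ n : ℤ, bA (Sum.inr (Sum.inl n)) = T.h n := fun n => by
    simp [bA, Module.Basis.mk_apply]
  have hbk : bA (Sum.inr (Sum.inr 0)) = T.k := by
    simp [bA, Module.Basis.mk_apply]
  have he : ∀ n : ℤ, Φ₀ (T.e n) = HatAwork.eL S i j m n := fun n => by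
    rw [← hbe n]; exact bA.constr_basis ℂ tgt (Sum.inl (Sum.inl n))
  have hf : ∀ n : ℤ, Φ₀ (T.f n) = HatAwork.fL S i j m n := fun n => by
    rw [← hbf n]; exact bA.constr_basis ℂ tgt (Sum.inl (Sum.inr n))
  have hh : ∀ n : ℤ, Φ₀ (T.h n) = HatAwork.hL S i j m n := fun n => by
    rw [← hbh n]; exact bA.constr_basis ℂ tgt (Sum.inr (Sum.inl n))
  have hk : Φ₀ T.k = S.k0 := by
    rw [← hbk]; exact bA.constr_basis ℂ tgt (Sum.inr (Sum.inr 0))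
  have hmaplie : ∀ x y : A, Φ₀ ⁅x, y⁆ = ⁅Φ₀ x, Φ₀ y⁆ := by
    let B1 : A →ₗ[ℂ] A →ₗ[ℂ] L := LinearMap.mk₂ ℂ (fun x y => Φ₀ ⁅x, y⁆)
      (fun x x' y => by simp only [add_lie, map_add]) (fun c x y => by simp only [smul_lie, map_smul])
      (fun x y y' => by simp only [lie_add, map_add]) (fun c x y => by simp only [lie_smul, map_smul])
    let B2 : A →ₗ[ℂ] A →ₗ[ℂ] L := LinearMap.mk₂ ℂ (fun x y => ⁅Φ₀ x, Φ₀ y⁆)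
      (fun x x' y => by simp only [map_add, add_lie]) (fun c x y => by simp only [map_smul, smul_lie])
      (fun x y y' => by simp only [map_add, lie_add]) (fun c x y => by simp only [map_smul, lie_smul])
    have hBB : B1 = B2 := by
      apply bA.ext; intro p; apply bA.ext; intro p'
      show Φ₀ ⁅bA p, bA p'⁆ = ⁅Φ₀ (bA p), Φ₀ (bA p')⁆
      obtain ((n | n) | (n | c)) := p
      · obtain ((n' | n') | (n' | c')) := p'
        · rw [hbe, hbe, T.bracket_ee, map_zero, he, he,
            HatAwork.lie_eL_eL S i j m hij']
        · rw [hbe, hbf, T.bracket_ef, map_add, map_smul, hh, hk, he, hf,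
            HatAwork.lie_eL_fL S i j m hq hij']
        · rw [hbe, hbh, ← lie_skew, T.bracket_he, map_neg, map_smul, he, he, hh,
            ← lie_skew (HatAwork.eL S i j m n) (HatAwork.hL S i j m n'),
            HatAwork.lie_hL_eL S i j m hq hij']
        · obtain rfl : c' = 0 := Subsingleton.elim c' 0
          rw [hbe, hbk, ← lie_skew, T.k_central, neg_zero, map_zero, he, hk,
            ← lie_skew, S.k0_central, neg_zero]
      · obtain ((n' | n') | (n' | c')) := p'
        · rw [hbf, hbe, ← lie_skew, T.bracket_ef, map_neg, map_add, map_smul, hh, hk, hf, he,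
            ← lie_skew (HatAwork.fL S i j m n) (HatAwork.eL S i j m n'),
            HatAwork.lie_eL_fL S i j m hq hij']
        · rw [hbf, hbf, T.bracket_ff, map_zero, hf, hf,
            HatAwork.lie_fL_fL S i j m hij']
        · rw [hbf, hbh, ← lie_skew, T.bracket_hf, map_neg, map_smul, hf, hf, hh,
            ← lie_skew (HatAwork.fL S i j m n) (HatAwork.hL S i j m n'),
            HatAwork.lie_hL_fL S i j m hq hij']
        · obtain rfl : c' = 0 := Subsingleton.elim c' 0
          rw [hbf, hbk, ← lie_skew, T.k_central, neg_zero, map_zero, hf, hk,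
            ← lie_skew, S.k0_central, neg_zero]
      · obtain ((n' | n') | (n' | c')) := p'
        · rw [hbh, hbe, T.bracket_he, map_smul, he, he, hh,
            HatAwork.lie_hL_eL S i j m hq hij']
        · rw [hbh, hbf, T.bracket_hf, map_smul, hf, hf, hh,
            HatAwork.lie_hL_fL S i j m hq hij']
        · rw [hbh, hbh, T.bracket_hh, map_smul, hk, hh, hh,
            HatAwork.lie_hL_hL S i j m hq hij']
        · obtain rfl : c' = 0 := Subsingleton.elim c' 0
          rw [hbh, hbk, ← lie_skew, T.k_central, neg_zero, map_zero, hh, hk,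
            ← lie_skew, S.k0_central, neg_zero]
      · obtain rfl : c = 0 := Subsingleton.elim c 0
        rw [hbk, T.k_central, map_zero, hk, S.k0_central]
    intro x y
    exact DFunLike.congr_fun (DFunLike.congr_fun hBB x) y
  -- the basis of L and the inverse linear map
  let bL : Module.Basis (slNCqIdx N) ℂ L := Module.Basis.mk S.basis_indep (by rw [S.basis_span])
  let Ψ : L →ₗ[ℂ] A := bL.constr ℂ (psiT (q := q) T i j m)
  have hijn : (i : ℕ) < (j : ℕ) := hij
  have hbE : ∀ (a b : Fin N) (c d : ℤ) (h : ¬(a = b ∧ c = 0 ∧ d = 0)),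
      Ψ (S.E a b c d) = psiT (q := q) T i j m (Sum.inl ⟨(a, b, c, d), h⟩) := by
    intro a b c d h
    have hx : bL (Sum.inl ⟨(a, b, c, d), h⟩ : slNCqIdx N) = S.E a b c d := by
      exact (Module.Basis.mk_apply _ _ _).trans rfl
    rw [← hx]
    exact bL.constr_basis ℂ _ _
  have hΨe : ∀ n : ℤ, Ψ (HatAwork.eL S i j m n) = T.e n := by
    intro n
    rw [show HatAwork.eL S i j m n = q ^ (m * n) • S.E i j n m from rfl, map_smul,
      hbE i j n m (fun h => hij' h.1)]
    simp [psiT, smul_smul, mul_inv_cancel₀ (zpow_ne_zero (m * n) hq), ← zpow_add₀ hq]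
  have hΨf : ∀ n : ℤ, Ψ (HatAwork.fL S i j m n) = T.f n := by
    intro n
    rw [show HatAwork.fL S i j m n = S.E j i n (-m) from rfl,
      hbE j i n (-m) (fun h => hij' h.1.symm)]
    simp [psiT, hij', hij'.symm]
  have hΨk1 : Ψ S.k1 = 0 := by
    have hx : bL (Sum.inr (Sum.inr 1) : slNCqIdx N) = S.k1 := by
      exact (Module.Basis.mk_apply _ _ _).trans rfl
    rw [← hx]
    erw [bL.constr_basis]
    simp [psiT]
  have hΨk0 : Ψ S.k0 = T.k := by
    have hx : bL (Sum.inr (Sum.inr 0) : slNCqIdx N) = S.k0 := by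
      exact (Module.Basis.mk_apply _ _ _).trans rfl
    rw [← hx]
    erw [bL.constr_basis]
    simp [psiT]
  have hΨh : ∀ n : ℤ, Ψ (HatAwork.hL S i j m n) = T.h n := by
    intro n
    rcases eq_or_ne n 0 with rfl | hn
    · have h0 : HatAwork.hL S i j m 0 = (S.E i i 0 0 - S.E j j 0 0) + (m : ℂ) • S.k1 := by
        simp [HatAwork.hL]
      set g : ℕ → L := fun r => if h : r < N then S.E ⟨r, h⟩ ⟨r, h⟩ 0 0 else 0 with hgdef
      have hg : ∑ r ∈ Finset.Ico (i : ℕ) (j : ℕ), (g r - g (r + 1))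
          = S.E i i 0 0 - S.E j j 0 0 := by
        rw [HatAwork.telescope g (i : ℕ) (j : ℕ) (le_of_lt hijn)]
        simp only [hgdef]
        rw [dif_pos i.isLt, dif_pos j.isLt, Fin.eta, Fin.eta]
      have hterm : ∀ r ∈ Finset.Ico (i : ℕ) (j : ℕ),
          Ψ (g r - g (r + 1)) = if r = (i : ℕ) then T.h 0 else 0 := by
        intro r hr
        obtain ⟨h1, h2⟩ := Finset.mem_Ico.mp hr
        have hrN : r < N - 1 := by have := j.isLt; omega
        have hx : bL (Sum.inr (Sum.inl ⟨r, hrN⟩) : slNCqIdx N) = g r - g (r + 1) := by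
          refine (Module.Basis.mk_apply _ _ _).trans ?_
          simp only [slNCqFam, Sum.elim_inr, Sum.elim_inl, hgdef]
          rw [dif_pos (by omega : r < N), dif_pos (by omega : r + 1 < N)]
        rw [← hx]
        erw [bL.constr_basis]
        simp [psiT]
      have hD : Ψ (S.E i i 0 0 - S.E j j 0 0) = T.h 0 := by
        rw [← hg, map_sum, Finset.sum_congr rfl hterm,
          Finset.sum_ite_eq' _ ((i : ℕ)) (fun _ => T.h 0),
          if_pos (Finset.mem_Ico.mpr ⟨le_refl _, hijn⟩)]
      rw [h0, map_add, map_smul, hΨk1, smul_zero, add_zero, hD]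
    · have h1 : HatAwork.hL S i j m n = q ^ (m * n) • S.E i i n 0 - S.E j j n 0 := by
        simp [HatAwork.hL, hn]
      rw [h1, map_sub, map_smul, hbE i i n 0 (fun h => hn h.2.1),
        hbE j j n 0 (fun h => hn h.2.1)]
      simp [psiT, hij', hij'.symm, smul_smul, mul_inv_cancel₀ (zpow_ne_zero (m * n) hq), ← zpow_add₀ hq]
  have hΨΦ : ∀ x : A, Ψ (Φ₀ x) = x := by
    have hcomp : Ψ.comp Φ₀ = LinearMap.id := by
      apply bA.ext; intro p
      obtain ((n | n) | (n | c)) := p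
      · rw [LinearMap.comp_apply, LinearMap.id_apply, hbe, he, hΨe]
      · rw [LinearMap.comp_apply, LinearMap.id_apply, hbf, hf, hΨf]
      · rw [LinearMap.comp_apply, LinearMap.id_apply, hbh, hh, hΨh]
      · obtain rfl : c = 0 := Subsingleton.elim c 0
        rw [LinearMap.comp_apply, LinearMap.id_apply, hbk, hk, hΨk0]
    intro x
    have := DFunLike.congr_fun hcomp x
    simpa using this
  have hinj : Function.Injective Φ₀ := Function.LeftInverse.injective hΨΦ
  have hrange : LinearMap.range Φ₀ = Submodule.span ℂ (hatA S i j m) := by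
    rw [show Φ₀ = bA.constr ℂ tgt from rfl, Module.Basis.constr_range]
    apply le_antisymm
    · rw [Submodule.span_le]
      rintro x ⟨p, rfl⟩
      obtain ((n | n) | (n | c)) := p
      · show q ^ (m * n) • S.E i j n m ∈ _
        exact Submodule.smul_mem _ _ (Submodule.subset_span (Or.inl ⟨n, rfl⟩))
      · exact Submodule.subset_span (Or.inr (Or.inl ⟨n, rfl⟩))
      · exact Submodule.subset_span (Or.inr (Or.inr (Or.inl ⟨n, rfl⟩)))
      · obtain rfl : c = 0 := Subsingleton.elim c 0
        exact Submodule.subset_span (Or.inr (Or.inr (Or.inr rfl)))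
    · rw [Submodule.span_le]
      rintro x hx
      obtain (⟨n, rfl⟩ | ⟨n, rfl⟩ | ⟨n, rfl⟩ | rfl) := hx
      · have hx2 : S.E i j n m = q ^ (-(m * n)) • tgt (Sum.inl (Sum.inl n)) := by
          show S.E i j n m = q ^ (-(m * n)) • (q ^ (m * n) • S.E i j n m)
          rw [smul_smul, ← zpow_add₀ hq, neg_add_cancel, zpow_zero, one_smul]
        rw [hx2]
        exact Submodule.smul_mem _ _
          (Submodule.subset_span ⟨Sum.inl (Sum.inl n), rfl⟩)
      · exact Submodule.subset_span ⟨Sum.inl (Sum.inr n), rfl⟩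
      · exact Submodule.subset_span ⟨Sum.inr (Sum.inl n), rfl⟩
      · exact Submodule.subset_span ⟨Sum.inr (Sum.inr 0), rfl⟩
  refine ⟨?_, ⟨Φ₀, fun {x y} => hmaplie x y⟩, hinj, hrange, he, hf, hh, hk⟩
  intro x hx y hy
  rw [← hrange] at hx hy
  obtain ⟨a, rfl⟩ := hx
  obtain ⟨b, rfl⟩ := hy
  rw [← hmaplie, ← hrange]
  exact ⟨⁅a, b⁆, rfl⟩
end

section
/- Let W = ⊕_{n∈ℕ}W(n) be a nonzero ℕ-graded integrable ŝl_N(ℂ_q)-module on which k₀ and k₁ act as scalars ℓ₀ and ℓ₁, respectively. Then ℓ₀ is a nonnegative integer, ℓ₁ = 0, and the subspace Ω_W = {w ∈ W : ŝl_N(ℂ_q)^+·w = 0} is nonzero and stable under the action of Ĥ. -/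
set_option linter.unusedSectionVars false
set_option maxHeartbeats 1000000


section Graded

variable {q : ℂ} {N : ℕ} {L : Type*} [LieRing L] [LieAlgebra ℂ L]

/-- Extension of an `ℕ`-indexed family of submodules to `ℤ` by `⊥` in negative degrees. -/
def gradeZ {W : Type*} [AddCommGroup W] [Module ℂ W]
    (Wgr : ℕ → Submodule ℂ W) : ℤ → Submodule ℂ W :=
  fun z => if 0 ≤ z then Wgr z.toNat else ⊥

/-- The set `Ω_W = {w ∈ W ∣ ŝl_N(ℂ_q)⁺ · w = 0}`, where `ŝl_N(ℂ_q)⁺` is spanned by the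
`E_{i,j}t₀^{m₀}t₁^{m₁}` with `m₀ > 0` together with the `E_{i,j}t₁^{m}` with `i < j`. -/
def slPlusAnnihilated (S : SlNCq q N L) (W : Type*) [AddCommGroup W]
    [LieRingModule L W] : Set W :=
  {w | (∀ (i j : Fin N) (m0 m1 : ℤ), 0 < m0 → ⁅S.E i j m0 m1, w⁆ = 0) ∧
    (∀ (i j : Fin N) (m : ℤ), i < j → ⁅S.E i j 0 m, w⁆ = 0)}

/-- The elements `h_{i,n}` spanning (together with `k₁`) the subalgebra `Ĥ`:
`h_{i,n} = (E_{i,i}-E_{i+1,i+1})t₁ⁿ` for `1 ≤ i ≤ N-1`,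
`h_{N,n} = -qⁿ E_{1,1}t₁ⁿ + E_{N,N}t₁ⁿ` for `n ≠ 0`, and
`h_{N,0} = k₀ - (E_{1,1} - E_{N,N})`. -/
noncomputable def hElt (S : SlNCq q N L) (hN : 2 ≤ N) : Fin N → ℤ → L := fun i n =>
  if h : i.1 + 1 < N then S.E i i 0 n - S.E ⟨i.1 + 1, h⟩ ⟨i.1 + 1, h⟩ 0 n
  else if n = 0 then S.k0 - (S.E ⟨0, by omega⟩ ⟨0, by omega⟩ 0 0 - S.E i i 0 0)
  else (-(q ^ n)) • S.E ⟨0, by omega⟩ ⟨0, by omega⟩ 0 n + S.E i i 0 n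

end Graded


/-! ### Auxiliary machinery -/

section BrHelpers

variable {L : Type*} [LieRing L] [LieAlgebra ℂ L]
variable {W : Type*} [AddCommGroup W] [Module ℂ W] [LieRingModule L W] [LieModule ℂ L W]

/-- bracket action as a function -/
def br (y : L) : W → W := fun u => ⁅y, u⁆

@[simp] lemma br_apply (y : L) (u : W) : br y u = ⁅y, u⁆ := rfl

lemma br_smul (y : L) (c : ℂ) (u : W) : br y (c • u) = c • br y u := lie_smul c y u

lemma br_zero (y : L) : br y (0 : W) = 0 := lie_zero y

lemma br_sub (y : L) (u v : W) : br y (u - v) = br y u - br y v := lie_sub y u v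

lemma br_iter_smul (y : L) (c : ℂ) : ∀ (k : ℕ) (u : W),
    (br y)^[k] (c • u) = c • (br y)^[k] u := by
  intro k
  induction k with
  | zero => intro u; simp
  | succ k ih =>
    intro u
    rw [Function.iterate_succ_apply', Function.iterate_succ_apply', ih, br_smul]

lemma br_iter_zero (y : L) : ∀ (k : ℕ), (br y)^[k] (0 : W) = 0 := by
  intro k
  induction k with
  | zero => simp
  | succ k ih => rw [Function.iterate_succ_apply', ih, br_zero]

lemma br_iter_sub (y : L) : ∀ (k : ℕ) (u v : W),
    (br y)^[k] (u - v) = (br y)^[k] u - (br y)^[k] v := by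
  intro k
  induction k with
  | zero => intro u v; simp
  | succ k ih => intro u v; rw [Function.iterate_succ_apply', Function.iterate_succ_apply',
      Function.iterate_succ_apply', ih, br_sub]

/-- iterate of scaled bracket -/
lemma br_smul_elt_iter (y : L) (c : ℂ) : ∀ (k : ℕ) (u : W),
    (br (c • y))^[k] u = c ^ k • (br y)^[k] u := by
  intro k
  induction k with
  | zero => intro u; simp
  | succ k ih =>
    intro u
    rw [Function.iterate_succ_apply', Function.iterate_succ_apply', ih]
    show ⁅c • y, _⁆ = _
    rw [smul_lie, lie_smul, smul_smul, ← pow_succ']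
    rfl

end BrHelpers

section Sl2Aux

variable {L : Type*} [LieRing L] [LieAlgebra ℂ L]
variable {W : Type*} [AddCommGroup W] [Module ℂ W] [LieRingModule L W] [LieModule ℂ L W]

lemma sl2_zf (y z : L) (hzy : ⁅z, y⁆ = (-2 : ℂ) • y) :
    ∀ (k : ℕ) (u : W), ⁅z, (br y)^[k] u⁆
      = (br y)^[k] ⁅z, u⁆ - ((2 * k : ℕ) : ℂ) • (br y)^[k] u := by
  intro k
  induction k with
  | zero => intro u; simp
  | succ k ih =>
    intro u
    simp only [Function.iterate_succ_apply']
    show ⁅z, ⁅y, _⁆⁆ = _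
    rw [leibniz_lie z y, hzy, smul_lie, ih u]
    show _ + br y _ = _
    rw [br_sub, br_smul]
    simp only [br_apply]
    push_cast
    module

lemma sl2_xf (x y z : L) (hxy : ⁅x, y⁆ = z) (hzy : ⁅z, y⁆ = (-2 : ℂ) • y) :
    ∀ (k : ℕ) (u : W), ⁅x, u⁆ = 0 →
      ⁅x, (br y)^[k + 1] u⁆
        = ((k + 1 : ℕ) : ℂ) • (br y)^[k] ⁅z, u⁆
          - (((k + 1) * k : ℕ) : ℂ) • (br y)^[k] u := by
  intro k
  induction k with
  | zero =>
    intro u hu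
    simp only [Function.iterate_succ_apply', Function.iterate_zero_apply]
    show ⁅x, ⁅y, u⁆⁆ = _
    rw [leibniz_lie x y, hxy, hu, lie_zero, add_zero]
    push_cast
    module
  | succ k ih =>
    intro u hu
    rw [Function.iterate_succ_apply' (br y) (k+1)]
    show ⁅x, ⁅y, (br y)^[k+1] u⁆⁆ = _
    rw [leibniz_lie x y, hxy, ih u hu, sl2_zf y z hzy (k+1) u]
    show _ + br y _ = _
    rw [br_sub, br_smul, br_smul, ← Function.iterate_succ_apply' (br y) k,
      ← Function.iterate_succ_apply' (br y) k]
    push_cast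
    module

/-- a primitive eigenvector has natural eigenvalue -/
lemma sl2_eigen_nat (x y z : L) (hxy : ⁅x, y⁆ = z) (hzy : ⁅z, y⁆ = (-2 : ℂ) • y)
    (v : W) (hv : v ≠ 0) (hxv : ⁅x, v⁆ = 0) (lam : ℂ) (hzv : ⁅z, v⁆ = lam • v)
    (hnil : ∃ n, (br y)^[n] v = (0 : W)) : ∃ s : ℕ, lam = s := by
  classical
  have hs : ∃ n, (br y)^[n] v = (0 : W) := hnil
  have hs0 : (br y)^[Nat.find hs] v = 0 := Nat.find_spec hs
  have hspos : Nat.find hs ≠ 0 := by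
    intro h
    apply hv
    rw [h] at hs0
    simpa using hs0
  obtain ⟨s', hseq⟩ : ∃ s', Nat.find hs = s' + 1 := ⟨Nat.find hs - 1, by omega⟩
  rw [hseq] at hs0
  have hmin : (br y)^[s'] v ≠ 0 := Nat.find_min hs (by omega)
  have h1 : ⁅x, (br y)^[s' + 1] v⁆ = 0 := by rw [hs0]; exact lie_zero x
  rw [sl2_xf x y z hxy hzy s' v hxv, hzv, br_iter_smul] at h1
  have h2 : (((s' + 1 : ℕ) : ℂ) * (lam - s')) • (br y)^[s'] v = 0 := by
    rw [← h1]
    push_cast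
    module
  rcases smul_eq_zero.mp h2 with hc | hv2
  · rcases mul_eq_zero.mp hc with hc1 | hc2
    · exact absurd hc1 (Nat.cast_ne_zero (R := ℂ).mpr (Nat.succ_ne_zero s'))
    · exact ⟨s', by linear_combination hc2⟩
  · exact absurd hv2 hmin

lemma sl2_eigen_core (x y z : L) (hxy : ⁅x, y⁆ = z) (hzx : ⁅z, x⁆ = (2 : ℂ) • x)
    (hzy : ⁅z, y⁆ = (-2 : ℂ) • y) (V : Submodule ℂ W) (hVz : ∀ v ∈ V, ⁅z, v⁆ ∈ V) :
    ∀ s : ℕ, ∀ v : W, v ∈ V → v ≠ 0 → ⁅x, v⁆ = 0 → (br y)^[s] v = 0 →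
      ∃ v' ∈ V, v' ≠ 0 ∧ ⁅x, v'⁆ = 0 ∧ ∃ a : ℕ, ⁅z, v'⁆ = (a : ℂ) • v' := by
  intro s
  induction s using Nat.strong_induction_on with
  | _ s ih =>
    intro v hvV hvne hxv hyv
    match s, ih with
    | 0, ih => exact absurd hyv hvne
    | (s' + 1), ih =>
      have h1 : ⁅x, (br y)^[s' + 1] v⁆ = 0 := by rw [hyv]; exact lie_zero x
      rw [sl2_xf x y z hxy hzy s' v hxv] at h1
      have hne : ((s' + 1 : ℕ) : ℂ) ≠ 0 := Nat.cast_ne_zero.mpr (Nat.succ_ne_zero s')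
      have h3 : ((s' + 1 : ℕ) : ℂ) • ((br y)^[s'] ⁅z, v⁆ - (s' : ℂ) • (br y)^[s'] v) = 0 := by
        rw [smul_sub, smul_smul, sub_eq_zero]
        rw [sub_eq_zero] at h1
        rw [h1]
        push_cast
        module
      have h2 : (br y)^[s'] (⁅z, v⁆ - (s' : ℂ) • v) = 0 := by
        rw [br_iter_sub, br_iter_smul]
        rcases smul_eq_zero.mp h3 with hc | h4
        · exact absurd hc hne
        · exact h4
      by_cases hu : ⁅z, v⁆ - (s' : ℂ) • v = 0
      · exact ⟨v, hvV, hvne, hxv, ⟨s', by rw [← sub_eq_zero]; exact hu⟩⟩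
      · have huV : ⁅z, v⁆ - (s' : ℂ) • v ∈ V :=
          Submodule.sub_mem V (hVz v hvV) (Submodule.smul_mem V _ hvV)
        have hxz : ⁅x, z⁆ = -((2 : ℂ) • x) := by rw [← lie_skew, hzx]
        have hxzv : ⁅x, ⁅z, v⁆⁆ = 0 := by
          rw [leibniz_lie x z v, hxv, lie_zero, add_zero, hxz, neg_lie, smul_lie, hxv,
            smul_zero, neg_zero]
        have hxu : ⁅x, ⁅z, v⁆ - (s' : ℂ) • v⁆ = 0 := by
          rw [lie_sub, hxzv, lie_smul, hxv, smul_zero, sub_zero]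
        exact ih s' (by omega) _ huV hu hxu h2

lemma sl2_exists_eigen (x y z : L) (hxy : ⁅x, y⁆ = z) (hzx : ⁅z, x⁆ = (2 : ℂ) • x)
    (hzy : ⁅z, y⁆ = (-2 : ℂ) • y) (V : Submodule ℂ W)
    (hVx : ∀ v ∈ V, ⁅x, v⁆ ∈ V) (hVz : ∀ v ∈ V, ⁅z, v⁆ ∈ V)
    (hxnil : ∀ v : W, ∃ n, (br x)^[n] v = 0) (hynil : ∀ v : W, ∃ n, (br y)^[n] v = 0)
    (v0 : W) (hv0 : v0 ∈ V) (hv0n : v0 ≠ 0) :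
    ∃ v ∈ V, v ≠ 0 ∧ ⁅x, v⁆ = 0 ∧ ∃ a : ℕ, ⁅z, v⁆ = (a : ℂ) • v := by
  classical
  have hiterV : ∀ k : ℕ, (br x)^[k] v0 ∈ V := by
    intro k
    induction k with
    | zero => exact hv0
    | succ k ihk => rw [Function.iterate_succ_apply']; exact hVx _ ihk
  have hx := hxnil v0
  have hr0 : (br x)^[Nat.find hx] v0 = 0 := Nat.find_spec hx
  have hrpos : Nat.find hx ≠ 0 := by
    intro h
    apply hv0n
    rw [h] at hr0
    simpa using hr0
  obtain ⟨r', hreq⟩ : ∃ r', Nat.find hx = r' + 1 := ⟨Nat.find hx - 1, by omega⟩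
  rw [hreq] at hr0
  have hmin : (br x)^[r'] v0 ≠ 0 := Nat.find_min hx (by omega)
  have hx1 : ⁅x, (br x)^[r'] v0⁆ = 0 := by
    have h := hr0
    rw [Function.iterate_succ_apply'] at h
    exact h
  obtain ⟨n, hn⟩ := hynil ((br x)^[r'] v0)
  exact sl2_eigen_core x y z hxy hzx hzy V hVz n _ (hiterV r') hmin hx1 hn

end Sl2Aux

section QTAux

variable {q : ℂ} {N : ℕ} {L : Type*} [LieRing L] [LieAlgebra ℂ L] (S : SlNCq q N L)
variable {W : Type*} [AddCommGroup W] [Module ℂ W] [LieRingModule L W] [LieModule ℂ L W]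

lemma brE_nene (i j k l : Fin N) (m0 m1 n0 n1 : ℤ) (h1 : j ≠ k) (h2 : i ≠ l) :
    ⁅S.E i j m0 m1, S.E k l n0 n1⁆ = 0 := by
  rw [S.bracket_E]; simp [h1, h2]

lemma brE_jk (i j l : Fin N) (h2 : i ≠ l) (m0 m1 n0 n1 : ℤ) :
    ⁅S.E i j m0 m1, S.E j l n0 n1⁆ = q ^ (m1 * n0) • S.E i l (m0 + n0) (m1 + n1) := by
  rw [S.bracket_E]; simp [h2]

lemma brE_il (i j k : Fin N) (h1 : j ≠ k) (m0 m1 n0 n1 : ℤ) :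
    ⁅S.E i j m0 m1, S.E k i n0 n1⁆ = -(q ^ (n1 * m0) • S.E k j (m0 + n0) (m1 + n1)) := by
  rw [S.bracket_E]; simp [h1]

lemma brE_diag (i j : Fin N) (m0 m1 n0 n1 : ℤ) (h : m0 + n0 ≠ 0) :
    ⁅S.E i j m0 m1, S.E j i n0 n1⁆ =
      q ^ (m1 * n0) • S.E i i (m0 + n0) (m1 + n1)
        - q ^ (n1 * m0) • S.E j j (m0 + n0) (m1 + n1) := by
  rw [S.bracket_E]; simp [h]

/-- words in the operators `E i i 1 m` -/
def awords (S : SlNCq q N L) (i : Fin N) (ms : List ℤ) (u : W) : W :=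
  ms.foldr (fun m u' => ⁅S.E i i 1 m, u'⁆) u

@[simp] lemma awords_nil (i : Fin N) (u : W) : awords S i [] u = u := rfl

lemma awords_cons (i : Fin N) (m : ℤ) (ms : List ℤ) (u : W) :
    awords S i (m :: ms) u = ⁅S.E i i 1 m, awords S i ms u⁆ := rfl

lemma awords_append_single (i : Fin N) (ms : List ℤ) (m : ℤ) (u : W) :
    awords S i (ms ++ [m]) u = awords S i ms ⁅S.E i i 1 m, u⁆ := by
  unfold awords
  rw [List.foldr_append]
  rfl

lemma awords_smul (i : Fin N) (ms : List ℤ) (c : ℂ) (u : W) :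
    awords S i ms (c • u) = c • awords S i ms u := by
  induction ms with
  | nil => rfl
  | cons m ms ih => rw [awords_cons, awords_cons, ih, lie_smul]

lemma awords_zero (i : Fin N) (ms : List ℤ) :
    awords S i ms (0 : W) = 0 := by
  induction ms with
  | nil => rfl
  | cons m ms ih => rw [awords_cons, ih, lie_zero]

section Root

variable (i j : Fin N) (v : W)

lemma kill_T1 (hij : i ≠ j)
    (hv : ∀ (a b : Fin N) (m0 m1 : ℤ), 0 < m0 → ⁅S.E a b m0 m1, v⁆ = 0) :
    ∀ (k : ℕ) (d M : ℤ), 1 ≤ d →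
    ⁅S.E i j d M, (br (S.E i j (-1) 0))^[k] v⁆ = 0 := by
  intro k
  induction k with
  | zero => intro d M hd; exact hv i j d M (by omega)
  | succ k ih =>
    intro d M hd
    rw [Function.iterate_succ_apply']
    show ⁅S.E i j d M, ⁅S.E i j (-1) 0, _⁆⁆ = 0
    rw [leibniz_lie, brE_nene S i j i j d M (-1) 0 hij.symm hij, zero_lie, zero_add,
      ih d M hd, lie_zero]

lemma kill_T2 (hij : i ≠ j)
    (hv : ∀ (a b : Fin N) (m0 m1 : ℤ), 0 < m0 → ⁅S.E a b m0 m1, v⁆ = 0) :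
    ∀ (k : ℕ) (d M : ℤ), 2 ≤ d →
    ⁅S.E i i d M, (br (S.E i j (-1) 0))^[k] v⁆ = 0 := by
  intro k
  induction k with
  | zero => intro d M hd; exact hv i i d M (by omega)
  | succ k ih =>
    intro d M hd
    rw [Function.iterate_succ_apply']
    show ⁅S.E i i d M, ⁅S.E i j (-1) 0, _⁆⁆ = 0
    rw [leibniz_lie, brE_jk S i i j hij d M (-1) 0, smul_lie,
      kill_T1 S i j v hij hv k (d + -1) (M + 0) (by omega), smul_zero, zero_add,
      ih d M hd, lie_zero]

lemma kill_T1_w (hij : i ≠ j)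
    (hv : ∀ (a b : Fin N) (m0 m1 : ℤ), 0 < m0 → ⁅S.E a b m0 m1, v⁆ = 0) :
    ∀ (ms : List ℤ) (k : ℕ) (d M : ℤ), 1 ≤ d →
    ⁅S.E i j d M, awords S i ms ((br (S.E i j (-1) 0))^[k] v)⁆ = 0 := by
  intro ms
  induction ms with
  | nil => intro k d M hd; exact kill_T1 S i j v hij hv k d M hd
  | cons m' ms ih =>
    intro k d M hd
    rw [awords_cons, leibniz_lie, brE_il S i j i hij.symm d M 1 m', neg_lie, smul_lie,
      ih k (d + 1) (M + m') (by omega), smul_zero, neg_zero, zero_add,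
      ih k d M hd, lie_zero]

lemma kill_T2_w (hij : i ≠ j)
    (hv : ∀ (a b : Fin N) (m0 m1 : ℤ), 0 < m0 → ⁅S.E a b m0 m1, v⁆ = 0) :
    ∀ (ms : List ℤ) (k : ℕ) (d M : ℤ), 2 ≤ d →
    ⁅S.E i i d M, awords S i ms ((br (S.E i j (-1) 0))^[k] v)⁆ = 0 := by
  intro ms
  induction ms with
  | nil => intro k d M hd; exact kill_T2 S i j v hij hv k d M hd
  | cons m' ms ih =>
    intro k d M hd
    rw [awords_cons, leibniz_lie, brE_diag S i i d M 1 m' (by omega), sub_lie, smul_lie,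
      smul_lie, ih k (d + 1) (M + m') (by omega),
      smul_zero, smul_zero, sub_zero, zero_add, ih k d M hd, lie_zero]

lemma x_comm_w (hij : i ≠ j)
    (hv : ∀ (a b : Fin N) (m0 m1 : ℤ), 0 < m0 → ⁅S.E a b m0 m1, v⁆ = 0) :
    ∀ (ms : List ℤ) (k : ℕ) (m : ℤ),
    ⁅S.E i j 0 m, awords S i ms ((br (S.E i j (-1) 0))^[k] v)⁆
      = awords S i ms ⁅S.E i j 0 m, (br (S.E i j (-1) 0))^[k] v⁆ := by
  intro ms
  induction ms with
  | nil => intro k m; rfl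
  | cons m' ms ih =>
    intro k m
    rw [awords_cons, leibniz_lie, brE_il S i j i hij.symm 0 m 1 m', neg_lie, smul_lie,
      kill_T1_w S i j v hij hv ms k (0 + 1) (m + m') (by omega), smul_zero, neg_zero,
      zero_add, ih k m, ← awords_cons]

lemma x_c_swap (hij : i ≠ j) : ∀ (m : ℤ) (u : W),
    ⁅S.E i j 0 m, ⁅S.E i j (-1) 0, u⁆⁆ = ⁅S.E i j (-1) 0, ⁅S.E i j 0 m, u⁆⁆ := by
  intro m u
  rw [leibniz_lie, brE_nene S i j i j 0 m (-1) 0 hij.symm hij, zero_lie, zero_add]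

lemma a_c_bracket (hij : i ≠ j) (m : ℤ) :
    ⁅S.E i i 1 m, S.E i j (-1) 0⁆ = q ^ (m * (-1 : ℤ)) • S.E i j 0 m := by
  have h := brE_jk S i i j hij 1 m (-1) 0
  rw [show (1 : ℤ) + -1 = 0 by norm_num, add_zero] at h
  exact h

lemma c_fold (k : ℕ) (u : W) :
    ⁅S.E i j (-1) 0, (br (S.E i j (-1) 0))^[k] u⁆ = (br (S.E i j (-1) 0))^[k + 1] u :=
  (Function.iterate_succ_apply' _ _ _).symm

lemma c_a_swap (hij : i ≠ j) : ∀ (m : ℤ) (u : W),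
    ⁅S.E i j (-1) 0, ⁅S.E i i 1 m, u⁆⁆
      = ⁅S.E i i 1 m, ⁅S.E i j (-1) 0, u⁆⁆ - q ^ (m * (-1 : ℤ)) • ⁅S.E i j 0 m, u⁆ := by
  intro m u
  have hca : ⁅S.E i j (-1) 0, S.E i i 1 m⁆ = -(q ^ (m * (-1 : ℤ)) • S.E i j 0 m) := by
    rw [← a_c_bracket S i j hij m]
    exact neg_eq_iff_eq_neg.mp (lie_skew (S.E i i 1 m) (S.E i j (-1) 0))
  rw [leibniz_lie, hca, neg_lie, smul_lie]
  abel

lemma x_iter_c (hij : i ≠ j) : ∀ (k : ℕ) (m : ℤ) (u : W),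
    ⁅S.E i j 0 m, (br (S.E i j (-1) 0))^[k] u⁆
      = (br (S.E i j (-1) 0))^[k] ⁅S.E i j 0 m, u⁆ := by
  intro k
  induction k with
  | zero => intro m u; rfl
  | succ k ih =>
    intro m u
    rw [Function.iterate_succ_apply', Function.iterate_succ_apply']
    show ⁅S.E i j 0 m, ⁅S.E i j (-1) 0, _⁆⁆ = ⁅S.E i j (-1) 0, _⁆
    rw [x_c_swap S i j hij, ih]

lemma iter_c_a (hij : i ≠ j) : ∀ (k : ℕ) (m : ℤ) (u : W),
    (br (S.E i j (-1) 0))^[k] ⁅S.E i i 1 m, ⁅S.E i j (-1) 0, u⁆⁆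
      = ⁅S.E i i 1 m, (br (S.E i j (-1) 0))^[k + 1] u⁆
        - (k : ℂ) • (q ^ (m * (-1 : ℤ)) • ⁅S.E i j 0 m, (br (S.E i j (-1) 0))^[k] u⁆) := by
  intro k
  induction k with
  | zero => intro m u; simp
  | succ k ih =>
    intro m u
    have hL : (br (S.E i j (-1) 0))^[k + 1] ⁅S.E i i 1 m, ⁅S.E i j (-1) 0, u⁆⁆
        = ⁅S.E i j (-1) 0, (br (S.E i j (-1) 0))^[k] ⁅S.E i i 1 m, ⁅S.E i j (-1) 0, u⁆⁆⁆ :=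
      Function.iterate_succ_apply' _ _ _
    rw [hL, ih m u, lie_sub, lie_smul, lie_smul, c_a_swap S i j hij m,
      ← x_c_swap S i j hij m, c_fold S i j k u, c_fold S i j (k + 1) u]
    push_cast
    module

lemma x_on_v (hq : q ≠ 0) (hij : i ≠ j)
    (hv : ∀ (a b : Fin N) (m0 m1 : ℤ), 0 < m0 → ⁅S.E a b m0 m1, v⁆ = 0) (m : ℤ) :
    ⁅S.E i j 0 m, v⁆ = q ^ m • ⁅S.E i i 1 m, ⁅S.E i j (-1) 0, v⁆⁆ := by
  have h1 : ⁅⁅S.E i i 1 m, S.E i j (-1) 0⁆, v⁆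
      = ⁅S.E i i 1 m, ⁅S.E i j (-1) 0, v⁆⁆ - ⁅S.E i j (-1) 0, ⁅S.E i i 1 m, v⁆⁆ :=
    lie_lie _ _ _
  rw [hv i i 1 m (by omega), lie_zero, sub_zero, a_c_bracket S i j hij m, smul_lie] at h1
  have h2 : q ^ m • (q ^ (m * (-1 : ℤ)) • ⁅S.E i j 0 m, v⁆)
      = q ^ m • ⁅S.E i i 1 m, ⁅S.E i j (-1) 0, v⁆⁆ := by rw [h1]
  rwa [smul_smul, ← zpow_add₀ hq, show m + m * -1 = 0 by ring, zpow_zero, one_smul] at h2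

lemma x_wk (hq : q ≠ 0) (hij : i ≠ j)
    (hv : ∀ (a b : Fin N) (m0 m1 : ℤ), 0 < m0 → ⁅S.E a b m0 m1, v⁆ = 0) (k : ℕ) (m : ℤ) :
    ⁅S.E i j 0 m, (br (S.E i j (-1) 0))^[k] v⁆
      = (((k : ℂ) + 1)⁻¹ * q ^ m) • ⁅S.E i i 1 m, (br (S.E i j (-1) 0))^[k + 1] v⁆ := by
  have hqq : q ^ m * q ^ (m * (-1 : ℤ)) = 1 := by
    rw [← zpow_add₀ hq, show m + m * -1 = 0 by ring, zpow_zero]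
  have hsc : q ^ m * (k : ℂ) * q ^ (m * (-1 : ℤ)) = (k : ℂ) := by
    calc q ^ m * (k : ℂ) * q ^ (m * (-1 : ℤ))
        = (k : ℂ) * (q ^ m * q ^ (m * (-1 : ℤ))) := by ring
      _ = (k : ℂ) := by rw [hqq, mul_one]
  have hX : ⁅S.E i j 0 m, (br (S.E i j (-1) 0))^[k] v⁆
      = q ^ m • ⁅S.E i i 1 m, (br (S.E i j (-1) 0))^[k + 1] v⁆
        - (k : ℂ) • ⁅S.E i j 0 m, (br (S.E i j (-1) 0))^[k] v⁆ := by
    calc ⁅S.E i j 0 m, (br (S.E i j (-1) 0))^[k] v⁆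
        = (br (S.E i j (-1) 0))^[k] ⁅S.E i j 0 m, v⁆ := x_iter_c S i j hij k m v
      _ = (br (S.E i j (-1) 0))^[k] (q ^ m • ⁅S.E i i 1 m, ⁅S.E i j (-1) 0, v⁆⁆) := by
          rw [x_on_v S i j v hq hij hv m]
      _ = q ^ m • (br (S.E i j (-1) 0))^[k] ⁅S.E i i 1 m, ⁅S.E i j (-1) 0, v⁆⁆ :=
          br_iter_smul _ _ _ _
      _ = q ^ m • (⁅S.E i i 1 m, (br (S.E i j (-1) 0))^[k + 1] v⁆
            - (k : ℂ) • (q ^ (m * (-1 : ℤ)) • ⁅S.E i j 0 m, (br (S.E i j (-1) 0))^[k] v⁆)) := by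
          rw [iter_c_a S i j hij k m v]
      _ = q ^ m • ⁅S.E i i 1 m, (br (S.E i j (-1) 0))^[k + 1] v⁆
            - (k : ℂ) • ⁅S.E i j 0 m, (br (S.E i j (-1) 0))^[k] v⁆ := by
          rw [smul_sub, smul_smul, smul_smul, hsc]
  have hsum : ((k : ℂ) + 1) • ⁅S.E i j 0 m, (br (S.E i j (-1) 0))^[k] v⁆
      = q ^ m • ⁅S.E i i 1 m, (br (S.E i j (-1) 0))^[k + 1] v⁆ := by
    have h3 := eq_sub_iff_add_eq.mp hX
    rw [← h3]
    module
  have hne : ((k : ℂ) + 1) ≠ 0 := Nat.cast_add_one_ne_zero k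
  calc ⁅S.E i j 0 m, (br (S.E i j (-1) 0))^[k] v⁆
      = (((k : ℂ) + 1)⁻¹ * ((k : ℂ) + 1)) • ⁅S.E i j 0 m, (br (S.E i j (-1) 0))^[k] v⁆ := by
        rw [inv_mul_cancel₀ hne, one_smul]
    _ = ((k : ℂ) + 1)⁻¹ • (((k : ℂ) + 1) • ⁅S.E i j 0 m, (br (S.E i j (-1) 0))^[k] v⁆) := by
        rw [smul_smul]
    _ = ((k : ℂ) + 1)⁻¹ • (q ^ m • ⁅S.E i i 1 m, (br (S.E i j (-1) 0))^[k + 1] v⁆) := by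
        rw [hsum]
    _ = (((k : ℂ) + 1)⁻¹ * q ^ m) • ⁅S.E i i 1 m, (br (S.E i j (-1) 0))^[k + 1] v⁆ := by
        rw [smul_smul]

lemma main_formula (hq : q ≠ 0) (hij : i ≠ j)
    (hv : ∀ (a b : Fin N) (m0 m1 : ℤ), 0 < m0 → ⁅S.E a b m0 m1, v⁆ = 0) :
    ∀ ms : List ℤ, ∃ c : ℂ, ∃ ws : List ℤ,
      List.foldr (fun m u => ⁅S.E i j 0 m, u⁆) v ms
        = c • awords S i ws ((br (S.E i j (-1) 0))^[ms.length] v) := by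
  intro ms
  induction ms with
  | nil => exact ⟨1, [], by simp⟩
  | cons m ms ih =>
    obtain ⟨c, ws, hcw⟩ := ih
    refine ⟨c * ((((ms.length : ℕ) : ℂ) + 1)⁻¹ * q ^ m), ws ++ [m], ?_⟩
    rw [List.foldr_cons, hcw, lie_smul, x_comm_w S i j v hij hv ws ms.length m,
      x_wk S i j v hq hij hv ms.length m, awords_smul, awords_append_single,
      List.length_cons, smul_smul]

lemma reach (P : W → Prop) (hP : ∀ (u : W) (m : ℤ), P u → P ⁅S.E i j 0 m, u⁆) :
    ∀ (K : ℕ) (v0 : W), P v0 → v0 ≠ 0 →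
      (∀ ms : List ℤ, ms.length = K → List.foldr (fun m u => ⁅S.E i j 0 m, u⁆) v0 ms = 0) →
      ∃ u : W, P u ∧ u ≠ 0 ∧ ∀ m : ℤ, ⁅S.E i j 0 m, u⁆ = 0 := by
  intro K
  induction K with
  | zero =>
    intro v0 hPv0 hne hvan
    exact absurd (hvan [] rfl) hne
  | succ K ih =>
    intro v0 hPv0 hne hvan
    by_cases hall : ∀ m : ℤ, ⁅S.E i j 0 m, v0⁆ = 0
    · exact ⟨v0, hPv0, hne, hall⟩
    · push_neg at hall
      obtain ⟨m0, hm0⟩ := hall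
      refine ih ⁅S.E i j 0 m0, v0⁆ (hP v0 m0 hPv0) hm0 ?_
      intro ms hlen
      have h := hvan (ms ++ [m0]) (by simp [hlen])
      rw [List.foldr_append] at h
      exact h

lemma proc (hq : q ≠ 0) (hij : i ≠ j) (P : W → Prop)
    (hPk : ∀ u : W, P u → ∀ (a b : Fin N) (m0 m1 : ℤ), 0 < m0 → ⁅S.E a b m0 m1, u⁆ = 0)
    (hP : ∀ (u : W) (m : ℤ), P u → P ⁅S.E i j 0 m, u⁆)
    (v0 : W) (hPv0 : P v0) (hne : v0 ≠ 0)
    (hnil : ∃ n : ℕ, (br (S.E i j (-1) 0))^[n] v0 = 0) :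
    ∃ u : W, P u ∧ u ≠ 0 ∧ ∀ m : ℤ, ⁅S.E i j 0 m, u⁆ = 0 := by
  obtain ⟨K, hK⟩ := hnil
  refine reach S i j P hP K v0 hPv0 hne ?_
  intro ms hlen
  obtain ⟨c, ws, hcw⟩ := main_formula S i j v0 hq hij (hPk v0 hPv0) ms
  rw [hcw, hlen, hK, awords_zero, smul_zero]

end Root

end QTAux

section ChainAux

variable {q : ℂ} {N : ℕ} {L : Type*} [LieRing L] [LieAlgebra ℂ L] (S : SlNCq q N L)
variable {W : Type*} [AddCommGroup W] [Module ℂ W] [LieRingModule L W] [LieModule ℂ L W]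
variable (V : Submodule ℂ W)

/-- partial annihilation property during the root-by-root elimination -/
def QProp (d t : ℕ) : Prop :=
  ∃ v : W, v ∈ V ∧ v ≠ 0 ∧ ∀ (a b : Fin N) (mm : ℤ), a.1 < b.1 →
    (d < b.1 - a.1 ∨ (b.1 - a.1 = d ∧ a.1 < t)) → ⁅S.E a b 0 mm, v⁆ = 0

lemma stepT (hq : q ≠ 0)
    (killV : ∀ v ∈ V, ∀ (a b : Fin N) (m0 m1 : ℤ), 0 < m0 → ⁅S.E a b m0 m1, v⁆ = 0)
    (presV : ∀ v ∈ V, ∀ (a b : Fin N) (m1 : ℤ), ⁅S.E a b 0 m1, v⁆ ∈ V)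
    (hnil : ∀ (i j : Fin N), i ≠ j → ∀ (w : W), ∃ n : ℕ, (br (S.E i j (-1) 0))^[n] w = 0)
    (d t : ℕ) (h : QProp S V d t) : QProp S V d (t + 1) := by
  obtain ⟨v, hvV, hvne, hcond⟩ := h
  by_cases hroot : t + d < N ∧ 1 ≤ d
  case neg =>
    refine ⟨v, hvV, hvne, ?_⟩
    intro a b mm hab hqual
    apply hcond a b mm hab
    rcases hqual with hlt | ⟨h1, h2⟩
    · exact Or.inl hlt
    · rcases Nat.lt_succ_iff_lt_or_eq.mp h2 with h3 | h3
      · exact Or.inr ⟨h1, h3⟩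
      · exfalso
        apply hroot
        have hbN := b.isLt
        constructor <;> omega
  case pos =>
    obtain ⟨hroot1, hroot2⟩ := hroot
    obtain ⟨io, hio⟩ : ∃ z : Fin N, z.1 = t := ⟨⟨t, by omega⟩, rfl⟩
    obtain ⟨jo, hjo⟩ : ∃ z : Fin N, z.1 = t + d := ⟨⟨t + d, hroot1⟩, rfl⟩
    have hione : io ≠ jo := by
      intro h
      have := congrArg Fin.val h
      omega
    have hPclosed : ∀ (u : W) (m : ℤ),
        (u ∈ V ∧ ∀ (a b : Fin N) (mm : ℤ), a.1 < b.1 →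
          (d < b.1 - a.1 ∨ (b.1 - a.1 = d ∧ a.1 < t)) → ⁅S.E a b 0 mm, u⁆ = 0) →
        (⁅S.E io jo 0 m, u⁆ ∈ V ∧ ∀ (a b : Fin N) (mm : ℤ), a.1 < b.1 →
          (d < b.1 - a.1 ∨ (b.1 - a.1 = d ∧ a.1 < t)) →
            ⁅S.E a b 0 mm, ⁅S.E io jo 0 m, u⁆⁆ = 0) := by
      rintro u m ⟨huV, hucond⟩
      refine ⟨presV u huV io jo m, ?_⟩
      intro a b mm hab hqual
      rw [leibniz_lie, hucond a b mm hab hqual, lie_zero, add_zero, S.bracket_E]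
      have hcen : ¬(b = io ∧ a = jo ∧ (0 : ℤ) + 0 = 0 ∧ mm + m = 0) := by
        rintro ⟨hb, ha, -, -⟩
        have hb' : b.1 = io.1 := congrArg Fin.val hb
        have ha' : a.1 = jo.1 := congrArg Fin.val ha
        omega
      rw [if_neg hcen, add_zero, sub_lie]
      have hterm1 :
          ⁅(if b = io then q ^ (mm * 0) • S.E a jo (0 + 0) (mm + m) else 0 : L), u⁆ = 0 := by
        split_ifs with h1
        · have hb' : b.1 = io.1 := congrArg Fin.val h1
          rw [smul_lie, zero_add, hucond a jo (mm + m) (by omega) (Or.inl (by omega)),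
            smul_zero]
        · exact zero_lie u
      have hterm2 :
          ⁅(if a = jo then q ^ (m * 0) • S.E io b (0 + 0) (mm + m) else 0 : L), u⁆ = 0 := by
        split_ifs with h2
        · have ha' : a.1 = jo.1 := congrArg Fin.val h2
          rw [smul_lie, zero_add, hucond io b (mm + m) (by omega) (Or.inl (by omega)),
            smul_zero]
        · exact zero_lie u
      rw [hterm1, hterm2, sub_zero]
    obtain ⟨u, ⟨huV, hucond⟩, hune, hukill⟩ :=
      proc S io jo hq hione _ (fun u hu => killV u hu.1) hPclosed v ⟨hvV, hcond⟩ hvne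
        (hnil io jo hione v)
    refine ⟨u, huV, hune, ?_⟩
    intro a b mm hab hqual
    rcases hqual with hlt | ⟨h1, h2⟩
    · exact hucond a b mm hab (Or.inl hlt)
    · rcases Nat.lt_succ_iff_lt_or_eq.mp h2 with h3 | h3
      · exact hucond a b mm hab (Or.inr ⟨h1, h3⟩)
      · have ha : a = io := Fin.ext (by omega)
        have hb : b = jo := Fin.ext (by omega)
        rw [ha, hb]
        exact hukill mm

lemma iterT (hq : q ≠ 0)
    (killV : ∀ v ∈ V, ∀ (a b : Fin N) (m0 m1 : ℤ), 0 < m0 → ⁅S.E a b m0 m1, v⁆ = 0)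
    (presV : ∀ v ∈ V, ∀ (a b : Fin N) (m1 : ℤ), ⁅S.E a b 0 m1, v⁆ ∈ V)
    (hnil : ∀ (i j : Fin N), i ≠ j → ∀ (w : W), ∃ n : ℕ, (br (S.E i j (-1) 0))^[n] w = 0)
    (d : ℕ) (h : QProp S V d 0) : ∀ t, QProp S V d t := by
  intro t
  induction t with
  | zero => exact h
  | succ t ih => exact stepT S V hq killV presV hnil d t ih

lemma stepD (d : ℕ) (h : QProp S V (d + 1) N) : QProp S V d 0 := by
  obtain ⟨v, h1, h2, h3⟩ := h
  refine ⟨v, h1, h2, ?_⟩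
  intro a b mm hab hqual
  rcases hqual with hlt | ⟨h4, h5⟩
  · apply h3 a b mm hab
    by_cases hc : d + 1 < b.1 - a.1
    · exact Or.inl hc
    · exact Or.inr ⟨by omega, a.isLt⟩
  · omega

lemma baseQ (hVne : V ≠ ⊥) : QProp S V (N - 1) 0 := by
  obtain ⟨v, hvV, hvne⟩ := (Submodule.ne_bot_iff V).mp hVne
  refine ⟨v, hvV, hvne, ?_⟩
  intro a b mm hab hqual
  exfalso
  have := b.isLt
  rcases hqual with h | ⟨-, h⟩ <;> omega

lemma chainQ (hq : q ≠ 0)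
    (killV : ∀ v ∈ V, ∀ (a b : Fin N) (m0 m1 : ℤ), 0 < m0 → ⁅S.E a b m0 m1, v⁆ = 0)
    (presV : ∀ v ∈ V, ∀ (a b : Fin N) (m1 : ℤ), ⁅S.E a b 0 m1, v⁆ ∈ V)
    (hnil : ∀ (i j : Fin N), i ≠ j → ∀ (w : W), ∃ n : ℕ, (br (S.E i j (-1) 0))^[n] w = 0)
    (hVne : V ≠ ⊥) : ∀ c : ℕ, QProp S V (N - 1 - c) N := by
  intro c
  induction c with
  | zero =>
    apply iterT S V hq killV presV hnil
    rw [Nat.sub_zero]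
    exact baseQ S V hVne
  | succ c ih =>
    by_cases hc : N - 1 - c = N - 1 - (c + 1)
    · rw [← hc]; exact ih
    · have heq : N - 1 - (c + 1) + 1 = N - 1 - c := by omega
      apply iterT S V hq killV presV hnil
      apply stepD
      rw [heq]
      exact ih

end ChainAux

section OmegaAux

variable {q : ℂ} {N : ℕ} {L : Type*} [LieRing L] [LieAlgebra ℂ L] (S : SlNCq q N L)
variable {W : Type*} [AddCommGroup W] [Module ℂ W] [LieRingModule L W] [LieModule ℂ L W]

lemma omega_diag (w : W) (hw : w ∈ slPlusAnnihilated S W) (c : Fin N) (nn : ℤ) :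
    ⁅S.E c c 0 nn, w⁆ ∈ slPlusAnnihilated S W := by
  obtain ⟨hw1, hw2⟩ := hw
  constructor
  · intro a b m0 m1 hm0
    rw [leibniz_lie, hw1 a b m0 m1 hm0, lie_zero, add_zero, S.bracket_E]
    have hcen : ¬(b = c ∧ a = c ∧ m0 + 0 = 0 ∧ m1 + nn = 0) := by
      rintro ⟨-, -, h, -⟩; omega
    rw [if_neg hcen, add_zero, sub_lie]
    have h1 : ⁅(if b = c then q ^ (m1 * 0) • S.E a c (m0 + 0) (m1 + nn) else 0 : L), w⁆ = 0 := by
      split_ifs with h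
      · rw [smul_lie, hw1 a c (m0 + 0) (m1 + nn) (by omega), smul_zero]
      · exact zero_lie w
    have h2 : ⁅(if a = c then q ^ (nn * m0) • S.E c b (m0 + 0) (m1 + nn) else 0 : L), w⁆ = 0 := by
      split_ifs with h
      · rw [smul_lie, hw1 c b (m0 + 0) (m1 + nn) (by omega), smul_zero]
      · exact zero_lie w
    rw [h1, h2, sub_zero]
  · intro a b mm hab
    rw [leibniz_lie, hw2 a b mm hab, lie_zero, add_zero, S.bracket_E]
    have hcen : ¬(b = c ∧ a = c ∧ (0 : ℤ) + 0 = 0 ∧ mm + nn = 0) := by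
      rintro ⟨hb, ha, -, -⟩
      rw [ha, hb] at hab
      exact lt_irrefl c hab
    rw [if_neg hcen, add_zero, sub_lie]
    have h1 : ⁅(if b = c then q ^ (mm * 0) • S.E a c (0 + 0) (mm + nn) else 0 : L), w⁆ = 0 := by
      split_ifs with h
      · rw [smul_lie, zero_add, hw2 a c (mm + nn) (by rw [← h]; exact hab), smul_zero]
      · exact zero_lie w
    have h2 : ⁅(if a = c then q ^ (nn * 0) • S.E c b (0 + 0) (mm + nn) else 0 : L), w⁆ = 0 := by
      split_ifs with h
      · rw [smul_lie, zero_add, hw2 c b (mm + nn) (by rw [← h]; exact hab), smul_zero]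
      · exact zero_lie w
    rw [h1, h2, sub_zero]

lemma omega_central (w : W) (hw : w ∈ slPlusAnnihilated S W) (x : L)
    (hcent : ∀ y : L, ⁅x, y⁆ = 0) : ⁅x, w⁆ ∈ slPlusAnnihilated S W := by
  obtain ⟨hw1, hw2⟩ := hw
  constructor
  · intro a b m0 m1 hm0
    have hz : ⁅S.E a b m0 m1, x⁆ = 0 := by rw [← lie_skew, hcent, neg_zero]
    rw [leibniz_lie, hw1 a b m0 m1 hm0, lie_zero, add_zero, hz, zero_lie]
  · intro a b mm hab
    have hz : ⁅S.E a b 0 mm, x⁆ = 0 := by rw [← lie_skew, hcent, neg_zero]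
    rw [leibniz_lie, hw2 a b mm hab, lie_zero, add_zero, hz, zero_lie]

lemma omega_add (u v : W) (hu : u ∈ slPlusAnnihilated S W) (hv : v ∈ slPlusAnnihilated S W) :
    u + v ∈ slPlusAnnihilated S W := by
  obtain ⟨hu1, hu2⟩ := hu
  obtain ⟨hv1, hv2⟩ := hv
  constructor
  · intro a b m0 m1 hm0
    rw [lie_add, hu1 a b m0 m1 hm0, hv1 a b m0 m1 hm0, add_zero]
  · intro a b mm hab
    rw [lie_add, hu2 a b mm hab, hv2 a b mm hab, add_zero]

lemma omega_sub (u v : W) (hu : u ∈ slPlusAnnihilated S W) (hv : v ∈ slPlusAnnihilated S W) :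
    u - v ∈ slPlusAnnihilated S W := by
  obtain ⟨hu1, hu2⟩ := hu
  obtain ⟨hv1, hv2⟩ := hv
  constructor
  · intro a b m0 m1 hm0
    rw [lie_sub, hu1 a b m0 m1 hm0, hv1 a b m0 m1 hm0, sub_zero]
  · intro a b mm hab
    rw [lie_sub, hu2 a b mm hab, hv2 a b mm hab, sub_zero]

lemma omega_smul (u : W) (hu : u ∈ slPlusAnnihilated S W) (c : ℂ) :
    c • u ∈ slPlusAnnihilated S W := by
  obtain ⟨hu1, hu2⟩ := hu
  constructor
  · intro a b m0 m1 hm0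
    rw [lie_smul, hu1 a b m0 m1 hm0, smul_zero]
  · intro a b mm hab
    rw [lie_smul, hu2 a b mm hab, smul_zero]

end OmegaAux

theorem nonneg_level_and_Omega_nonzero (q : ℂ) (hq : q ≠ 0)
    (hq' : ∀ n : ℕ, n ≠ 0 → q ^ n ≠ 1) (N : ℕ) (hN : 2 ≤ N)
    (L : Type*) [LieRing L] [LieAlgebra ℂ L] (S : SlNCq q N L)
    (W : Type*) [AddCommGroup W] [Module ℂ W] [LieRingModule L W] [LieModule ℂ L W]
    [Nontrivial W]
    (Wgr : ℕ → Submodule ℂ W) (hinternal : DirectSum.IsInternal Wgr)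
    (hgraded : ∀ (n : ℕ) (i j : Fin N) (m0 m1 : ℤ), ∀ w ∈ Wgr n,
      ⁅S.E i j m0 m1, w⁆ ∈ gradeZ Wgr ((n : ℤ) - m0))
    (hint : S.IsIntegrable W)
    (ℓ0 ℓ1 : ℂ) (h0 : ∀ w : W, ⁅S.k0, w⁆ = ℓ0 • w) (h1 : ∀ w : W, ⁅S.k1, w⁆ = ℓ1 • w) :
    (∃ l : ℕ, ℓ0 = (l : ℂ)) ∧ ℓ1 = 0 ∧
      (∃ w : W, w ≠ 0 ∧ w ∈ slPlusAnnihilated S W) ∧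
      (∀ w ∈ slPlusAnnihilated S W, ⁅S.k1, w⁆ ∈ slPlusAnnihilated S W ∧
        ∀ (i : Fin N) (n : ℤ), ⁅hElt S hN i n, w⁆ ∈ slPlusAnnihilated S W) := by
  classical
  -- Step 0: minimal nonzero grade
  have hex : ∃ n : ℕ, Wgr n ≠ ⊥ := by
    by_contra hcon
    push_neg at hcon
    have htop := hinternal.submodule_iSup_eq_top
    have hbot : (⊤ : Submodule ℂ W) = ⊥ := by
      rw [← htop]
      exact iSup_eq_bot.mpr hcon
    obtain ⟨x, hxne⟩ := exists_ne (0 : W)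
    have hx : x ∈ (⊥ : Submodule ℂ W) := hbot ▸ Submodule.mem_top
    exact hxne ((Submodule.mem_bot ℂ).mp hx)
  obtain ⟨n0, hVne, hVmin⟩ : ∃ n0 : ℕ, Wgr n0 ≠ ⊥ ∧ ∀ k, k < n0 → Wgr k = ⊥ := by
    refine ⟨Nat.find hex, Nat.find_spec hex, ?_⟩
    intro k hk
    exact not_not.mp (Nat.find_min hex hk)
  have killV : ∀ v ∈ Wgr n0, ∀ (a b : Fin N) (m0 m1 : ℤ), 0 < m0 →
      ⁅S.E a b m0 m1, v⁆ = 0 := by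
    intro v hv a b m0 m1 hm0
    have h := hgraded n0 a b m0 m1 v hv
    simp only [gradeZ] at h
    split_ifs at h with hc
    · have hlt : ((n0 : ℤ) - m0).toNat < n0 := by omega
      rw [hVmin _ hlt] at h
      exact (Submodule.mem_bot ℂ).mp h
    · exact (Submodule.mem_bot ℂ).mp h
  have presV : ∀ v ∈ Wgr n0, ∀ (a b : Fin N) (m1 : ℤ), ⁅S.E a b 0 m1, v⁆ ∈ Wgr n0 := by
    intro v hv a b m1
    have h := hgraded n0 a b 0 m1 v hv
    simp only [gradeZ] at h
    rw [if_pos (by omega : (0 : ℤ) ≤ (n0 : ℤ) - 0)] at h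
    have he : ((n0 : ℤ) - 0).toNat = n0 := by omega
    rwa [he] at h
  have hnilC : ∀ (i j : Fin N), i ≠ j → ∀ (w : W),
      ∃ n : ℕ, (br (S.E i j (-1) 0))^[n] w = 0 :=
    fun i j hij w => hint i j hij (-1) 0 w
  -- Step Ω : a nonzero annihilated vector
  have hQ := chainQ S (Wgr n0) hq killV presV hnilC hVne (N - 1)
  rw [Nat.sub_self] at hQ
  obtain ⟨w0, hw0V, hw0ne, hw0kill⟩ := hQ
  have hw0Om : w0 ∈ slPlusAnnihilated S W := by
    constructor
    · intro a b m0 m1 hm0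
      exact killV w0 hw0V a b m0 m1 hm0
    · intro a b mm hab
      have hab' := Fin.lt_def.mp hab
      exact hw0kill a b mm hab' (Or.inl (by omega))
  -- special indices 1 and N
  obtain ⟨z0, hz0⟩ : ∃ z : Fin N, z.1 = 0 := ⟨⟨0, by omega⟩, rfl⟩
  obtain ⟨n', hn'⟩ : ∃ z : Fin N, z.1 = N - 1 := ⟨⟨N - 1, by omega⟩, rfl⟩
  have hz0n : z0 ≠ n' := by
    intro h
    have := congrArg Fin.val h
    omega
  have hxyd : ⁅S.E z0 n' 0 0, S.E n' z0 0 0⁆ = S.E z0 z0 0 0 - S.E n' n' 0 0 := by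
    rw [S.bracket_E]
    simp
  have b1 : ⁅S.E z0 z0 0 0, S.E z0 n' 0 0⁆ = S.E z0 n' 0 0 := by
    have h := brE_jk S z0 z0 n' hz0n 0 0 0 0
    simpa using h
  have b2 : ⁅S.E n' n' 0 0, S.E z0 n' 0 0⁆ = -S.E z0 n' 0 0 := by
    have h := brE_il S n' n' z0 hz0n.symm 0 0 0 0
    simpa using h
  have b3 : ⁅S.E z0 z0 0 0, S.E n' z0 0 0⁆ = -S.E n' z0 0 0 := by
    have h := brE_il S z0 z0 n' hz0n 0 0 0 0
    simpa using h
  have b4 : ⁅S.E n' n' 0 0, S.E n' z0 0 0⁆ = S.E n' z0 0 0 := by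
    have h := brE_jk S n' n' z0 hz0n.symm 0 0 0 0
    simpa using h
  have hzx : ⁅S.E z0 z0 0 0 - S.E n' n' 0 0, S.E z0 n' 0 0⁆ = (2 : ℂ) • S.E z0 n' 0 0 := by
    rw [sub_lie, b1, b2]
    module
  have hzy : ⁅S.E z0 z0 0 0 - S.E n' n' 0 0, S.E n' z0 0 0⁆ = (-2 : ℂ) • S.E n' z0 0 0 := by
    rw [sub_lie, b3, b4]
    module
  obtain ⟨v0, hv0V, hv0ne⟩ := (Submodule.ne_bot_iff _).mp hVne
  obtain ⟨v1, hv1V, hv1ne, hxv1, a, hzv1⟩ :=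
    sl2_exists_eigen (S.E z0 n' 0 0) (S.E n' z0 0 0) (S.E z0 z0 0 0 - S.E n' n' 0 0)
      hxyd hzx hzy (Wgr n0)
      (fun v hv => presV v hv z0 n' 0)
      (fun v hv => by
        rw [sub_lie]
        exact Submodule.sub_mem _ (presV v hv z0 z0 0) (presV v hv n' n' 0))
      (fun w => hint z0 n' hz0n 0 0 w) (fun w => hint n' z0 hz0n.symm 0 0 w)
      v0 hv0V hv0ne
  have key : ∀ m : ℤ, ∃ s : ℕ, ℓ0 + (m : ℂ) * ℓ1 - (a : ℂ) = (s : ℂ) := by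
    intro m
    have e1 : q ^ m * q ^ (m * (-1 : ℤ)) = 1 := by
      rw [← zpow_add₀ hq, show m + m * -1 = 0 by ring, zpow_zero]
    have hin : ⁅S.E n' z0 1 m, S.E z0 n' (-1) (-m)⁆
        = q ^ (m * (-1 : ℤ)) • (S.E n' n' 0 0 - S.E z0 z0 0 0 + (S.k0 + (m : ℂ) • S.k1)) := by
      rw [S.bracket_E, if_pos rfl, if_pos rfl,
        if_pos (show z0 = z0 ∧ n' = n' ∧ (1 : ℤ) + -1 = 0 ∧ m + -m = 0 from
          ⟨rfl, rfl, by ring, by ring⟩)]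
      rw [show (-m) * (1 : ℤ) = m * (-1 : ℤ) by ring, show (1 : ℤ) + -1 = 0 by ring,
        show m + -m = 0 by ring]
      push_cast
      module
    have hxy_m : ⁅S.E n' z0 1 m, q ^ m • S.E z0 n' (-1) (-m)⁆
        = S.E n' n' 0 0 - S.E z0 z0 0 0 + (S.k0 + (m : ℂ) • S.k1) := by
      rw [lie_smul, hin, smul_smul, e1, one_smul]
    have b5 : ⁅S.E n' n' 0 0, S.E n' z0 1 m⁆ = S.E n' z0 1 m := by
      have h := brE_jk S n' n' z0 hz0n.symm 0 0 1 m
      simpa using h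
    have b6 : ⁅S.E z0 z0 0 0, S.E n' z0 1 m⁆ = -S.E n' z0 1 m := by
      have h := brE_il S z0 z0 n' hz0n 0 0 1 m
      simpa using h
    have b7 : ⁅S.E n' n' 0 0, S.E z0 n' (-1) (-m)⁆ = -S.E z0 n' (-1) (-m) := by
      have h := brE_il S n' n' z0 hz0n.symm 0 0 (-1) (-m)
      simpa using h
    have b8 : ⁅S.E z0 z0 0 0, S.E z0 n' (-1) (-m)⁆ = S.E z0 n' (-1) (-m) := by
      have h := brE_jk S z0 z0 n' hz0n 0 0 (-1) (-m)
      simpa using h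
    have hzmy : ⁅S.E n' n' 0 0 - S.E z0 z0 0 0 + (S.k0 + (m : ℂ) • S.k1),
        q ^ m • S.E z0 n' (-1) (-m)⁆ = (-2 : ℂ) • (q ^ m • S.E z0 n' (-1) (-m)) := by
      rw [lie_smul, add_lie, sub_lie, b7, b8, add_lie, S.k0_central, smul_lie, S.k1_central,
        smul_zero]
      module
    have heig : ⁅S.E n' n' 0 0 - S.E z0 z0 0 0 + (S.k0 + (m : ℂ) • S.k1), v1⁆
        = (ℓ0 + (m : ℂ) * ℓ1 - (a : ℂ)) • v1 := by
      rw [add_lie, show S.E n' n' 0 0 - S.E z0 z0 0 0 = -(S.E z0 z0 0 0 - S.E n' n' 0 0)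
        from (neg_sub _ _).symm, neg_lie, hzv1, add_lie, h0 v1, smul_lie, h1 v1]
      module
    have hekill : ⁅S.E n' z0 1 m, v1⁆ = 0 := killV v1 hv1V n' z0 1 m (by omega)
    have hfnil : ∃ n : ℕ, (br (q ^ m • S.E z0 n' (-1) (-m)))^[n] v1 = 0 := by
      obtain ⟨n, hn⟩ := hint z0 n' hz0n (-1) (-m) v1
      refine ⟨n, ?_⟩
      have hn' : (br (S.E z0 n' (-1) (-m)))^[n] v1 = 0 := hn
      rw [br_smul_elt_iter, hn', smul_zero]
    exact sl2_eigen_nat (S.E n' z0 1 m) (q ^ m • S.E z0 n' (-1) (-m))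
      (S.E n' n' 0 0 - S.E z0 z0 0 0 + (S.k0 + (m : ℂ) • S.k1)) hxy_m hzmy v1 hv1ne hekill
      _ heig hfnil
  choose g hg using key
  have hZ : ∀ m : ℤ, (g m : ℤ) = (g 0 : ℤ) + m * ((g 1 : ℤ) - (g 0 : ℤ)) := by
    intro m
    have em := hg m
    have e0 := hg 0
    have e1' := hg 1
    push_cast at em e0 e1'
    have hc : ((g m : ℤ) : ℂ) = (((g 0 : ℤ) + m * ((g 1 : ℤ) - (g 0 : ℤ)) : ℤ) : ℂ) := by
      push_cast
      linear_combination (-1 : ℂ) * em + (1 - (m : ℂ)) * e0 + (m : ℂ) * e1'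
    exact_mod_cast hc
  have hr0 : (g 1 : ℤ) - (g 0 : ℤ) = 0 := by
    by_contra hne
    rcases lt_or_gt_of_ne hne with hlt | hgt
    · have h := hZ ((g 0 : ℤ) + 1)
      have hp : (0 : ℤ) ≤ (g ((g 0 : ℤ) + 1) : ℤ) := Int.natCast_nonneg _
      have hg0 : (0 : ℤ) ≤ (g 0 : ℤ) := Int.natCast_nonneg _
      nlinarith
    · have h := hZ (-((g 0 : ℤ) + 1))
      have hp : (0 : ℤ) ≤ (g (-((g 0 : ℤ) + 1)) : ℤ) := Int.natCast_nonneg _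
      have hg0 : (0 : ℤ) ≤ (g 0 : ℤ) := Int.natCast_nonneg _
      nlinarith
  have hg10 : g 1 = g 0 := by omega
  have hl1 : ℓ1 = 0 := by
    have e0 := hg 0
    have e1' := hg 1
    push_cast at e0 e1'
    rw [hg10] at e1'
    linear_combination e1' - e0
  have hl0 : ℓ0 = ((a + g 0 : ℕ) : ℂ) := by
    have e0 := hg 0
    push_cast at e0 ⊢
    linear_combination e0
  refine ⟨⟨a + g 0, hl0⟩, hl1, ⟨w0, hw0ne, hw0Om⟩, ?_⟩
  intro w hw
  constructor
  · exact omega_central S w hw S.k1 S.k1_central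
  · intro i n
    unfold hElt
    split_ifs with hc1 hc2
    · rw [sub_lie]
      exact omega_sub S _ _ (omega_diag S w hw _ n) (omega_diag S w hw _ n)
    · rw [sub_lie, sub_lie]
      exact omega_sub S _ _ (omega_central S w hw S.k0 S.k0_central)
        (omega_sub S _ _ (omega_diag S w hw _ 0) (omega_diag S w hw _ 0))
    · rw [add_lie, smul_lie]
      exact omega_add S _ _ (omega_smul S _ (omega_diag S w hw _ n) _) (omega_diag S w hw _ n)
end
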